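/- arXiv:1807.10062 — 10 statements merged into one kernel-verified Lean document; each statement's English description precedes it below -/
import Mathlib

section
/- For every finite simple graph G, every vertex v of G, every integer r ≥ 3 and every integer k ≥ 2, the Ramsey number R_r(B(G), k) satisfies R_r(B(G), k) ≤ R(𝒢*(v), k) + r − 2. -/
open SimpleGraph

/-- A set family `A` of hyperedges contains a Berge-`G` hypergraph: there are an injection `φ`
from the vertices of `G` and an injection `ψ` from the edges of `G` into `A` such that the two
endpoints of each edge `e` of `G` are mapped into the hyperedge `ψ e`. -/
def BergeIn {V α : Type} (G : SimpleGraph V) (A : Set (Finset α)) : Prop :=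
  ∃ φ : V → α, Function.Injective φ ∧
    ∃ ψ : G.edgeSet → Finset α, Function.Injective ψ ∧
      (∀ e, ψ e ∈ A) ∧
      ∀ (e : G.edgeSet), ∀ x ∈ (e : Sym2 V), φ x ∈ ψ e

/-- Every `k`-coloring of the `r`-element subsets of an `n`-element set contains a
monochromatic Berge-`G`. -/
def BergeRamseyProp {V : Type} (G : SimpleGraph V) (r k n : ℕ) : Prop :=
  ∀ c : Finset (Fin n) → Fin k, ∃ i : Fin k,
    BergeIn G {s : Finset (Fin n) | s.card = r ∧ c s = i}

/-- `R_r(𝓑(G), k)`: the smallest `n` such that every `k`-coloring of the `r`-subsets of an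
`n`-set has a monochromatic Berge-`G`. -/
noncomputable def bergeRamsey {V : Type} (G : SimpleGraph V) (r k : ℕ) : ℕ :=
  sInf {n | BergeRamseyProp G r k n}

/-- A neighbor of `v` regarded as a vertex of `G - v`. -/
def nbrSub {V : Type} {G : SimpleGraph V} {v : V} (q : ↥(G.neighborSet v)) : {u : V // u ≠ v} :=
  ⟨q.1, (show G.Adj v q.1 from q.2).ne'⟩

/-- The coloring `c` of the edges of `K_n` contains a monochromatic copy (in color `i`) of a
member of the family `𝒢*(v)`: a copy of `G - v` (embedded via `ι`) together with, for every
neighbor `q` of `v`, a new edge from `q` to a vertex `ρ q` (either a vertex of the copy of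
`G - v` or a vertex outside it), where the new edges are distinct from each other and from the
edges of `G - v`. -/
def GStarMonoCopy {V : Type} (G : SimpleGraph V) (v : V) {n k : ℕ}
    (c : Sym2 (Fin n) → Fin k) (i : Fin k) : Prop :=
  ∃ (ι : {u : V // u ≠ v} → Fin n) (ρ : ↥(G.neighborSet v) → Fin n),
    Function.Injective ι ∧
    (∀ q, ρ q ≠ ι (nbrSub q)) ∧
    (∀ q q', q ≠ q' → s(ι (nbrSub q), ρ q) ≠ s(ι (nbrSub q'), ρ q')) ∧
    (∀ q, ∀ x y : {u : V // u ≠ v}, G.Adj x.1 y.1 →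
      s(ι (nbrSub q), ρ q) ≠ s(ι x, ι y)) ∧
    (∀ x y : {u : V // u ≠ v}, G.Adj x.1 y.1 → c s(ι x, ι y) = i) ∧
    (∀ q, c s(ι (nbrSub q), ρ q) = i)

/-- Every `k`-coloring of the edges of `K_n` has a monochromatic member of `𝒢*(v)`. -/
def GStarRamseyProp {V : Type} (G : SimpleGraph V) (v : V) (k n : ℕ) : Prop :=
  ∀ c : Sym2 (Fin n) → Fin k, ∃ i : Fin k, GStarMonoCopy G v c i

/-- `R(𝒢*(v), k)`. -/
noncomputable def GStarRamsey {V : Type} (G : SimpleGraph V) (v : V) (k : ℕ) : ℕ :=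
  sInf {n | GStarRamseyProp G v k n}


section RamseyAux
open Finset

def myNS (k : ℕ) : ℕ → ℕ
  | 0 => 0
  | T+1 => k * myNS k T + 1

lemma greedy {α : Type} [DecidableEq α] (k : ℕ) (hk : 0 < k) :
    ∀ (T : ℕ) (S : Finset α) (c : α → α → Fin k), myNS k T ≤ S.card →
    ∃ (v : Fin T → α) (col : Fin T → Fin k), Function.Injective v ∧ (∀ j, v j ∈ S) ∧
      ∀ i j : Fin T, i < j → c (v i) (v j) = col i := by
  intro T
  induction T with
  | zero =>
    intro S c _
    exact ⟨Fin.elim0, Fin.elim0, fun i => i.elim0, fun i => i.elim0, fun i => i.elim0⟩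
  | succ T ih =>
    intro S c hS
    have h0 : 0 < S.card := lt_of_lt_of_le (Nat.succ_le_succ (Nat.zero_le _)) hS
    obtain ⟨v₀, hv₀⟩ := Finset.card_pos.mp h0
    set S' := S.erase v₀ with hS'def
    have hS' : k * myNS k T ≤ S'.card := by
      rw [hS'def, Finset.card_erase_of_mem hv₀]
      simp only [myNS] at hS
      omega
    have hmap : ∀ a ∈ S', c v₀ a ∈ (Finset.univ : Finset (Fin k)) := fun a _ => mem_univ _
    have hne : (Finset.univ : Finset (Fin k)).Nonempty := by
      have : Nonempty (Fin k) := ⟨⟨0, hk⟩⟩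
      exact univ_nonempty
    obtain ⟨i, _, hi⟩ := Finset.exists_le_card_fiber_of_mul_le_card_of_maps_to hmap hne
      (by simpa using hS')
    obtain ⟨v', col', hinj', hmem', hcol'⟩ := ih (S'.filter fun a => c v₀ a = i) c hi
    refine ⟨Fin.cases v₀ v', Fin.cases i col', ?_, ?_, ?_⟩
    · intro a b hab
      induction a using Fin.cases with
      | zero =>
        induction b using Fin.cases with
        | zero => rfl
        | succ b =>
          exfalso
          simp only [Fin.cases_zero, Fin.cases_succ] at hab
          have := hmem' b
          rw [Finset.mem_filter, hS'def, Finset.mem_erase] at this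
          exact this.1.1 hab.symm
      | succ a =>
        induction b using Fin.cases with
        | zero =>
          exfalso
          simp only [Fin.cases_zero, Fin.cases_succ] at hab
          have := hmem' a
          rw [Finset.mem_filter, hS'def, Finset.mem_erase] at this
          exact this.1.1 hab
        | succ b =>
          simp only [Fin.cases_succ] at hab
          exact congrArg Fin.succ (hinj' hab)
    · intro j
      induction j using Fin.cases with
      | zero => simpa using hv₀
      | succ j =>
        have := hmem' j
        rw [Finset.mem_filter, hS'def, Finset.mem_erase] at this
        simpa using this.1.2
    · intro a b hab
      induction a using Fin.cases with
      | zero =>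
        induction b using Fin.cases with
        | zero => exact absurd hab (lt_irrefl _)
        | succ b =>
          simp only [Fin.cases_zero, Fin.cases_succ]
          have := hmem' b
          rw [Finset.mem_filter] at this
          exact this.2
      | succ a =>
        induction b using Fin.cases with
        | zero => exact absurd hab (Fin.not_lt.mpr (Fin.zero_le _))
        | succ b =>
          simp only [Fin.cases_succ]
          exact hcol' a b (Fin.succ_lt_succ_iff.mp hab)

lemma ramseyClique (k m : ℕ) (hk : 0 < k) :
    ∃ n : ℕ, ∀ c : Sym2 (Fin n) → Fin k, ∃ (i : Fin k) (f : Fin m → Fin n),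
      Function.Injective f ∧ ∀ a b : Fin m, a ≠ b → c s(f a, f b) = i := by
  classical
  set T := k * m with hT
  refine ⟨myNS k T, fun c => ?_⟩
  obtain ⟨v, col, hinj, _, hcol⟩ := greedy k hk T (Finset.univ : Finset (Fin (myNS k T)))
    (fun a b => c s(a, b)) (by simp)
  -- pigeonhole on col
  have hne : (Finset.univ : Finset (Fin k)).Nonempty := ⟨⟨0, hk⟩, Finset.mem_univ _⟩
  obtain ⟨i, _, hi⟩ := Finset.exists_le_card_fiber_of_mul_le_card_of_maps_to
    (s := (Finset.univ : Finset (Fin T))) (f := col) (n := m)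
    (fun a _ => Finset.mem_univ (col a)) hne
    (by simpa using hT.ge)
  let F := Finset.univ.filter fun a => col a = i
  have hgm : m ≤ F.card := hi
  let g := F.orderEmbOfCardLe hgm
  have hgF : ∀ a, col (g a) = i := fun a =>
    (Finset.mem_filter.mp (F.orderEmbOfCardLe_mem hgm a)).2
  refine ⟨i, fun a => v (g a), fun a b hab => by
    have := hinj hab
    exact g.injective (by exact_mod_cast this), ?_⟩
  intro a b hab
  have hgab : g a ≠ g b := fun h => hab (g.injective h)
  rcases lt_or_gt_of_ne hgab with h | h
  · rw [← hgF a]; exact hcol _ _ h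
  · rw [Sym2.eq_swap, ← hgF b]; exact hcol _ _ h

end RamseyAux

lemma gstar_exists {V : Type} [Fintype V] [DecidableEq V]
    (G : SimpleGraph V) (v : V) (k : ℕ) (hk : 0 < k) :
    ∃ n : ℕ, GStarRamseyProp G v k n := by
  classical
  set a := Fintype.card {u : V // u ≠ v} with ha
  set b := Fintype.card ↥(G.neighborSet v) with hb
  obtain ⟨n, hn⟩ := ramseyClique k (a + b) hk
  refine ⟨n, fun c => ?_⟩
  obtain ⟨i, f, hfinj, hfcol⟩ := hn c
  let eA : {u : V // u ≠ v} → Fin (a + b) := fun x => Fin.castAdd b ((Fintype.equivFin _) x)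
  let eB : ↥(G.neighborSet v) → Fin (a + b) := fun q => Fin.natAdd a ((Fintype.equivFin _) q)
  have heA : Function.Injective eA := fun x y h =>
    (Fintype.equivFin _).injective (Fin.castAdd_injective _ _ h)
  have heB : Function.Injective eB := by
    intro x y h
    apply (Fintype.equivFin _).injective
    apply Fin.ext
    have := Fin.val_eq_of_eq h
    simpa [eB, Fin.natAdd] using this
  have hAB : ∀ x q, eA x ≠ eB q := by
    intro x q h
    have h1 : (eA x).1 < a := (Fintype.equivFin _ x).2
    have h2 : a ≤ (eB q).1 := Nat.le_add_right a _
    omega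
  refine ⟨i, fun x => f (eA x), fun q => f (eB q), hfinj.comp heA, ?_, ?_, ?_, ?_, ?_⟩
  · intro q h
    exact hAB (nbrSub q) q (hfinj h).symm
  · intro q q' hqq' h
    rw [Sym2.eq_iff] at h
    rcases h with ⟨-, h2⟩ | ⟨h1, -⟩
    · exact hqq' (heB (hfinj h2))
    · exact hAB (nbrSub q) q' (hfinj h1)
  · intro q x y _ h
    rw [Sym2.eq_iff] at h
    rcases h with ⟨-, h2⟩ | ⟨-, h2⟩ <;> exact hAB _ q (hfinj h2).symm
  · intro x y hadj
    exact hfcol _ _ (fun h => hadj.ne (congrArg Subtype.val (heA h)))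
  · intro q
    exact hfcol _ _ (fun h => hAB (nbrSub q) q h)

lemma pair_recover {α : Type} [DecidableEq α] {S : Finset α} {a b a' b' : α}
    (ha : a ∉ S) (hb : b ∉ S) (ha' : a' ∉ S) (hb' : b' ∉ S)
    (h : insert a (insert b S) = insert a' (insert b' S)) : s(a, b) = s(a', b') := by
  have m1 : a = a' ∨ a = b' := by
    have h0 : a ∈ insert a' (insert b' S) := h ▸ Finset.mem_insert_self a _
    rcases Finset.mem_insert.mp h0 with h1 | h1
    · exact Or.inl h1
    · rcases Finset.mem_insert.mp h1 with h2 | h2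
      · exact Or.inr h2
      · exact absurd h2 ha
  have m2 : b = a' ∨ b = b' := by
    have h0 : b ∈ insert a' (insert b' S) :=
      h ▸ Finset.mem_insert_of_mem (Finset.mem_insert_self b _)
    rcases Finset.mem_insert.mp h0 with h1 | h1
    · exact Or.inl h1
    · rcases Finset.mem_insert.mp h1 with h2 | h2
      · exact Or.inr h2
      · exact absurd h2 hb
  have m3 : a' = a ∨ a' = b := by
    have h0 : a' ∈ insert a (insert b S) := h ▸ Finset.mem_insert_self a' _
    rcases Finset.mem_insert.mp h0 with h1 | h1
    · exact Or.inl h1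
    · rcases Finset.mem_insert.mp h1 with h2 | h2
      · exact Or.inr h2
      · exact absurd h2 ha'
  have m4 : b' = a ∨ b' = b := by
    have h0 : b' ∈ insert a (insert b S) :=
      h ▸ Finset.mem_insert_of_mem (Finset.mem_insert_self b' _)
    rcases Finset.mem_insert.mp h0 with h1 | h1
    · exact Or.inl h1
    · rcases Finset.mem_insert.mp h1 with h2 | h2
      · exact Or.inr h2
      · exact absurd h2 hb'
  rw [Sym2.eq_iff]
  tauto

open Classical in
/-- Auxiliary hyperedge map. -/
noncomputable def fAux {V : Type} (G : SimpleGraph V) (v : V) {N n : ℕ}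
    (S : Finset (Fin n)) (cL : Fin N → Fin n)
    (ι : {u : V // u ≠ v} → Fin N) (ρ : ↥(G.neighborSet v) → Fin N) (x y : V) :
    Finset (Fin n) :=
  if hx : x = v then
    (if h : G.Adj v y then insert (cL (ι (nbrSub ⟨y, h⟩))) (insert (cL (ρ ⟨y, h⟩)) S) else ∅)
  else if _hy : y = v then
    (if h : G.Adj v x then insert (cL (ι (nbrSub ⟨x, h⟩))) (insert (cL (ρ ⟨x, h⟩)) S) else ∅)
  else insert (cL (ι ⟨x, hx⟩)) (insert (cL (ι ⟨y, _hy⟩)) S)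

lemma fAux_comm {V : Type} (G : SimpleGraph V) (v : V) {N n : ℕ}
    (S : Finset (Fin n)) (cL : Fin N → Fin n)
    (ι : {u : V // u ≠ v} → Fin N) (ρ : ↥(G.neighborSet v) → Fin N) (x y : V) :
    fAux G v S cL ι ρ x y = fAux G v S cL ι ρ y x := by
  unfold fAux
  by_cases hx : x = v <;> by_cases hy : y = v
  · subst hx; subst hy; rfl
  · rw [dif_pos hx, dif_neg hy, dif_pos hx]
  · rw [dif_neg hx, dif_pos hy, dif_pos hy]
  · rw [dif_neg hx, dif_neg hy, dif_neg hy, dif_neg hx, Finset.insert_comm]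

lemma fAux_pend {V : Type} (G : SimpleGraph V) (v : V) {N n : ℕ}
    (S : Finset (Fin n)) (cL : Fin N → Fin n)
    (ι : {u : V // u ≠ v} → Fin N) (ρ : ↥(G.neighborSet v) → Fin N) (y : V)
    (h : G.Adj v y) :
    fAux G v S cL ι ρ v y = insert (cL (ι (nbrSub ⟨y, h⟩))) (insert (cL (ρ ⟨y, h⟩)) S) := by
  unfold fAux
  rw [dif_pos rfl, dif_pos h]

lemma fAux_edge {V : Type} (G : SimpleGraph V) (v : V) {N n : ℕ}
    (S : Finset (Fin n)) (cL : Fin N → Fin n)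
    (ι : {u : V // u ≠ v} → Fin N) (ρ : ↥(G.neighborSet v) → Fin N) (x y : V)
    (hx : x ≠ v) (hy : y ≠ v) :
    fAux G v S cL ι ρ x y = insert (cL (ι ⟨x, hx⟩)) (insert (cL (ι ⟨y, hy⟩)) S) := by
  unfold fAux
  rw [dif_neg hx, dif_neg hy]

/-- For every finite graph `G`, vertex `v`, `r ≥ 3` and `k ≥ 2`,
`R_r(𝓑(G), k) ≤ R(𝒢*(v), k) + r - 2`. -/
theorem bergeRamsey_le_gStarRamsey {V : Type} [Fintype V] [DecidableEq V]
    (G : SimpleGraph V) (v : V) (r k : ℕ) (hr : 3 ≤ r) (hk : 2 ≤ k) :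
    bergeRamsey G r k ≤ GStarRamsey G v k + r - 2 := by
  classical
  set N := GStarRamsey G v k with hNdef
  have hNprop : GStarRamseyProp G v k N :=
    Nat.sInf_mem (gstar_exists G v k (by omega))
  have key : BergeRamseyProp G r k (N + (r - 2)) := by
    intro c
    have hrr : 0 < r - 2 := by omega
    let cL : Fin N → Fin (N + (r - 2)) := fun x => ⟨x.1, by omega⟩
    let tail : Fin (r - 2) → Fin (N + (r - 2)) := fun j => ⟨N + j.1, by omega⟩
    have cLinj : Function.Injective cL := by
      intro x y h
      have := congrArg Fin.val h
      exact Fin.ext this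
    have tailinj : Function.Injective tail := by
      intro x y h
      have h2 := congrArg Fin.val h
      simp only [tail] at h2
      exact Fin.ext (by omega)
    set S : Finset (Fin (N + (r - 2))) := Finset.image tail Finset.univ with hSdef
    have hScard : S.card = r - 2 := by
      rw [hSdef, Finset.card_image_of_injective _ tailinj, Finset.card_univ, Fintype.card_fin]
    have hcLS : ∀ x : Fin N, cL x ∉ S := by
      intro x hx
      obtain ⟨j, -, hj⟩ := Finset.mem_image.mp hx
      have h2 := congrArg Fin.val hj
      have h3 : N + j.1 = x.1 := h2
      have := x.2
      omega
    let c' : Sym2 (Fin N) → Fin k :=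
      Sym2.lift ⟨fun x y => c (insert (cL x) (insert (cL y) S)),
        fun x y => by show c _ = c _; rw [Finset.insert_comm]⟩
    obtain ⟨i, ι, ρ, hιinj, hρne, hpp, hpe, hcedge, hcpend⟩ := hNprop c'
    have hc' : ∀ a b : Fin N, c' s(a, b) = c (insert (cL a) (insert (cL b) S)) :=
      fun a b => rfl
    have genCard : ∀ a b : Fin N, a ≠ b → (insert (cL a) (insert (cL b) S)).card = r := by
      intro a b hab
      rw [Finset.card_insert_of_notMem, Finset.card_insert_of_notMem (hcLS b), hScard]
      · omega
      · intro h
        rcases Finset.mem_insert.mp h with h1 | h1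
        · exact hab (cLinj h1)
        · exact hcLS a h1
    have recov : ∀ p1 p2 p1' p2' : Fin N,
        insert (cL p1) (insert (cL p2) S) = insert (cL p1') (insert (cL p2') S) →
        s(p1, p2) = s(p1', p2') := by
      intro p1 p2 p1' p2' hh
      have h2 := pair_recover (hcLS p1) (hcLS p2) (hcLS p1') (hcLS p2') hh
      rw [Sym2.eq_iff] at h2 ⊢
      rcases h2 with ⟨h1, h2⟩ | ⟨h1, h2⟩
      · exact Or.inl ⟨cLinj h1, cLinj h2⟩
      · exact Or.inr ⟨cLinj h1, cLinj h2⟩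
    let ψ : G.edgeSet → Finset (Fin (N + (r - 2))) := fun e =>
      Sym2.lift ⟨fAux G v S cL ι ρ, fAux_comm G v S cL ι ρ⟩ e.1
    have hψ1 : ∀ (y : V) (h : G.Adj v y),
        Sym2.lift ⟨fAux G v S cL ι ρ, fAux_comm G v S cL ι ρ⟩ s(v, y) =
          insert (cL (ι (nbrSub ⟨y, h⟩))) (insert (cL (ρ ⟨y, h⟩)) S) := by
      intro y h
      rw [Sym2.lift_mk]
      exact fAux_pend G v S cL ι ρ y h
    have hψ2 : ∀ (x y : V) (hx : x ≠ v) (hy : y ≠ v),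
        Sym2.lift ⟨fAux G v S cL ι ρ, fAux_comm G v S cL ι ρ⟩ s(x, y) =
          insert (cL (ι ⟨x, hx⟩)) (insert (cL (ι ⟨y, hy⟩)) S) := by
      intro x y hx hy
      rw [Sym2.lift_mk]
      exact fAux_edge G v S cL ι ρ x y hx hy
    have hs0 : tail ⟨0, hrr⟩ ∈ S := Finset.mem_image_of_mem _ (Finset.mem_univ _)
    let φ : V → Fin (N + (r - 2)) := fun u => if h : u = v then tail ⟨0, hrr⟩ else cL (ι ⟨u, h⟩)
    refine ⟨i, φ, ?_, ψ, ?_, ?_, ?_⟩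
    · -- φ injective
      intro u w h
      by_cases hu : u = v <;> by_cases hw : w = v
      · rw [hu, hw]
      · exfalso
        simp only [φ, dif_pos hu, dif_neg hw] at h
        exact hcLS _ (h ▸ hs0)
      · exfalso
        simp only [φ, dif_neg hu, dif_pos hw] at h
        exact hcLS _ (h.symm ▸ hs0)
      · simp only [φ, dif_neg hu, dif_neg hw] at h
        exact congrArg Subtype.val (hιinj (cLinj h))
    · -- ψ injective
      rintro ⟨e, hea⟩ ⟨e', hea'⟩ h
      induction e using Sym2.ind with
      | _ x y =>
      induction e' using Sym2.ind with
      | _ x' y' =>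
      have hea : G.Adj x y := hea
      have hea' : G.Adj x' y' := hea'
      apply Subtype.ext
      show s(x, y) = s(x', y')
      simp only [ψ] at h
      by_cases hx : x = v <;> by_cases hy : y = v
      · exact absurd (hx ▸ hy ▸ hea) (G.irrefl)
      all_goals by_cases hx' : x' = v <;> by_cases hy' : y' = v
      · exact absurd (hx' ▸ hy' ▸ hea') (G.irrefl)
      · -- s(v,y) vs s(v,y')
        subst hx; subst hx'
        rw [hψ1 y hea, hψ1 y' hea'] at h
        have h2 := recov _ _ _ _ h
        by_cases hyy : y = y'
        · rw [hyy]
        · exact (hpp ⟨y, hea⟩ ⟨y', hea'⟩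
            (fun hq => hyy (congrArg Subtype.val hq)) h2).elim
      · -- s(v,y) vs s(x',v)
        subst hx; subst hy'
        rw [hψ1 y hea, Sym2.eq_swap (a := x'), hψ1 x' hea'.symm] at h
        have h2 := recov _ _ _ _ h
        by_cases hyy : y = x'
        · rw [hyy, Sym2.eq_swap]
        · exact (hpp ⟨y, hea⟩ ⟨x', hea'.symm⟩
            (fun hq => hyy (congrArg Subtype.val hq)) h2).elim
      · -- s(v,y) vs plain
        subst hx
        rw [hψ1 y hea, hψ2 x' y' hx' hy'] at h
        exact (hpe ⟨y, hea⟩ ⟨x', hx'⟩ ⟨y', hy'⟩ hea' (recov _ _ _ _ h)).elim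
      · exact absurd (hx' ▸ hy' ▸ hea') (G.irrefl)
      · -- s(x,v) vs s(v,y')
        subst hy; subst hx'
        rw [Sym2.eq_swap (a := x), hψ1 x hea.symm, hψ1 y' hea'] at h
        have h2 := recov _ _ _ _ h
        by_cases hyy : x = y'
        · rw [hyy, Sym2.eq_swap]
        · exact (hpp ⟨x, hea.symm⟩ ⟨y', hea'⟩
            (fun hq => hyy (congrArg Subtype.val hq)) h2).elim
      · -- s(x,v) vs s(x',v)
        subst hy; subst hy'
        rw [Sym2.eq_swap (a := x), hψ1 x hea.symm,
          Sym2.eq_swap (a := x'), hψ1 x' hea'.symm] at h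
        have h2 := recov _ _ _ _ h
        by_cases hyy : x = x'
        · rw [hyy]
        · exact (hpp ⟨x, hea.symm⟩ ⟨x', hea'.symm⟩
            (fun hq => hyy (congrArg Subtype.val hq)) h2).elim
      · -- s(x,v) vs plain
        subst hy
        rw [Sym2.eq_swap (a := x), hψ1 x hea.symm, hψ2 x' y' hx' hy'] at h
        exact (hpe ⟨x, hea.symm⟩ ⟨x', hx'⟩ ⟨y', hy'⟩ hea' (recov _ _ _ _ h)).elim
      · exact absurd (hx' ▸ hy' ▸ hea') (G.irrefl)
      · -- plain vs s(v,y')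
        subst hx'
        rw [hψ2 x y hx hy, hψ1 y' hea'] at h
        exact (hpe ⟨y', hea'⟩ ⟨x, hx⟩ ⟨y, hy⟩ hea (recov _ _ _ _ h).symm).elim
      · -- plain vs s(x',v)
        subst hy'
        rw [hψ2 x y hx hy, Sym2.eq_swap (a := x'), hψ1 x' hea'.symm] at h
        exact (hpe ⟨x', hea'.symm⟩ ⟨x, hx⟩ ⟨y, hy⟩ hea (recov _ _ _ _ h).symm).elim
      · -- plain vs plain
        rw [hψ2 x y hx hy, hψ2 x' y' hx' hy'] at h
        have h2 := recov _ _ _ _ h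
        rw [Sym2.eq_iff] at h2 ⊢
        rcases h2 with ⟨h1, h2⟩ | ⟨h1, h2⟩
        · exact Or.inl ⟨congrArg Subtype.val (hιinj h1), congrArg Subtype.val (hιinj h2)⟩
        · exact Or.inr ⟨congrArg Subtype.val (hιinj h1), congrArg Subtype.val (hιinj h2)⟩
    · -- ψ e ∈ A
      rintro ⟨e, hea⟩
      induction e using Sym2.ind with
      | _ x y =>
      have hea : G.Adj x y := hea
      simp only [ψ, Set.mem_setOf_eq]
      by_cases hx : x = v
      · subst hx
        rw [hψ1 y hea]
        exact ⟨genCard _ _ (fun hh => hρne ⟨y, hea⟩ hh.symm), hcpend ⟨y, hea⟩⟩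
      · by_cases hy : y = v
        · subst hy
          rw [Sym2.eq_swap (a := x), hψ1 x hea.symm]
          exact ⟨genCard _ _ (fun hh => hρne ⟨x, hea.symm⟩ hh.symm), hcpend ⟨x, hea.symm⟩⟩
        · rw [hψ2 x y hx hy]
          exact ⟨genCard _ _ (fun hh => hea.ne (congrArg Subtype.val (hιinj hh))),
            hcedge ⟨x, hx⟩ ⟨y, hy⟩ hea⟩
    · -- endpoints
      rintro ⟨e, hea⟩ z hz
      induction e using Sym2.ind with
      | _ x y =>
      have hea : G.Adj x y := hea
      rw [Sym2.mem_iff] at hz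
      simp only [ψ]
      have hφv : φ v ∈ S := by
        simp only [φ, dif_pos rfl]
        exact hs0
      by_cases hx : x = v
      · subst hx
        rw [hψ1 y hea]
        rcases hz with hz | hz
        · subst hz
          exact Finset.mem_insert_of_mem (Finset.mem_insert_of_mem hφv)
        · subst hz
          have : φ z = cL (ι (nbrSub ⟨z, hea⟩)) := by
            simp only [φ, dif_neg hea.ne']
            rfl
          rw [this]
          exact Finset.mem_insert_self _ _
      · by_cases hy : y = v
        · subst hy
          rw [Sym2.eq_swap (a := x), hψ1 x hea.symm]
          rcases hz with hz | hz
          · subst hz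
            have : φ z = cL (ι (nbrSub ⟨z, hea.symm⟩)) := by
              simp only [φ, dif_neg hx]
              rfl
            rw [this]
            exact Finset.mem_insert_self _ _
          · subst hz
            exact Finset.mem_insert_of_mem (Finset.mem_insert_of_mem hφv)
        · rw [hψ2 x y hx hy]
          rcases hz with hz | hz
          · subst hz
            have : φ z = cL (ι ⟨z, hx⟩) := by simp only [φ, dif_neg hx]
            rw [this]
            exact Finset.mem_insert_self _ _
          · subst hz
            have : φ z = cL (ι ⟨z, hy⟩) := by simp only [φ, dif_neg hy]
            rw [this]
            exact Finset.mem_insert_of_mem (Finset.mem_insert_self _ _)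
  have harith : N + r - 2 = N + (r - 2) := by omega
  rw [bergeRamsey, harith]
  exact Nat.sInf_le key
end

section
/- For every finite simple graph G with at least one edge, every integer r ≥ 3 and every integer k ≥ 2, R_r(B(G), k) ≤ R(G, k) + r − 2, where R(G, k) is the k-color graph Ramsey number of G. -/
open SimpleGraph

/-- Every `k`-coloring of the edges of `K_n` contains a monochromatic copy of `G`. -/
def graphRamseyProp {V : Type} (G : SimpleGraph V) (k n : ℕ) : Prop :=
  ∀ c : Sym2 (Fin n) → Fin k, ∃ (i : Fin k) (f : V → Fin n),
    Function.Injective f ∧ ∀ x y : V, G.Adj x y → c s(f x, f y) = i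

/-- The `k`-color graph Ramsey number `R(G, k)`. -/
noncomputable def graphRamsey {V : Type} (G : SimpleGraph V) (k : ℕ) : ℕ :=
  sInf {n | graphRamseyProp G k n}

lemma key_chain {α : Type} [DecidableEq α] {k : ℕ} (hk : 0 < k) (c : Sym2 α → Fin k) :
    ∀ (t : ℕ) (S : Finset α), (k+1)^t ≤ S.card →
    ∃ (a : Fin t → α) (g : Fin t → Fin k), Function.Injective a ∧ (∀ i, a i ∈ S) ∧
      ∀ i j : Fin t, i < j → c s(a i, a j) = g i := by
  intro t
  induction t with
  | zero =>
    exact fun S _ => ⟨Fin.elim0, Fin.elim0, fun i => i.elim0, fun i => i.elim0,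
      fun i => i.elim0⟩
  | succ t ih =>
    intro S hS
    have hpos : 0 < S.card := lt_of_lt_of_le (Nat.pow_pos (by omega)) hS
    obtain ⟨v, hv⟩ := Finset.card_pos.mp hpos
    have hcard : k * (k+1)^t ≤ (S.erase v).card := by
      rw [Finset.card_erase_of_mem hv]
      have h1 : 1 ≤ (k+1)^t := Nat.one_le_pow _ _ (by omega)
      have : (k+1)^(t+1) = k * (k+1)^t + (k+1)^t := by ring
      omega
    obtain ⟨i₀, -, hB⟩ := Finset.exists_le_card_fiber_of_mul_le_card_of_maps_to
      (f := fun x => c s(v, x)) (t := Finset.univ) (fun a _ => Finset.mem_univ _)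
      ⟨⟨0, hk⟩, Finset.mem_univ _⟩ (by simpa using hcard)
    set B := (S.erase v).filter (fun x => c s(v, x) = i₀) with hBdef
    obtain ⟨a', g', hinj, hmem, hcol⟩ := ih B hB
    have hvB : ∀ i, a' i ≠ v := by
      intro i h
      have := hmem i
      rw [h, hBdef, Finset.mem_filter, Finset.mem_erase] at this
      exact this.1.1 rfl
    refine ⟨Fin.cons v a', Fin.cons i₀ g', ?_, ?_, ?_⟩
    · intro i j h
      induction i using Fin.cases with
      | zero =>
        induction j using Fin.cases with
        | zero => rfl
        | succ j' => simp only [Fin.cons_zero, Fin.cons_succ] at h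
                     exact absurd h.symm (hvB j')
      | succ i' =>
        induction j using Fin.cases with
        | zero => simp only [Fin.cons_zero, Fin.cons_succ] at h
                  exact absurd h (hvB i')
        | succ j' => simp only [Fin.cons_succ] at h
                     exact congrArg Fin.succ (hinj h)
    · intro i
      induction i using Fin.cases with
      | zero => simpa using hv
      | succ i' =>
        have := hmem i'
        rw [hBdef, Finset.mem_filter, Finset.mem_erase] at this
        simpa using this.1.2
    · intro i j hij
      induction i using Fin.cases with
      | zero =>
        induction j using Fin.cases with
        | zero => exact absurd hij (lt_irrefl _)
        | succ j' =>
          simp only [Fin.cons_zero, Fin.cons_succ]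
          have := hmem j'
          rw [hBdef, Finset.mem_filter] at this
          exact this.2
      | succ i' =>
        induction j using Fin.cases with
        | zero => exact absurd hij (Fin.not_lt.mpr (Fin.zero_le _))
        | succ j' =>
          simp only [Fin.cons_succ]
          exact hcol i' j' (Fin.succ_lt_succ_iff.mp hij)

lemma ramsey_exists {V : Type} [Fintype V] [DecidableEq V] (G : SimpleGraph V)
    {k : ℕ} (hk : 2 ≤ k) : ∃ n, graphRamseyProp G k n := by
  set q := Fintype.card V with hq
  refine ⟨(k+1)^(k*q), ?_⟩
  intro c
  obtain ⟨a, g, hainj, -, hcol⟩ := key_chain (by omega) c (k*q) Finset.univ (le_of_eq (Finset.card_fin _).symm)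
  -- pigeonhole on g
  obtain ⟨i₀, -, hfib⟩ := Finset.exists_le_card_fiber_of_mul_le_card_of_maps_to
    (f := g) (s := Finset.univ) (t := Finset.univ) (n := q) (fun a _ => Finset.mem_univ _)
    ⟨⟨0, by omega⟩, Finset.mem_univ _⟩ (by simp [Finset.card_fin])
  set F := Finset.univ.filter (fun x => g x = i₀) with hF
  obtain ⟨u, huF, hu⟩ := Finset.exists_subset_card_eq hfib
  have hb := u.orderEmbOfFin hu
  have hbmem : ∀ i, u.orderEmbOfFin hu i ∈ F := fun i => huF (u.orderEmbOfFin_mem hu i)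
  have hbcol : ∀ i j : Fin q, i < j →
      c s(a (u.orderEmbOfFin hu i), a (u.orderEmbOfFin hu j)) = i₀ := by
    intro i j hij
    rw [hcol _ _ ((u.orderEmbOfFin hu).strictMono hij)]
    have := hbmem i
    rw [hF, Finset.mem_filter] at this
    exact this.2
  set e := Fintype.equivFin V with he
  refine ⟨i₀, fun v => a (u.orderEmbOfFin hu (e v)), ?_, ?_⟩
  · exact hainj.comp ((u.orderEmbOfFin hu).injective.comp e.injective)
  · intro x y hxy
    have hne : e x ≠ e y := fun h => (G.ne_of_adj hxy) (e.injective h)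
    rcases lt_or_gt_of_ne hne with h | h
    · exact hbcol _ _ h
    · rw [Sym2.eq_swap]; exact hbcol _ _ h


/-- For every finite graph `G` with at least one edge, `r ≥ 3` and `k ≥ 2`,
`R_r(𝓑(G), k) ≤ R(G, k) + r - 2`. -/
theorem bergeRamsey_le_graphRamsey {V : Type} [Fintype V] [DecidableEq V]
    (G : SimpleGraph V) (hE : G.edgeSet.Nonempty) (r k : ℕ) (hr : 3 ≤ r) (hk : 2 ≤ k) :
    bergeRamsey G r k ≤ graphRamsey G k + r - 2 := by
  set m := graphRamsey G k with hm
  have hmprop : graphRamseyProp G k m := Nat.sInf_mem (ramsey_exists G hk)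
  set n := m + (r - 2) with hn
  have hmain : BergeRamseyProp G r k n := by
    intro c
    -- the extra r-2 vertices
    set T : Finset (Fin n) := Finset.univ.image (Fin.natAdd m) with hT
    have hTval : ∀ x ∈ T, m ≤ (x : Fin n).val := by
      intro x hx
      rw [hT, Finset.mem_image] at hx
      obtain ⟨j, -, rfl⟩ := hx
      exact Nat.le_add_right _ _
    have hTcard : T.card = r - 2 := by
      rw [hT, Finset.card_image_of_injective _ ?_, Finset.card_univ, Fintype.card_fin]
      intro i j h
      have := congrArg Fin.val h
      simp only [Fin.coe_natAdd] at this
      exact Fin.ext (by omega)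
    set emb : Fin m → Fin n := Fin.castAdd (r - 2) with hemb
    have hembinj : Function.Injective emb := by
      intro i j h
      have := congrArg Fin.val h
      simp only [hemb, Fin.coe_castAdd] at this
      exact Fin.ext this
    have hembT : ∀ x : Fin m, emb x ∉ T := by
      intro x hx
      have := hTval _ hx
      simp only [hemb, Fin.coe_castAdd] at this
      omega
    set c' : Sym2 (Fin m) → Fin k :=
      Sym2.lift ⟨fun x y => c (insert (emb x) (insert (emb y) T)),
        fun x y => by dsimp only; rw [Finset.insert_comm]⟩ with hc'
    obtain ⟨i, f, hfinj, hfcol⟩ := hmprop c'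
    set φ : V → Fin n := fun v => emb (f v) with hφ
    have hφinj : Function.Injective φ := hembinj.comp hfinj
    set ψ : G.edgeSet → Finset (Fin n) :=
      fun e => Sym2.lift ⟨fun x y => insert (φ x) (insert (φ y) T),
        fun x y => by dsimp only; rw [Finset.insert_comm]⟩ e.val with hψ
    have hψmk : ∀ (a b : V) (h : s(a,b) ∈ G.edgeSet),
        ψ ⟨s(a,b), h⟩ = insert (φ a) (insert (φ b) T) := fun a b h => rfl
    have hmemiff : ∀ (x y z : V), φ z ∈ insert (φ x) (insert (φ y) T) → z = x ∨ z = y := by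
      intro x y z hz
      rcases Finset.mem_insert.mp hz with h | h
      · exact Or.inl (hφinj h)
      rcases Finset.mem_insert.mp h with h | h
      · exact Or.inr (hφinj h)
      · exact absurd h (hembT _)
    refine ⟨i, φ, hφinj, ψ, ?_, ?_, ?_⟩
    · -- injectivity of ψ
      rintro ⟨e₁, he₁⟩ ⟨e₂, he₂⟩ h
      induction e₁ using Sym2.ind with | _ a₁ b₁ => ?_
      induction e₂ using Sym2.ind with | _ a₂ b₂ => ?_
      rw [hψmk, hψmk] at h
      have hne₁ : a₁ ≠ b₁ := G.ne_of_adj (G.mem_edgeSet.mp he₁)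
      have ha : a₁ = a₂ ∨ a₁ = b₂ := hmemiff _ _ _ (h ▸ Finset.mem_insert_self _ _)
      have hb : b₁ = a₂ ∨ b₁ = b₂ := hmemiff _ _ _
        (h ▸ Finset.mem_insert_of_mem (Finset.mem_insert_self _ _))
      apply Subtype.ext
      simp only [Sym2.eq_iff]
      rcases ha with rfl | rfl <;> rcases hb with h' | h' <;> tauto
    · -- ψ e ∈ A
      rintro ⟨e, he⟩
      induction e using Sym2.ind with | _ a b => ?_
      have hadj : G.Adj a b := G.mem_edgeSet.mp he
      have hne : a ≠ b := G.ne_of_adj hadj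
      rw [hψmk]
      constructor
      · rw [Finset.card_insert_of_notMem, Finset.card_insert_of_notMem (hembT _), hTcard]
        · omega
        · intro hmem
          rcases Finset.mem_insert.mp hmem with h | h
          · exact hne (hφinj h)
          · exact hembT _ h
      · have := hfcol a b hadj
        rw [hc'] at this
        simpa using this
    · -- incidence
      rintro ⟨e, he⟩ x hx
      induction e using Sym2.ind with | _ a b => ?_
      rw [hψmk]
      rcases Sym2.mem_iff.mp hx with rfl | rfl
      · exact Finset.mem_insert_self _ _
      · exact Finset.mem_insert_of_mem (Finset.mem_insert_self _ _)
  calc bergeRamsey G r k ≤ n := Nat.sInf_le hmain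
    _ = graphRamsey G k + r - 2 := by omega
end

section
/- Let G be a finite simple graph having a vertex v such that G − v is acyclic (contains no cycle). Then for all integers r ≥ 3 and k ≥ 2, R_r(B(G), k) ≤ 4k·|V(G)| + r − 2. -/
open SimpleGraph

lemma aux_acyclic_pullback {A B : Type} {FA : SimpleGraph A} {FB : SimpleGraph B}
    (f : FA →g FB) (hf : Function.Injective f) (h : FB.IsAcyclic) : FA.IsAcyclic := by
  intro v c hc
  exact h (c.map f) ((Walk.map_isCycle_iff_of_injective hf).mpr hc)

lemma aux_cyc {W : Type} {F : SimpleGraph W} (hF : F.IsAcyclic) {u w x : W}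
    (p : F.Walk u w) (hpath : p.IsPath) (a : F.Adj u x) (hx : x ∈ p.support) :
    ∃ d : F.Walk x w, p = Walk.cons a d := by
  classical
  have hq : (p.takeUntil x hx).IsPath := hpath.takeUntil hx
  have hcyc := hF (Walk.cons a.symm (p.takeUntil x hx))
  rw [Walk.cons_isCycle_iff] at hcyc
  have hedge : s(x, u) ∈ (p.takeUntil x hx).edges := by
    by_contra hne
    exact hcyc ⟨hq, hne⟩
  obtain ⟨q, d0, hq, hedge, hspec⟩ :
      ∃ (q : F.Walk u x) (d0 : F.Walk x w), q.IsPath ∧ s(x, u) ∈ q.edges ∧ q.append d0 = p :=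
    ⟨p.takeUntil x hx, p.dropUntil x hx, hq, hedge, p.take_spec hx⟩
  cases q with
  | nil => exact absurd rfl a.ne
  | cons h' q' =>
    rw [Walk.edges_cons, List.mem_cons] at hedge
    rw [Walk.cons_isPath_iff] at hq
    rcases hedge with hedge | hedge
    · rw [Sym2.eq_iff] at hedge
      rcases hedge with ⟨hxu, _⟩ | ⟨hxy, _⟩
      · exact absurd hxu a.ne'
      · subst hxy
        have hq'nil : q' = Walk.nil := Walk.isPath_iff_eq_nil.mp hq.1
        subst hq'nil
        rw [Walk.cons_append, Walk.nil_append] at hspec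
        exact ⟨d0, hspec.symm⟩
    · exact absurd (Walk.snd_mem_support_of_mem_edges q' hedge) hq.2

lemma aux_leaf {W : Type} [Fintype W] [Nonempty W] (F : SimpleGraph W) (hF : F.IsAcyclic) :
    ∃ u : W, ∀ x y : W, F.Adj u x → F.Adj u y → x = y := by
  classical
  set S : ℕ → Prop := fun l => ∃ (u w : W) (p : F.Walk u w), p.IsPath ∧ p.length = l with hS
  have hbound : ∀ l, S l → l < Fintype.card W := by
    rintro l ⟨u, w, p, hp, rfl⟩; exact hp.length_lt
  set L := Nat.findGreatest S (Fintype.card W) with hL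
  have h0 : S 0 := ⟨Classical.arbitrary W, _, Walk.nil, Walk.IsPath.nil, rfl⟩
  have hSL : S L := Nat.findGreatest_spec (Nat.zero_le _) h0
  have hmax : ∀ l, S l → l ≤ L :=
    fun l hl => Nat.le_findGreatest (le_of_lt (hbound l hl)) hl
  obtain ⟨u, w, p, hpath, hlen⟩ := hSL
  refine ⟨u, fun x1 x2 a1 a2 => ?_⟩
  have hmem : ∀ x, F.Adj u x → x ∈ p.support := by
    intro x ax
    by_contra hx
    have hplus : S (p.length + 1) :=
      ⟨x, w, Walk.cons ax.symm p, hpath.cons hx, by simp⟩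
    have := hmax _ hplus
    omega
  obtain ⟨d1, hd1⟩ := aux_cyc hF p hpath a1 (hmem _ a1)
  obtain ⟨d2, hd2⟩ := aux_cyc hF p hpath a2 (hmem _ a2)
  have e1 : p.support = u :: d1.support := by rw [hd1, Walk.support_cons]
  have e2 : p.support = u :: d2.support := by rw [hd2, Walk.support_cons]
  have g : d1.support = d2.support := by
    have := e1.symm.trans e2
    simpa using this
  have f1 : d1.support.head? = some x1 := by
    rw [Walk.support_eq_cons d1]; rfl
  have f2 : d2.support.head? = some x2 := by
    rw [Walk.support_eq_cons d2]; rfl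
  rw [g, f2] at f1
  exact (Option.some.injEq _ _ ▸ f1).symm

lemma aux_mindeg {β : Type} [DecidableEq β] (E : β → β → Prop) [DecidableRel E]
    (hsymm : ∀ a b, E a b → E b a) (t : ℕ) :
    ∀ C : Finset β, 2 * t * C.card < ∑ x ∈ C, (C.filter (fun y => E x y)).card →
      ∃ B, B ⊆ C ∧ B.Nonempty ∧ ∀ x ∈ B, t + 1 ≤ (B.filter (fun y => E x y)).card := by
  intro C
  induction C using Finset.strongInduction with
  | _ C IH =>
    intro hsum
    by_cases hall : ∀ x ∈ C, t + 1 ≤ (C.filter (fun y => E x y)).card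
    · refine ⟨C, subset_rfl, ?_, hall⟩
      rcases Finset.eq_empty_or_nonempty C with rfl | hne
      · simp at hsum
      · exact hne
    · push_neg at hall
      obtain ⟨x, hxC, hxdeg⟩ := hall
      have hxdeg' : (C.filter (fun y => E x y)).card ≤ t := by omega
      set C' := C.erase x with hC'
      have hsub : C' ⊂ C := Finset.erase_ssubset hxC
      have hcard : C'.card = C.card - 1 := Finset.card_erase_of_mem hxC
      have hC1 : 1 ≤ C.card := Finset.card_pos.mpr ⟨x, hxC⟩
      -- pointwise bound
      have hpt : ∀ y ∈ C', (C.filter (fun z => E y z)).card ≤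
          (C'.filter (fun z => E y z)).card + (if E y x then 1 else 0) := by
        intro y _
        by_cases hyx : E y x
        · have : C.filter (fun z => E y z) ⊆ insert x (C'.filter (fun z => E y z)) := by
            intro z hz
            rw [Finset.mem_filter] at hz
            rcases eq_or_ne z x with rfl | hzx
            · exact Finset.mem_insert_self _ _
            · exact Finset.mem_insert_of_mem (Finset.mem_filter.mpr
                ⟨Finset.mem_erase.mpr ⟨hzx, hz.1⟩, hz.2⟩)
          calc (C.filter (fun z => E y z)).card ≤ _ := Finset.card_le_card this
            _ ≤ (C'.filter (fun z => E y z)).card + 1 := Finset.card_insert_le _ _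
            _ = _ := by rw [if_pos hyx]
        · have : C.filter (fun z => E y z) = C'.filter (fun z => E y z) := by
            apply Finset.Subset.antisymm
            · intro z hz
              rw [Finset.mem_filter] at hz
              rcases eq_or_ne z x with rfl | hzx
              · exact absurd hz.2 hyx
              · exact Finset.mem_filter.mpr ⟨Finset.mem_erase.mpr ⟨hzx, hz.1⟩, hz.2⟩
            · exact Finset.filter_subset_filter _ (Finset.erase_subset _ _)
          rw [this, if_neg hyx]
          omega
      have hite : (∑ y ∈ C', if E y x then 1 else 0) ≤ t := by
        rw [← Finset.card_filter]
        have hflip : C'.filter (fun y => E y x) ⊆ C.filter (fun y => E x y) := by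
          intro z hz
          rw [Finset.mem_filter] at hz ⊢
          exact ⟨Finset.mem_of_mem_erase hz.1, hsymm _ _ hz.2⟩
        exact le_trans (Finset.card_le_card hflip) hxdeg'
      have hsplit : ∑ y ∈ C, (C.filter (fun z => E y z)).card =
          (C.filter (fun z => E x z)).card + ∑ y ∈ C', (C.filter (fun z => E y z)).card := by
        rw [hC', ← Finset.add_sum_erase _ _ hxC]
      have hsum' : ∑ y ∈ C', (C.filter (fun z => E y z)).card ≤
          (∑ y ∈ C', (C'.filter (fun z => E y z)).card) + t := by
        calc ∑ y ∈ C', (C.filter (fun z => E y z)).card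
            ≤ ∑ y ∈ C', ((C'.filter (fun z => E y z)).card + if E y x then 1 else 0) :=
              Finset.sum_le_sum hpt
          _ = (∑ y ∈ C', (C'.filter (fun z => E y z)).card) + ∑ y ∈ C', (if E y x then 1 else 0) :=
              Finset.sum_add_distrib
          _ ≤ _ := by omega
      have hrec : 2 * t * C'.card < ∑ y ∈ C', (C'.filter (fun z => E y z)).card := by
        have h1 : 2 * t * C.card < ∑ y ∈ C, (C.filter (fun z => E y z)).card := hsum
        rw [hsplit] at h1
        have hc2 : C.card = C'.card + 1 := by omega
        have hlin : 2 * t * C.card = 2 * t * C'.card + 2 * t := by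
          rw [hc2, Nat.mul_add, Nat.mul_one]
        omega
      obtain ⟨B, hB1, hB2, hB3⟩ := IH C' hsub hrec
      exact ⟨B, hB1.trans (Finset.erase_subset _ _), hB2, hB3⟩

lemma aux_emb {V : Type} [Fintype V] [DecidableEq V] (G : SimpleGraph V) (v : V)
    {β : Type} [DecidableEq β] (E : β → β → Prop) [DecidableRel E]
    (hsymm : ∀ a b, E a b → E b a) (B : Finset β) (m : ℕ) (hm : Fintype.card V ≤ m)
    (hdeg : ∀ b ∈ B, 2 * m ≤ (B.filter (fun y => E b y)).card)
    (hBcard : 2 * m + 1 ≤ B.card)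
    (hleaf : ∀ s : Finset V, s.Nonempty → v ∉ s →
      ∃ u ∈ s, ∀ x ∈ s, ∀ y ∈ s, G.Adj u x → G.Adj u y → x = y) :
    ∀ (N : ℕ) (s : Finset V), s.card ≤ N → v ∉ s →
      ∃ θ : V → β, (∀ x ∈ s, θ x ∈ B) ∧ Set.InjOn θ ↑s ∧
        (∀ x ∈ s, ∀ y ∈ s, G.Adj x y → E (θ x) (θ y)) := by
  have hBne : B.Nonempty := Finset.card_pos.mp (by omega)
  obtain ⟨b0, hb0⟩ := hBne
  intro N
  induction N with
  | zero =>
    intro s hcard _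
    have : s = ∅ := Finset.card_eq_zero.mp (Nat.le_zero.mp hcard)
    subst this
    exact ⟨fun _ => b0, by simp, by simp, by simp⟩
  | succ N IH =>
    intro s hcard hvs
    rcases Finset.eq_empty_or_nonempty s with rfl | hne
    · exact ⟨fun _ => b0, by simp, by simp, by simp⟩
    obtain ⟨u, hus, huniq⟩ := hleaf s hne hvs
    set s' := s.erase u with hs'
    have hs'sub : s' ⊆ s := Finset.erase_subset _ _
    have hvs' : v ∉ s' := fun h => hvs (hs'sub h)
    have hcard' : s'.card ≤ N := by
      have := Finset.card_erase_of_mem hus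
      have : s'.card = s.card - 1 := this
      have h1 : 1 ≤ s.card := Finset.card_pos.mpr hne
      omega
    obtain ⟨θ, hθB, hθinj, hθE⟩ := IH s' hcard' hvs'
    have himgcard : (s'.image θ).card ≤ m - 1 := by
      calc (s'.image θ).card ≤ s'.card := Finset.card_image_le
        _ ≤ s.card - 1 := by
            rw [hs', Finset.card_erase_of_mem hus]
        _ ≤ m - 1 := by
            have : s.card ≤ Fintype.card V := Finset.card_le_univ s
            omega
    have hm1 : 1 ≤ m := by
      have : 1 ≤ s.card := Finset.card_pos.mpr hne
      have : s.card ≤ Fintype.card V := Finset.card_le_univ s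
      omega
    -- choose new image point b
    by_cases hpar : ∃ p ∈ s', G.Adj u p
    · obtain ⟨p, hps', hup⟩ := hpar
      have hθpB : θ p ∈ B := hθB p hps'
      have hbig : (s'.image θ).card < (B.filter (fun y => E (θ p) y)).card := by
        have := hdeg (θ p) hθpB
        omega
      have hns : ¬ (B.filter (fun y => E (θ p) y) ⊆ s'.image θ) :=
        fun hsub => absurd (Finset.card_le_card hsub) (Nat.not_le.mpr hbig)
      obtain ⟨b, hbF, hbI⟩ := Finset.not_subset.mp hns
      refine ⟨Function.update θ u b, ?_, ?_, ?_⟩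
      · intro x hxs
        by_cases hxu : x = u
        · rw [hxu, Function.update_self]; exact (Finset.mem_filter.mp hbF).1
        · rw [Function.update_of_ne hxu]
          exact hθB x (Finset.mem_erase.mpr ⟨hxu, hxs⟩)
      · intro x hx y hy hxy
        rw [Finset.mem_coe] at hx hy
        by_cases hxu : x = u <;> by_cases hyu : y = u
        · rw [hxu, hyu]
        · rw [hxu, Function.update_self, Function.update_of_ne hyu] at hxy
          have hmem : θ y ∈ s'.image θ := Finset.mem_image_of_mem θ (Finset.mem_erase.mpr ⟨hyu, hy⟩)
          rw [← hxy] at hmem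
          exact absurd hmem hbI
        · rw [hyu, Function.update_self, Function.update_of_ne hxu] at hxy
          have hmem : θ x ∈ s'.image θ := Finset.mem_image_of_mem θ (Finset.mem_erase.mpr ⟨hxu, hx⟩)
          rw [hxy] at hmem
          exact absurd hmem hbI
        · rw [Function.update_of_ne hxu, Function.update_of_ne hyu] at hxy
          exact hθinj (Finset.mem_coe.mpr (Finset.mem_erase.mpr ⟨hxu, hx⟩))
            (Finset.mem_coe.mpr (Finset.mem_erase.mpr ⟨hyu, hy⟩)) hxy
      · intro x hx y hy hxy
        by_cases hxu : x = u <;> by_cases hyu : y = u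
        · rw [hxu, hyu] at hxy; exact absurd hxy (G.loopless.irrefl u)
        · have hys' : y ∈ s' := Finset.mem_erase.mpr ⟨hyu, hy⟩
          have hyp : y = p := huniq y hy p (hs'sub hps') (hxu ▸ hxy) hup
          rw [hxu, Function.update_self, Function.update_of_ne hyu, hyp]
          exact hsymm _ _ (Finset.mem_filter.mp hbF).2
        · have hxs' : x ∈ s' := Finset.mem_erase.mpr ⟨hxu, hx⟩
          have hxp : x = p := huniq x hx p (hs'sub hps') (hyu ▸ hxy.symm) hup
          rw [hyu, Function.update_self, Function.update_of_ne hxu, hxp]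
          exact (Finset.mem_filter.mp hbF).2
        · rw [Function.update_of_ne hxu, Function.update_of_ne hyu]
          exact hθE x (Finset.mem_erase.mpr ⟨hxu, hx⟩) y (Finset.mem_erase.mpr ⟨hyu, hy⟩) hxy
    · have hbig : (s'.image θ).card < B.card := by omega
      have hns : ¬ (B ⊆ s'.image θ) :=
        fun hsub => absurd (Finset.card_le_card hsub) (Nat.not_le.mpr hbig)
      obtain ⟨b, hbB, hbI⟩ := Finset.not_subset.mp hns
      refine ⟨Function.update θ u b, ?_, ?_, ?_⟩
      · intro x hxs
        by_cases hxu : x = u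
        · rw [hxu, Function.update_self]; exact hbB
        · rw [Function.update_of_ne hxu]
          exact hθB x (Finset.mem_erase.mpr ⟨hxu, hxs⟩)
      · intro x hx y hy hxy
        rw [Finset.mem_coe] at hx hy
        by_cases hxu : x = u <;> by_cases hyu : y = u
        · rw [hxu, hyu]
        · rw [hxu, Function.update_self, Function.update_of_ne hyu] at hxy
          have hmem : θ y ∈ s'.image θ := Finset.mem_image_of_mem θ (Finset.mem_erase.mpr ⟨hyu, hy⟩)
          rw [← hxy] at hmem
          exact absurd hmem hbI
        · rw [hyu, Function.update_self, Function.update_of_ne hxu] at hxy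
          have hmem : θ x ∈ s'.image θ := Finset.mem_image_of_mem θ (Finset.mem_erase.mpr ⟨hxu, hx⟩)
          rw [hxy] at hmem
          exact absurd hmem hbI
        · rw [Function.update_of_ne hxu, Function.update_of_ne hyu] at hxy
          exact hθinj (Finset.mem_coe.mpr (Finset.mem_erase.mpr ⟨hxu, hx⟩))
            (Finset.mem_coe.mpr (Finset.mem_erase.mpr ⟨hyu, hy⟩)) hxy
      · intro x hx y hy hxy
        by_cases hxu : x = u <;> by_cases hyu : y = u
        · rw [hxu, hyu] at hxy; exact absurd hxy (G.loopless.irrefl u)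
        · exact absurd ⟨y, Finset.mem_erase.mpr ⟨hyu, hy⟩, hxu ▸ hxy⟩ hpar
        · exact absurd ⟨x, Finset.mem_erase.mpr ⟨hxu, hx⟩, hyu ▸ hxy.symm⟩ hpar
        · rw [Function.update_of_ne hxu, Function.update_of_ne hyu]
          exact hθE x (Finset.mem_erase.mpr ⟨hxu, hx⟩) y (Finset.mem_erase.mpr ⟨hyu, hy⟩) hxy

/-- If `G` has a vertex `v` such that `G - v` is acyclic, then for all `r ≥ 3` and `k ≥ 2`,
`R_r(𝓑(G), k) ≤ 4k|V(G)| + r - 2`. -/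
theorem bergeRamsey_le_of_acyclic_del_vertex {V : Type} [Fintype V] [DecidableEq V]
    (G : SimpleGraph V) (v : V) (hac : (G.induce {u : V | u ≠ v}).IsAcyclic)
    (r k : ℕ) (hr : 3 ≤ r) (hk : 2 ≤ k) :
    bergeRamsey G r k ≤ 4 * k * Fintype.card V + r - 2 := by
  classical
  set m := Fintype.card V with hmdef
  have hm1 : 1 ≤ m := Fintype.card_pos_iff.mpr ⟨v⟩
  set nn := 4 * k * m + r - 2 with hnn
  have hnneq : nn = 4 * k * m + (r - 2) := by omega
  apply Nat.sInf_le
  show BergeRamseyProp G r k nn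
  intro c
  -- Fin k is nonempty
  have hk0 : 0 < k := by omega
  -- set up P0, a, Mset
  have hP0ex : ∃ P0 : Finset (Fin nn), P0 ⊆ Finset.univ ∧ P0.card = r - 3 := by
    apply Finset.exists_subset_card_eq
    simp only [Finset.card_univ, Fintype.card_fin]
    omega
  obtain ⟨P0, -, hP0card⟩ := hP0ex
  have hcompl : (Finset.univ \ P0).card = 4 * k * m + 1 := by
    rw [Finset.card_sdiff_of_subset (Finset.subset_univ P0)]
    simp only [Finset.card_univ, Fintype.card_fin]
    omega
  have hane : (Finset.univ \ P0).Nonempty := by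
    rw [← Finset.card_pos, hcompl]; omega
  obtain ⟨a, ha⟩ := hane
  have haP0 : a ∉ P0 := (Finset.mem_sdiff.mp ha).2
  set Mset := (Finset.univ \ P0).erase a with hMdef
  have hMcard : Mset.card = 4 * k * m := by
    rw [hMdef, Finset.card_erase_of_mem ha, hcompl]
    omega
  have hMa : a ∉ Mset := Finset.notMem_erase a _
  have hMP0 : ∀ x ∈ Mset, x ∉ P0 ∧ x ≠ a := by
    intro x hx
    rw [hMdef, Finset.mem_erase, Finset.mem_sdiff] at hx
    exact ⟨hx.2.2, hx.1⟩
  set T : Fin nn → Fin nn → Finset (Fin nn) :=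
    fun x y => insert x (insert y (insert a P0)) with hTdef
  have hTsym : ∀ x y, T x y = T y x := fun x y => Finset.insert_comm x y _
  have hTcard : ∀ x ∈ Mset, ∀ y ∈ Mset, x ≠ y → (T x y).card = r := by
    intro x hx y hy hxy
    obtain ⟨hxP, hxa⟩ := hMP0 x hx
    obtain ⟨hyP, hya⟩ := hMP0 y hy
    rw [hTdef]
    rw [Finset.card_insert_of_notMem, Finset.card_insert_of_notMem,
      Finset.card_insert_of_notMem haP0, hP0card]
    · omega
    · simp only [Finset.mem_insert]
      push_neg
      exact ⟨hya, hyP⟩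
    · simp only [Finset.mem_insert]
      push_neg
      exact ⟨hxy, hxa, hxP⟩
  have hTpair : ∀ x ∈ Mset, ∀ y ∈ Mset, (T x y).filter (· ∈ Mset) = {x, y} := by
    intro x hx y hy
    ext z
    simp only [Finset.mem_filter, hTdef, Finset.mem_insert]
    constructor
    · rintro ⟨(rfl | rfl | rfl | hz), hzM⟩
      · exact Or.inl rfl
      · exact Or.inr (Finset.mem_singleton_self _)
      · exact absurd hzM hMa
      · exact absurd hz (hMP0 z hzM).1
    · rintro (rfl | hz2)
      · exact ⟨Or.inl rfl, hx⟩
      · rw [Finset.mem_singleton] at hz2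
        subst hz2
        exact ⟨Or.inr (Or.inl rfl), hy⟩
  set E : Fin k → Fin nn → Fin nn → Prop :=
    fun i x y => x ≠ y ∧ c (T x y) = i with hEdef
  have hEsym : ∀ i x y, E i x y → E i y x := by
    rintro i x y ⟨h1, h2⟩
    exact ⟨h1.symm, by rwa [hTsym]⟩
  -- pigeonhole a good color
  have hinner : ∀ x ∈ Mset, ∑ i : Fin k, (Mset.filter (fun y => E i x y)).card
      = 4 * k * m - 1 := by
    intro x hx
    have hfe : ∀ i : Fin k, Mset.filter (fun y => E i x y)
        = (Mset.erase x).filter (fun y => c (T x y) = i) := by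
      intro i
      ext z
      simp only [Finset.mem_filter, Finset.mem_erase, hEdef]
      constructor
      · rintro ⟨hzM, hne, hc⟩; exact ⟨⟨Ne.symm hne, hzM⟩, hc⟩
      · rintro ⟨⟨hne, hzM⟩, hc⟩; exact ⟨hzM, Ne.symm hne, hc⟩
    calc ∑ i : Fin k, (Mset.filter (fun y => E i x y)).card
        = ∑ i : Fin k, ((Mset.erase x).filter (fun y => c (T x y) = i)).card := by
          simp_rw [hfe]
      _ = (Mset.erase x).card := by
          rw [← Finset.card_eq_sum_card_fiberwise (fun z _ => Finset.mem_univ (c (T x z)))]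
      _ = 4 * k * m - 1 := by rw [Finset.card_erase_of_mem hx, hMcard]
  have htotal : ∑ i : Fin k, ∑ x ∈ Mset, (Mset.filter (fun y => E i x y)).card
      = 4 * k * m * (4 * k * m - 1) := by
    rw [Finset.sum_comm]
    rw [Finset.sum_congr rfl hinner]
    rw [Finset.sum_const, hMcard, smul_eq_mul]
  have hpig : ∃ i : Fin k, 4 * m * (4 * k * m - 1) ≤
      ∑ x ∈ Mset, (Mset.filter (fun y => E i x y)).card := by
    have hfac : ∀ X : ℕ, 4 * k * m * X = k * (4 * m * X) := fun X => by ring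
    haveI : Nonempty (Fin k) := Fin.pos_iff_nonempty.mp hk0
    have hne : (Finset.univ : Finset (Fin k)).Nonempty := Finset.univ_nonempty
    have hsumle : ∑ _i : Fin k, 4 * m * (4 * k * m - 1) ≤
        ∑ i : Fin k, ∑ x ∈ Mset, (Mset.filter (fun y => E i x y)).card := by
      rw [htotal, Finset.sum_const, Finset.card_univ, Fintype.card_fin, smul_eq_mul,
        hfac (4 * k * m - 1)]
    obtain ⟨i, -, hile⟩ := Finset.exists_le_of_sum_le hne hsumle
    exact ⟨i, hile⟩
  obtain ⟨i, hi⟩ := hpig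
  have hgap : 2 * (2 * m - 1) * Mset.card < 4 * m * (4 * k * m - 1) := by
    rw [hMcard]
    obtain ⟨K, hK⟩ : ∃ K, k * m = K + 2 := by
      have : 2 ≤ k * m := le_trans hk (Nat.le_mul_of_pos_right k hm1)
      exact ⟨k * m - 2, by omega⟩
    obtain ⟨M, hM⟩ : ∃ M, m = M + 1 := ⟨m - 1, by omega⟩
    have h1 : 4 * k * m = 4 * K + 8 := by rw [mul_assoc, hK]; ring
    have h2 : 2 * m - 1 = 2 * M + 1 := by omega
    rw [h1, h2, hM]
    have h3 : 4 * K + 8 - 1 = 4 * K + 7 := by omega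
    rw [h3]
    nlinarith [hK, hM]
  obtain ⟨B, hBsub, hBne, hBdeg'⟩ := aux_mindeg (E i) (hEsym i) (2 * m - 1) Mset
    (lt_of_lt_of_le hgap hi)
  have hBdeg : ∀ b ∈ B, 2 * m ≤ (B.filter (fun y => E i b y)).card := by
    intro b hb
    have := hBdeg' b hb
    omega
  have hBcard : 2 * m + 1 ≤ B.card := by
    obtain ⟨x0, hx0⟩ := hBne
    have hsub : B.filter (fun y => E i x0 y) ⊆ B.erase x0 := by
      intro z hz
      rw [Finset.mem_filter] at hz
      exact Finset.mem_erase.mpr ⟨(hz.2.1).symm, hz.1⟩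
    have h1 := Finset.card_le_card hsub
    have h2 := hBdeg x0 hx0
    have h3 : (B.erase x0).card = B.card - 1 := Finset.card_erase_of_mem hx0
    have h4 : 1 ≤ B.card := Finset.card_pos.mpr ⟨x0, hx0⟩
    omega
  have hBM : B ⊆ Mset := hBsub
  -- leaf property
  have hleaf : ∀ s : Finset V, s.Nonempty → v ∉ s →
      ∃ u ∈ s, ∀ x ∈ s, ∀ y ∈ s, G.Adj u x → G.Adj u y → x = y := by
    intro s hne hvs
    haveI : Nonempty ↥s := ⟨⟨hne.choose, hne.choose_spec⟩⟩
    set F : SimpleGraph ↥s := G.comap (fun x => (x : V)) with hFdef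
    let hf : F →g (G.induce {u : V | u ≠ v}) :=
      ⟨fun x => ⟨(x : V), fun h => hvs (h ▸ x.2)⟩, fun {p q} h => h⟩
    have hfinj : Function.Injective hf := by
      intro p q hpq
      apply Subtype.ext
      have := congrArg Subtype.val hpq
      exact this
    have hFac : F.IsAcyclic := aux_acyclic_pullback hf hfinj hac
    obtain ⟨u, hu⟩ := aux_leaf F hFac
    refine ⟨(u : V), u.2, fun x hx y hy ax ay => ?_⟩
    have := hu ⟨x, hx⟩ ⟨y, hy⟩ (by simpa [hFdef] using ax) (by simpa [hFdef] using ay)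
    exact congrArg Subtype.val this
  -- embed the forest
  obtain ⟨θ, hθB, hθinj, hθE⟩ := aux_emb G v (E i) (hEsym i) B m le_rfl hBdeg hBcard hleaf
    m (Finset.univ.erase v)
    (by rw [Finset.card_erase_of_mem (Finset.mem_univ v), Finset.card_univ]; omega)
    (Finset.notMem_erase v _)
  set Sv := Finset.univ.erase v with hSvdef
  have hmemSv : ∀ x : V, x ≠ v → x ∈ Sv := fun x hx =>
    Finset.mem_erase.mpr ⟨hx, Finset.mem_univ x⟩
  set I := Sv.image θ with hIdef
  have hIcard : I.card ≤ m - 1 := by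
    calc I.card ≤ Sv.card := Finset.card_image_le
      _ = m - 1 := by
          rw [hSvdef, Finset.card_erase_of_mem (Finset.mem_univ v), Finset.card_univ]
  have hθM : ∀ x, x ≠ v → θ x ∈ Mset := fun x hx => hBM (hθB x (hmemSv x hx))
  have hθI : ∀ x, x ≠ v → θ x ∈ I := fun x hx =>
    Finset.mem_image_of_mem θ (hmemSv x hx)
  set wf : Fin nn → Fin nn := fun b =>
    if h : ((B.filter (fun y => E i b y)) \ I).Nonempty then h.choose else b with hwfdef
  have hwf : ∀ b ∈ B, wf b ∈ B ∧ E i b (wf b) ∧ wf b ∉ I := by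
    intro b hb
    have hnon : ((B.filter (fun y => E i b y)) \ I).Nonempty := by
      rw [Finset.sdiff_nonempty]
      intro hsub
      have h1 := Finset.card_le_card hsub
      have h2 := hBdeg b hb
      omega
    have hspec := hnon.choose_spec
    rw [Finset.mem_sdiff, Finset.mem_filter] at hspec
    rw [hwfdef]
    simp only [dif_pos hnon]
    exact ⟨hspec.1.1, hspec.1.2, hspec.2⟩
  set φ : V → Fin nn := fun u => if u = v then a else θ u with hφdef
  have hφv : φ v = a := if_pos rfl
  have hφ : ∀ u, u ≠ v → φ u = θ u := fun u hu => if_neg hu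
  have hφinj : Function.Injective φ := by
    intro p q hpq
    by_cases hp : p = v <;> by_cases hq : q = v
    · rw [hp, hq]
    · rw [hp, hφv, hφ q hq] at hpq
      exact absurd (hpq ▸ hθM q hq) hMa
    · rw [hq, hφv, hφ p hp] at hpq
      exact absurd (hpq.symm ▸ hθM p hp) hMa
    · rw [hφ p hp, hφ q hq] at hpq
      exact hθinj (Finset.mem_coe.mpr (hmemSv p hp)) (Finset.mem_coe.mpr (hmemSv q hq)) hpq
  set ψf : V → V → Finset (Fin nn) := fun x y =>
    if x = v then T (θ y) (wf (θ y)) else if y = v then T (θ x) (wf (θ x))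
    else T (θ x) (θ y) with hψfdef
  have hψfsym : ∀ x y, ψf x y = ψf y x := by
    intro x y
    by_cases hx : x = v <;> by_cases hy : y = v
    · rw [hx, hy]
    · simp only [hψfdef, if_pos hx, if_neg hy]
    · simp only [hψfdef, if_pos hy, if_neg hx]
    · simp only [hψfdef, if_neg hx, if_neg hy]
      exact hTsym _ _
  set ψS : Sym2 V → Finset (Fin nn) := Sym2.lift ⟨ψf, hψfsym⟩ with hψSdef
  set ψ : G.edgeSet → Finset (Fin nn) := fun e => ψS e.1 with hψdef
  have hval1 : ∀ y, ψS s(v, y) = T (θ y) (wf (θ y)) := by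
    intro y
    rw [hψSdef, Sym2.lift_mk]
    show (if v = v then T (θ y) (wf (θ y)) else if y = v then T (θ v) (wf (θ v))
      else T (θ v) (θ y)) = T (θ y) (wf (θ y))
    rw [if_pos rfl]
  have hval2 : ∀ x y, x ≠ v → y ≠ v → ψS s(x, y) = T (θ x) (θ y) := by
    intro x y hx hy
    rw [hψSdef, Sym2.lift_mk]
    show (if x = v then T (θ y) (wf (θ y)) else if y = v then T (θ x) (wf (θ x))
      else T (θ x) (θ y)) = T (θ x) (θ y)
    rw [if_neg hx, if_neg hy]
  have hrep : ∀ z : Sym2 V, z ∈ G.edgeSet →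
      ∃ x y, z = s(x, y) ∧ G.Adj x y ∧ (x = v ∨ (x ≠ v ∧ y ≠ v)) := by
    intro z
    induction z using Sym2.ind with
    | _ p q =>
      intro hz
      rw [SimpleGraph.mem_edgeSet] at hz
      by_cases hp : p = v
      · exact ⟨p, q, rfl, hz, Or.inl hp⟩
      · by_cases hq : q = v
        · exact ⟨q, p, Sym2.eq_swap, hz.symm, Or.inl hq⟩
        · exact ⟨p, q, rfl, hz, Or.inr ⟨hp, hq⟩⟩
  -- structural description of each hyperedge
  have hcore : ∀ e : G.edgeSet, ∃ p q : Fin nn, ψ e = T p q ∧ p ∈ Mset ∧ q ∈ Mset ∧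
      E i p q ∧
      ((∃ x, x ≠ v ∧ θ x = p ∧ e.1 = s(v, x) ∧ q ∉ I) ∨
       (∃ x y, x ≠ v ∧ y ≠ v ∧ θ x = p ∧ θ y = q ∧ e.1 = s(x, y))) := by
    intro e
    obtain ⟨x, y, hxy, hadj, hcase⟩ := hrep e.1 e.2
    rcases hcase with hxv | ⟨hx, hy⟩
    · -- star edge s(v, y), y ≠ v
      have hadj2 : G.Adj v y := hxv ▸ hadj
      have hyv : y ≠ v := fun h => G.loopless.irrefl v (h ▸ hadj2)
      have hyB : θ y ∈ B := hθB y (hmemSv y hyv)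
      obtain ⟨hw1, hw2, hw3⟩ := hwf (θ y) hyB
      refine ⟨θ y, wf (θ y), ?_, hBM hyB, hBM hw1, hw2,
        Or.inl ⟨y, hyv, rfl, by rw [hxy, hxv], hw3⟩⟩
      rw [hψdef]
      simp only []
      rw [hxy, hxv, hval1]
    · have hadj' : G.Adj x y := hadj
      refine ⟨θ x, θ y, ?_, hθM x hx, hθM y hy,
        hθE x (hmemSv x hx) y (hmemSv y hy) hadj',
        Or.inr ⟨x, y, hx, hy, rfl, rfl, hxy⟩⟩
      rw [hψdef]
      simp only []
      rw [hxy, hval2 x y hx hy]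
  -- the Berge witness
  refine ⟨i, φ, hφinj, ψ, ?_, ?_, ?_⟩
  · -- injectivity of ψ
    intro e1 e2 heq
    obtain ⟨p1, q1, hT1, hp1M, hq1M, hE1, hc1⟩ := hcore e1
    obtain ⟨p2, q2, hT2, hp2M, hq2M, hE2, hc2⟩ := hcore e2
    have hpair : ({p1, q1} : Finset (Fin nn)) = {p2, q2} := by
      rw [← hTpair p1 hp1M q1 hq1M, ← hTpair p2 hp2M q2 hq2M, ← hT1, ← hT2, heq]
    have hp1mem : p1 = p2 ∨ p1 = q2 := by
      have : p1 ∈ ({p2, q2} : Finset (Fin nn)) := hpair ▸ Finset.mem_insert_self p1 {q1}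
      simpa using this
    have hq1mem : q1 = p2 ∨ q1 = q2 := by
      have : q1 ∈ ({p2, q2} : Finset (Fin nn)) := hpair ▸
        Finset.mem_insert_of_mem (Finset.mem_singleton_self q1)
      simpa using this
    apply Subtype.ext
    rcases hc1 with ⟨x1, hx1, hθx1, he1, hq1I⟩ | ⟨x1, y1, hx1, hy1, hθx1, hθy1, he1⟩ <;>
      rcases hc2 with ⟨x2, hx2, hθx2, he2, hq2I⟩ | ⟨x2, y2, hx2, hy2, hθx2, hθy2, he2⟩
    · -- star / star
      have hps : p1 = p2 := by
        rcases hp1mem with h | h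
        · exact h
        · exact absurd (h ▸ (hθx1 ▸ hθI x1 hx1)) hq2I
      have : x1 = x2 := hθinj (Finset.mem_coe.mpr (hmemSv x1 hx1))
        (Finset.mem_coe.mpr (hmemSv x2 hx2)) (by rw [hθx1, hθx2, hps])
      rw [he1, he2, this]
    · -- star / forest : q1 ∉ I but q1 ∈ {θx2, θy2} ⊆ I
      exfalso
      rcases hq1mem with h | h
      · exact hq1I (h ▸ (hθx2 ▸ hθI x2 hx2))
      · exact hq1I (h ▸ (hθy2 ▸ hθI y2 hy2))
    · -- forest / star
      exfalso
      have hq2mem : q2 = p1 ∨ q2 = q1 := by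
        have : q2 ∈ ({p1, q1} : Finset (Fin nn)) := hpair.symm ▸
          Finset.mem_insert_of_mem (Finset.mem_singleton_self q2)
        simpa using this
      rcases hq2mem with h | h
      · exact hq2I (h ▸ (hθx1 ▸ hθI x1 hx1))
      · exact hq2I (h ▸ (hθy1 ▸ hθI y1 hy1))
    · -- forest / forest
      have hne1 : x1 ≠ y1 := by
        intro h
        exact hE1.1 (by rw [← hθx1, ← hθy1, h])
      rcases hp1mem with h | h
      · have hx12 : x1 = x2 := hθinj (Finset.mem_coe.mpr (hmemSv x1 hx1))
          (Finset.mem_coe.mpr (hmemSv x2 hx2)) (by rw [hθx1, hθx2, h])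
        have hq : y1 = y2 := by
          rcases hq1mem with h2 | h2
          · exfalso
            have : y1 = x2 := hθinj (Finset.mem_coe.mpr (hmemSv y1 hy1))
              (Finset.mem_coe.mpr (hmemSv x2 hx2)) (by rw [hθy1, hθx2, h2])
            exact hne1 ((this.trans hx12.symm).symm)
          · exact hθinj (Finset.mem_coe.mpr (hmemSv y1 hy1))
              (Finset.mem_coe.mpr (hmemSv y2 hy2)) (by rw [hθy1, hθy2, h2])
        rw [he1, he2, hx12, hq]
      · have hx1y2 : x1 = y2 := hθinj (Finset.mem_coe.mpr (hmemSv x1 hx1))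
          (Finset.mem_coe.mpr (hmemSv y2 hy2)) (by rw [hθx1, hθy2, h])
        have hy1x2 : y1 = x2 := by
          rcases hq1mem with h2 | h2
          · exact hθinj (Finset.mem_coe.mpr (hmemSv y1 hy1))
              (Finset.mem_coe.mpr (hmemSv x2 hx2)) (by rw [hθy1, hθx2, h2])
          · exfalso
            have : y1 = y2 := hθinj (Finset.mem_coe.mpr (hmemSv y1 hy1))
              (Finset.mem_coe.mpr (hmemSv y2 hy2)) (by rw [hθy1, hθy2, h2])
            exact hne1 (hx1y2.trans this.symm)
        rw [he1, he2, hx1y2, hy1x2, Sym2.eq_swap]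
  · -- membership in the color class
    intro e
    obtain ⟨p, q, hT, hpM, hqM, hE, -⟩ := hcore e
    rw [Set.mem_setOf_eq, hT]
    exact ⟨hTcard p hpM q hqM hE.1, hE.2⟩
  · -- endpoints belong
    intro e z hz
    obtain ⟨x, y, hxy, hadj, hcase⟩ := hrep e.1 e.2
    have hzxy : z = x ∨ z = y := by
      rw [hxy] at hz
      simpa [Sym2.mem_iff] using hz
    rw [hψdef]
    simp only []
    rcases hcase with hxv | ⟨hx, hy⟩
    · have hadj2 : G.Adj v y := hxv ▸ hadj
      have hyv : y ≠ v := fun h => G.loopless.irrefl v (h ▸ hadj2)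
      rw [hxy, hxv, hval1]
      rcases hzxy with rfl | rfl
      · rw [hxv, hφv, hTdef]
        simp
      · rw [hφ z hyv, hTdef]
        simp
    · rw [hxy, hval2 x y hx hy]
      rcases hzxy with rfl | rfl
      · rw [hφ z hx, hTdef]
        simp
      · rw [hφ z hy, hTdef]
        simp
end

section
/- For every integer n ≥ 3, there exists a coloring of the 3-element subsets of {1, …, n} with at most 2n + ⌈log₂ n⌉ colors such that no three pairwise distinct 3-sets of the same color form a Berge-K_3. -/
open SimpleGraph

/-- The triangle `K₃`. -/
def K3 : SimpleGraph (Fin 3) := ⊤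

lemma pair_match {m : ℕ} (f : ℕ → ℕ) {p q : Finset ℕ}
    (hp : p.card = 2) (hq : q.card = 2)
    (hpm : ∀ x ∈ p, f x < m) (hqm : ∀ x ∈ q, f x < m)
    (hinj : ∀ x ∈ p, ∀ y ∈ q, f x = f y → x = y)
    (hsum : p.sum f % m = q.sum f % m)
    {x : ℕ} (hxp : x ∈ p) (hxq : x ∈ q) : p = q := by
  obtain ⟨y, hy⟩ := Finset.card_eq_one.mp
    (by rw [Finset.card_erase_of_mem hxp, hp] : (p.erase x).card = 1)
  obtain ⟨z, hz⟩ := Finset.card_eq_one.mp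
    (by rw [Finset.card_erase_of_mem hxq, hq] : (q.erase x).card = 1)
  have hyp : y ∈ p := (Finset.erase_subset x p) (hy ▸ Finset.mem_singleton_self y)
  have hzq : z ∈ q := (Finset.erase_subset x q) (hz ▸ Finset.mem_singleton_self z)
  have hyx : y ≠ x := Finset.ne_of_mem_erase (hy ▸ Finset.mem_singleton_self y)
  have hzx : z ≠ x := Finset.ne_of_mem_erase (hz ▸ Finset.mem_singleton_self z)
  have hpe : p = insert x {y} := by rw [← hy, Finset.insert_erase hxp]
  have hqe : q = insert x {z} := by rw [← hz, Finset.insert_erase hxq]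
  have hsp : p.sum f = f x + f y := by
    rw [hpe, Finset.sum_insert (by simp [hyx.symm]), Finset.sum_singleton]
  have hsq : q.sum f = f x + f z := by
    rw [hqe, Finset.sum_insert (by simp [hzx.symm]), Finset.sum_singleton]
  have hmod : f y ≡ f z [MOD m] := by
    apply Nat.ModEq.add_left_cancel' (f x)
    rw [Nat.ModEq, ← hsp, ← hsq]; exact hsum
  have : f y = f z := by
    have h1 := Nat.mod_eq_of_lt (hpm y hyp)
    have h2 := Nat.mod_eq_of_lt (hqm z hzq)
    rw [Nat.ModEq] at hmod; omega
  have := hinj y hyp z hzq this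
  rw [hpe, hqe, this]

lemma image_sub_inj {k : ℕ} {e e' : Finset ℕ} (he : ∀ x ∈ e, ¬ x < k)
    (he' : ∀ x ∈ e', ¬ x < k)
    (h : e.image (fun x => x - k) = e'.image (fun x => x - k)) : e = e' := by
  ext z
  constructor
  · intro hz
    have : z - k ∈ e'.image (fun x => x - k) := h ▸ Finset.mem_image_of_mem _ hz
    obtain ⟨w, hw, hwz⟩ := Finset.mem_image.mp this
    have := he z hz; have := he' w hw
    have : w = z := by omega
    exact this ▸ hw
  · intro hz
    have : z - k ∈ e.image (fun x => x - k) := h.symm ▸ Finset.mem_image_of_mem _ hz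
    obtain ⟨w, hw, hwz⟩ := Finset.mem_image.mp this
    have := he' z hz; have := he w hw
    have : w = z := by omega
    exact this ▸ hw

lemma matching_nocfg (S : ℕ → Prop)
    {e1 e2 e3 p1 p2 p3 : Finset ℕ} {r1 r2 r3 : ℕ}
    (he1 : e1 = p1 ∪ {r1}) (he2 : e2 = p2 ∪ {r2}) (he3 : e3 = p3 ∪ {r3})
    (hc1 : p1.card = 2) (hc2 : p2.card = 2) (hc3 : p3.card = 2)
    (hS1 : ∀ x ∈ p1, S x) (hS2 : ∀ x ∈ p2, S x) (hS3 : ∀ x ∈ p3, S x)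
    (hr1 : ¬ S r1) (hr2 : ¬ S r2) (hr3 : ¬ S r3)
    (m12 : ∀ x, x ∈ p1 → x ∈ p2 → p1 = p2)
    (m13 : ∀ x, x ∈ p1 → x ∈ p3 → p1 = p3)
    (m23 : ∀ x, x ∈ p2 → x ∈ p3 → p2 = p3)
    (hne12 : e1 ≠ e2) (hne13 : e1 ≠ e3) (hne23 : e2 ≠ e3)
    {x1 x2 x3 : ℕ} (d12 : x1 ≠ x2) (d13 : x1 ≠ x3) (d23 : x2 ≠ x3)
    (h1 : x1 ∈ e1) (h2 : x2 ∈ e1) (h3 : x2 ∈ e2) (h4 : x3 ∈ e2)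
    (h5 : x1 ∈ e3) (h6 : x3 ∈ e3) : False := by
  subst he1 he2 he3
  simp only [Finset.mem_union, Finset.mem_singleton] at h1 h2 h3 h4 h5 h6
  -- resolve cross cases: membership in p of one edge & equal to r of the other is impossible
  rcases h2 with h2 | h2 <;> rcases h3 with h3 | h3
  pick_goal 2; · exact hr2 (h3 ▸ hS1 _ h2)
  pick_goal 2; · exact hr1 (h2 ▸ hS2 _ h3)
  all_goals rcases h4 with h4 | h4 <;> rcases h6 with h6 | h6
  case inl.inl.inl.inr => exact hr3 (h6 ▸ hS2 _ h4)
  case inl.inl.inr.inl => exact hr2 (h4 ▸ hS3 _ h6)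
  case inr.inr.inl.inr => exact hr3 (h6 ▸ hS2 _ h4)
  case inr.inr.inr.inl => exact hr2 (h4 ▸ hS3 _ h6)
  all_goals rcases h1 with h1 | h1 <;> rcases h5 with h5 | h5
  -- kill p/r clashes for x1
  all_goals try exact hr3 (h5 ▸ hS1 _ h1)
  all_goals try exact hr1 (h1 ▸ hS3 _ h5)
  -- now consistent cases
  -- case PPP
  case inl.inl.inl.inl.inl.inl =>
    have e12 : p1 = p2 := m12 x2 h2 h3
    have e23 : p2 = p3 := m23 x3 h4 h6
    obtain ⟨a, b, hab, hp⟩ := Finset.card_eq_two.mp hc1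
    rw [hp] at h1 h2; rw [← e12, hp] at h4
    simp only [Finset.mem_insert, Finset.mem_singleton] at h1 h2 h4
    omega
  -- x1 R-type, x2 x3 P-type
  case inl.inl.inl.inl.inr.inr =>
    have e12 : p1 = p2 := m12 x2 h2 h3
    have e23 : p2 = p3 := m23 x3 h4 h6
    have hr : r1 = r3 := by omega
    exact hne13 (by rw [e12, e23, hr])
  -- x3 R-type, x1 x2 P-type
  case inl.inl.inr.inr.inl.inl =>
    have e12 : p1 = p2 := m12 x2 h2 h3
    have e13 : p1 = p3 := m13 x1 h1 h5
    have hr : r2 = r3 := by omega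
    exact hne23 (by rw [← e12, e13, hr])
  -- x3,x1 R-type
  case inl.inl.inr.inr.inr.inr => omega
  -- x2 R-type (r1=r2), x3 P, x1 P
  case inr.inr.inl.inl.inl.inl =>
    have e23 : p2 = p3 := m23 x3 h4 h6
    have e13 : p1 = p3 := m13 x1 h1 h5
    have hr : r1 = r2 := by omega
    exact hne12 (by rw [e13, ← e23, hr])
  case inr.inr.inl.inl.inr.inr => omega
  case inr.inr.inr.inr.inl.inl => omega
  case inr.inr.inr.inr.inr.inr => omega

def Cfg {α : Type} (A : Set (Finset α)) : Prop :=
  ∃ e1 e2 e3 : Finset α, e1 ∈ A ∧ e2 ∈ A ∧ e3 ∈ A ∧ e1 ≠ e2 ∧ e1 ≠ e3 ∧ e2 ≠ e3 ∧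
    ∃ x1 x2 x3 : α, x1 ≠ x2 ∧ x1 ≠ x3 ∧ x2 ≠ x3 ∧
      x1 ∈ e1 ∧ x2 ∈ e1 ∧ x2 ∈ e2 ∧ x3 ∈ e2 ∧ x1 ∈ e3 ∧ x3 ∈ e3

lemma key : ∀ n : ℕ, ∃ c : Finset ℕ → ℕ,
    (∀ s : Finset ℕ, s ⊆ Finset.range n → s.card = 3 → c s < 2 * n + Nat.clog 2 n) ∧
    ∀ i : ℕ, ¬ Cfg {s : Finset ℕ | s ⊆ Finset.range n ∧ s.card = 3 ∧ c s = i} := by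
  intro n
  induction n using Nat.strong_induction_on with
  | _ n IH =>
  by_cases hn : n ≤ 2
  · refine ⟨fun _ => 0, ?_, ?_⟩
    · intro s hs hc
      have := Finset.card_le_card hs
      simp [Finset.card_range] at this
      omega
    · rintro i ⟨e1, e2, e3, ⟨hs1, hc1, -⟩, -, -, -⟩
      have := Finset.card_le_card hs1
      simp [Finset.card_range] at this
      omega
  push_neg at hn
  -- n ≥ 3
  obtain ⟨k, hkdef⟩ : ∃ k, k = (n + 1) / 2 := ⟨_, rfl⟩
  have hk2 : 2 ≤ k := by omega
  have hkn : k < n := by omega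
  have hmk : n - k ≤ k := by omega
  obtain ⟨c0, hb0, hn0⟩ := IH k hkn
  obtain ⟨Bk, hBkdef⟩ : ∃ B, B = 2 * k + Nat.clog 2 k := ⟨_, rfl⟩
  rw [← hBkdef] at hb0
  have hclog : Nat.clog 2 n = Nat.clog 2 k + 1 := by
    rw [Nat.clog_of_two_le (by norm_num) (by omega),
      show (n + 2 - 1) / 2 = k by omega]
  have hbudget : Bk + n ≤ 2 * n + Nat.clog 2 n := by omega
  classical
  set c : Finset ℕ → ℕ := fun s =>
    if (s.filter (fun x => x < k)).card = 3 then c0 s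
    else if (s.filter (fun x => x < k)).card = 0 then c0 (s.image (fun x => x - k))
    else if (s.filter (fun x => x < k)).card = 2 then
      Bk + ((s.filter (fun x => x < k)).sum id % k)
    else Bk + k + ((s.filter (fun x => ¬ x < k)).sum (fun x => x - k) % (n - k))
    with hcdef
  -- type analysis of an edge
  have htype : ∀ e : Finset ℕ, e ⊆ Finset.range n → e.card = 3 →
      (c e < Bk ∧
        ((∀ x ∈ e, x < k) ∧ c e = c0 e ∨
         (∀ x ∈ e, ¬ x < k) ∧ c e = c0 (e.image (fun x => x - k)))) ∨
      ((e.filter (fun x => x < k)).card = 2 ∧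
        c e = Bk + ((e.filter (fun x => x < k)).sum id % k) ∧
        Bk ≤ c e ∧ c e < Bk + k) ∨
      ((e.filter (fun x => ¬ x < k)).card = 2 ∧
        c e = Bk + k + ((e.filter (fun x => ¬ x < k)).sum (fun x => x - k) % (n - k)) ∧
        Bk + k ≤ c e) := by
    intro e hsub hcard
    have hle : (e.filter (fun x => x < k)).card ≤ 3 := by
      rw [← hcard]; exact Finset.card_filter_le _ _
    have hnegcard : (e.filter (fun x => x < k)).card +
        (e.filter (fun x => ¬ x < k)).card = 3 := by
      rw [← hcard]; exact Finset.card_filter_add_card_filter_not _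
    have hrange : ∀ x ∈ e, x < n := fun x hx => Finset.mem_range.mp (hsub hx)
    rcases (by omega : (e.filter (fun x => x < k)).card = 3 ∨
        (e.filter (fun x => x < k)).card = 0 ∨
        (e.filter (fun x => x < k)).card = 2 ∨
        (e.filter (fun x => x < k)).card = 1) with h3 | h0 | h2 | h1
    · left
      have heq : e.filter (fun x => x < k) = e :=
        Finset.eq_of_subset_of_card_le (Finset.filter_subset _ _) (by omega)
      have hall : ∀ x ∈ e, x < k := by
        intro x hx; rw [← heq] at hx; exact (Finset.mem_filter.mp hx).2
      have hval : c e = c0 e := by simp only [hcdef]; rw [if_pos h3]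
      refine ⟨?_, Or.inl ⟨hall, hval⟩⟩
      rw [hval]
      exact hb0 e (fun x hx => Finset.mem_range.mpr (hall x hx)) hcard
    · left
      have hall : ∀ x ∈ e, ¬ x < k := by
        intro x hx hxk
        have : x ∈ e.filter (fun x => x < k) := Finset.mem_filter.mpr ⟨hx, hxk⟩
        rw [Finset.card_eq_zero.mp h0] at this
        exact absurd this (Finset.notMem_empty x)
      have hval : c e = c0 (e.image (fun x => x - k)) := by
        simp only [hcdef]
        rw [if_neg (show ¬ (e.filter (fun x => x < k)).card = 3 by omega), if_pos h0]
      refine ⟨?_, Or.inr ⟨hall, hval⟩⟩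
      rw [hval]
      refine hb0 _ ?_ ?_
      · intro z hz
        obtain ⟨w, hw, hwz⟩ := Finset.mem_image.mp hz
        have := hall w hw; have := hrange w hw
        exact Finset.mem_range.mpr (by omega)
      · rw [Finset.card_image_of_injOn, hcard]
        intro x hx y hy hxy
        have := hall x hx; have := hall y hy
        simp only at hxy; omega
    · right; left
      have hval : c e = Bk + ((e.filter (fun x => x < k)).sum id % k) := by
        simp only [hcdef]
        rw [if_neg (show ¬ (e.filter (fun x => x < k)).card = 3 by omega),
          if_neg (show ¬ (e.filter (fun x => x < k)).card = 0 by omega), if_pos h2]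
      have hmod := Nat.mod_lt ((e.filter (fun x => x < k)).sum id)
        (show 0 < k by omega)
      exact ⟨h2, hval, by omega, by omega⟩
    · right; right
      have hval : c e = Bk + k +
          ((e.filter (fun x => ¬ x < k)).sum (fun x => x - k) % (n - k)) := by
        simp only [hcdef]
        rw [if_neg (show ¬ (e.filter (fun x => x < k)).card = 3 by omega),
          if_neg (show ¬ (e.filter (fun x => x < k)).card = 0 by omega),
          if_neg (show ¬ (e.filter (fun x => x < k)).card = 2 by omega)]
      exact ⟨by omega, hval, by omega⟩
  refine ⟨c, ?_, ?_⟩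
  · intro s hs hcard
    rcases htype s hs hcard with ⟨hb, -⟩ | ⟨-, hval, -, hb⟩ | ⟨h2, hval, -⟩
    · omega
    · omega
    · rw [hval]
      have := Nat.mod_lt ((s.filter (fun x => ¬ x < k)).sum (fun x => x - k))
        (by omega : 0 < n - k)
      omega
  · rintro i ⟨e1, e2, e3, ⟨hs1, hc1, hi1⟩, ⟨hs2, hc2, hi2⟩, ⟨hs3, hc3, hi3⟩,
      hne12, hne13, hne23, x1, x2, x3, d12, d13, d23, m11, m21, m22, m32, m13', m33⟩
    have hr1 : ∀ x ∈ e1, x < n := fun x hx => Finset.mem_range.mp (hs1 hx)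
    have hr2 : ∀ x ∈ e2, x < n := fun x hx => Finset.mem_range.mp (hs2 hx)
    have hr3 : ∀ x ∈ e3, x < n := fun x hx => Finset.mem_range.mp (hs3 hx)
    rcases htype e1 hs1 hc1 with ⟨hb1, hv1⟩ | ⟨hp1, hv1, hlo1, hhi1⟩ | ⟨hp1, hv1, hlo1⟩ <;>
    rcases htype e2 hs2 hc2 with ⟨hb2, hv2⟩ | ⟨hp2, hv2, hlo2, hhi2⟩ | ⟨hp2, hv2, hlo2⟩ <;>
    rcases htype e3 hs3 hc3 with ⟨hb3, hv3⟩ | ⟨hp3, hv3, hlo3, hhi3⟩ | ⟨hp3, hv3, hlo3⟩ <;>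
      try omega
    -- low band
    · rcases hv1 with ⟨hL1, hw1⟩ | ⟨hR1, hw1⟩ <;>
      rcases hv2 with ⟨hL2, hw2⟩ | ⟨hR2, hw2⟩ <;>
      rcases hv3 with ⟨hL3, hw3⟩ | ⟨hR3, hw3⟩
      -- LLL : recurse
      · exact hn0 i ⟨e1, e2, e3,
          ⟨fun x hx => Finset.mem_range.mpr (hL1 x hx), hc1, by omega⟩,
          ⟨fun x hx => Finset.mem_range.mpr (hL2 x hx), hc2, by omega⟩,
          ⟨fun x hx => Finset.mem_range.mpr (hL3 x hx), hc3, by omega⟩,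
          hne12, hne13, hne23, x1, x2, x3, d12, d13, d23,
          m11, m21, m22, m32, m13', m33⟩
      -- LLR : x1 ∈ e1 (L) and e3 (R)
      · exact absurd (hL1 x1 m11) (hR3 x1 m13')
      -- LRL : x2 ∈ e1 (L), e2 (R)
      · exact absurd (hL1 x2 m21) (hR2 x2 m22)
      · exact absurd (hL1 x2 m21) (hR2 x2 m22)
      · exact absurd (hL2 x2 m22) (hR1 x2 m21)
      · exact absurd (hL2 x2 m22) (hR1 x2 m21)
      · exact absurd (hL3 x3 m33) (hR2 x3 m32)
      -- RRR : recurse via subtraction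
      · have hk1 : ∀ x ∈ e1, ¬ x < k := hR1
        refine hn0 i ⟨e1.image (fun x => x - k), e2.image (fun x => x - k),
          e3.image (fun x => x - k), ?_, ?_, ?_, ?_, ?_, ?_,
          x1 - k, x2 - k, x3 - k, ?_, ?_, ?_,
          Finset.mem_image_of_mem _ m11, Finset.mem_image_of_mem _ m21,
          Finset.mem_image_of_mem _ m22, Finset.mem_image_of_mem _ m32,
          Finset.mem_image_of_mem _ m13', Finset.mem_image_of_mem _ m33⟩
        · refine ⟨?_, ?_, by omega⟩
          · intro z hz
            obtain ⟨w, hw, hwz⟩ := Finset.mem_image.mp hz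
            have := hR1 w hw; have := hr1 w hw
            exact Finset.mem_range.mpr (by omega)
          · rw [Finset.card_image_of_injOn, hc1]
            intro x hx y hy hxy
            have := hR1 x hx; have := hR1 y hy; simp only at hxy; omega
        · refine ⟨?_, ?_, by omega⟩
          · intro z hz
            obtain ⟨w, hw, hwz⟩ := Finset.mem_image.mp hz
            have := hR2 w hw; have := hr2 w hw
            exact Finset.mem_range.mpr (by omega)
          · rw [Finset.card_image_of_injOn, hc2]
            intro x hx y hy hxy
            have := hR2 x hx; have := hR2 y hy; simp only at hxy; omega
        · refine ⟨?_, ?_, by omega⟩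
          · intro z hz
            obtain ⟨w, hw, hwz⟩ := Finset.mem_image.mp hz
            have := hR3 w hw; have := hr3 w hw
            exact Finset.mem_range.mpr (by omega)
          · rw [Finset.card_image_of_injOn, hc3]
            intro x hx y hy hxy
            have := hR3 x hx; have := hR3 y hy; simp only at hxy; omega
        · exact fun h => hne12 (image_sub_inj hR1 hR2 h)
        · exact fun h => hne13 (image_sub_inj hR1 hR3 h)
        · exact fun h => hne23 (image_sub_inj hR2 hR3 h)
        · have := hR1 x1 m11; have := hR1 x2 m21; omega
        · have := hR1 x1 m11; have := hR3 x3 m33; omega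
        · have := hR1 x2 m21; have := hR2 x3 m32; omega
    -- mid band : pairs in L
    · have hq1 : (e1.filter (fun x => ¬ x < k)).card = 1 := by
        have := Finset.card_filter_add_card_filter_not
          (s := e1) (p := fun x => x < k)
        omega
      have hq2 : (e2.filter (fun x => ¬ x < k)).card = 1 := by
        have := Finset.card_filter_add_card_filter_not
          (s := e2) (p := fun x => x < k)
        omega
      have hq3 : (e3.filter (fun x => ¬ x < k)).card = 1 := by
        have := Finset.card_filter_add_card_filter_not
          (s := e3) (p := fun x => x < k)
        omega
      obtain ⟨r1, hrr1⟩ := Finset.card_eq_one.mp hq1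
      obtain ⟨r2, hrr2⟩ := Finset.card_eq_one.mp hq2
      obtain ⟨r3, hrr3⟩ := Finset.card_eq_one.mp hq3
      have hmatch : ∀ (ea eb : Finset ℕ), (ea.filter (fun x => x < k)).card = 2 →
          (eb.filter (fun x => x < k)).card = 2 →
          (ea.filter (fun x => x < k)).sum id % k =
            (eb.filter (fun x => x < k)).sum id % k →
          ∀ x, x ∈ ea.filter (fun x => x < k) → x ∈ eb.filter (fun x => x < k) →
          ea.filter (fun x => x < k) = eb.filter (fun x => x < k) := by
        intro ea eb ha hb hsum x hxa hxb
        exact pair_match id ha hb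
          (fun x hx => (Finset.mem_filter.mp hx).2)
          (fun x hx => (Finset.mem_filter.mp hx).2)
          (fun _ _ _ _ h => h) hsum hxa hxb
      have hsum12 : (e1.filter (fun x => x < k)).sum id % k =
          (e2.filter (fun x => x < k)).sum id % k := by omega
      have hsum13 : (e1.filter (fun x => x < k)).sum id % k =
          (e3.filter (fun x => x < k)).sum id % k := by omega
      have hsum23 : (e2.filter (fun x => x < k)).sum id % k =
          (e3.filter (fun x => x < k)).sum id % k := by omega
      refine matching_nocfg (fun x => x < k)
        (e1 := e1) (e2 := e2) (e3 := e3)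
        (p1 := e1.filter (fun x => x < k)) (p2 := e2.filter (fun x => x < k))
        (p3 := e3.filter (fun x => x < k)) (r1 := r1) (r2 := r2) (r3 := r3)
        (by rw [← hrr1]; exact (Finset.filter_union_filter_not_eq _ e1).symm)
        (by rw [← hrr2]; exact (Finset.filter_union_filter_not_eq _ e2).symm)
        (by rw [← hrr3]; exact (Finset.filter_union_filter_not_eq _ e3).symm)
        hp1 hp2 hp3
        (fun x hx => (Finset.mem_filter.mp hx).2)
        (fun x hx => (Finset.mem_filter.mp hx).2)
        (fun x hx => (Finset.mem_filter.mp hx).2)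
        (by have h : r1 ∈ e1.filter (fun x => ¬ x < k) := by
              rw [hrr1]; exact Finset.mem_singleton_self r1
            exact (Finset.mem_filter.mp h).2)
        (by have h : r2 ∈ e2.filter (fun x => ¬ x < k) := by
              rw [hrr2]; exact Finset.mem_singleton_self r2
            exact (Finset.mem_filter.mp h).2)
        (by have h : r3 ∈ e3.filter (fun x => ¬ x < k) := by
              rw [hrr3]; exact Finset.mem_singleton_self r3
            exact (Finset.mem_filter.mp h).2)
        (hmatch e1 e2 hp1 hp2 hsum12)
        (hmatch e1 e3 hp1 hp3 hsum13)
        (hmatch e2 e3 hp2 hp3 hsum23)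
        hne12 hne13 hne23 d12 d13 d23 m11 m21 m22 m32 m13' m33
    -- high band : pairs in R
    · have hq1 : (e1.filter (fun x => x < k)).card = 1 := by
        have := Finset.card_filter_add_card_filter_not
          (s := e1) (p := fun x => x < k)
        omega
      have hq2 : (e2.filter (fun x => x < k)).card = 1 := by
        have := Finset.card_filter_add_card_filter_not
          (s := e2) (p := fun x => x < k)
        omega
      have hq3 : (e3.filter (fun x => x < k)).card = 1 := by
        have := Finset.card_filter_add_card_filter_not
          (s := e3) (p := fun x => x < k)
        omega
      obtain ⟨r1, hrr1⟩ := Finset.card_eq_one.mp hq1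
      obtain ⟨r2, hrr2⟩ := Finset.card_eq_one.mp hq2
      obtain ⟨r3, hrr3⟩ := Finset.card_eq_one.mp hq3
      have hmatch : ∀ (ea eb : Finset ℕ), (∀ x ∈ ea, x < n) → (∀ x ∈ eb, x < n) →
          (ea.filter (fun x => ¬ x < k)).card = 2 →
          (eb.filter (fun x => ¬ x < k)).card = 2 →
          (ea.filter (fun x => ¬ x < k)).sum (fun x => x - k) % (n - k) =
            (eb.filter (fun x => ¬ x < k)).sum (fun x => x - k) % (n - k) →
          ∀ x, x ∈ ea.filter (fun x => ¬ x < k) → x ∈ eb.filter (fun x => ¬ x < k) →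
          ea.filter (fun x => ¬ x < k) = eb.filter (fun x => ¬ x < k) := by
        intro ea eb hra hrb ha hb hsum x hxa hxb
        refine pair_match (fun x => x - k) ha hb ?_ ?_ ?_ hsum hxa hxb
        · intro x hx
          have h1 := (Finset.mem_filter.mp hx).2
          have h2 := hra x (Finset.mem_filter.mp hx).1
          show x - k < n - k
          omega
        · intro x hx
          have h1 := (Finset.mem_filter.mp hx).2
          have h2 := hrb x (Finset.mem_filter.mp hx).1
          show x - k < n - k
          omega
        · intro x hx y hy hxy
          have := (Finset.mem_filter.mp hx).2
          have := (Finset.mem_filter.mp hy).2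
          have hxy' : x - k = y - k := hxy
          omega
      have hsum12 : (e1.filter (fun x => ¬ x < k)).sum (fun x => x - k) % (n - k) =
          (e2.filter (fun x => ¬ x < k)).sum (fun x => x - k) % (n - k) := by omega
      have hsum13 : (e1.filter (fun x => ¬ x < k)).sum (fun x => x - k) % (n - k) =
          (e3.filter (fun x => ¬ x < k)).sum (fun x => x - k) % (n - k) := by omega
      have hsum23 : (e2.filter (fun x => ¬ x < k)).sum (fun x => x - k) % (n - k) =
          (e3.filter (fun x => ¬ x < k)).sum (fun x => x - k) % (n - k) := by omega
      refine matching_nocfg (fun x => ¬ x < k)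
        (e1 := e1) (e2 := e2) (e3 := e3)
        (p1 := e1.filter (fun x => ¬ x < k)) (p2 := e2.filter (fun x => ¬ x < k))
        (p3 := e3.filter (fun x => ¬ x < k)) (r1 := r1) (r2 := r2) (r3 := r3)
        ?_ ?_ ?_
        hp1 hp2 hp3
        (fun x hx => (Finset.mem_filter.mp hx).2)
        (fun x hx => (Finset.mem_filter.mp hx).2)
        (fun x hx => (Finset.mem_filter.mp hx).2)
        ?_ ?_ ?_
        (hmatch e1 e2 hr1 hr2 hp1 hp2 hsum12)
        (hmatch e1 e3 hr1 hr3 hp1 hp3 hsum13)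
        (hmatch e2 e3 hr2 hr3 hp2 hp3 hsum23)
        hne12 hne13 hne23 d12 d13 d23 m11 m21 m22 m32 m13' m33
      · rw [← hrr1, Finset.union_comm]
        exact (Finset.filter_union_filter_not_eq _ e1).symm
      · rw [← hrr2, Finset.union_comm]
        exact (Finset.filter_union_filter_not_eq _ e2).symm
      · rw [← hrr3, Finset.union_comm]
        exact (Finset.filter_union_filter_not_eq _ e3).symm
      · have h : r1 ∈ e1.filter (fun x => x < k) := by
          rw [hrr1]; exact Finset.mem_singleton_self r1
        exact fun hc => hc (Finset.mem_filter.mp h).2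
      · have h : r2 ∈ e2.filter (fun x => x < k) := by
          rw [hrr2]; exact Finset.mem_singleton_self r2
        exact fun hc => hc (Finset.mem_filter.mp h).2
      · have h : r3 ∈ e3.filter (fun x => x < k) := by
          rw [hrr3]; exact Finset.mem_singleton_self r3
        exact fun hc => hc (Finset.mem_filter.mp h).2

lemma berge_to_cfg {α : Type} {A : Set (Finset α)} (h : BergeIn K3 A) : Cfg A := by
  obtain ⟨φ, hφ, ψ, hψ, hA, hmem⟩ := h
  have h1 : s((0 : Fin 3), 1) ∈ K3.edgeSet := by simp [K3]
  have h2 : s((1 : Fin 3), 2) ∈ K3.edgeSet := by simp [K3]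
  have h3 : s((0 : Fin 3), 2) ∈ K3.edgeSet := by simp [K3]
  have m1 : φ 0 ∈ ψ ⟨_, h1⟩ := hmem ⟨_, h1⟩ 0 (by simp)
  have m2 : φ 1 ∈ ψ ⟨_, h1⟩ := hmem ⟨_, h1⟩ 1 (by simp)
  have m3 : φ 1 ∈ ψ ⟨_, h2⟩ := hmem ⟨_, h2⟩ 1 (by simp)
  have m4 : φ 2 ∈ ψ ⟨_, h2⟩ := hmem ⟨_, h2⟩ 2 (by simp)
  have m5 : φ 0 ∈ ψ ⟨_, h3⟩ := hmem ⟨_, h3⟩ 0 (by simp)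
  have m6 : φ 2 ∈ ψ ⟨_, h3⟩ := hmem ⟨_, h3⟩ 2 (by simp)
  refine ⟨ψ ⟨_, h1⟩, ψ ⟨_, h2⟩, ψ ⟨_, h3⟩, hA _, hA _, hA _, ?_, ?_, ?_,
    φ 0, φ 1, φ 2, hφ.ne (by decide), hφ.ne (by decide), hφ.ne (by decide),
    m1, m2, m3, m4, m5, m6⟩
  · intro h; have := congrArg Subtype.val (hψ h); simp at this
  · intro h; have := congrArg Subtype.val (hψ h); simp at this
  · intro h; have := congrArg Subtype.val (hψ h); simp at this

/-- For every `n ≥ 3`, the 3-element subsets of an `n`-element set can be colored with at most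
`2n + ⌈log₂ n⌉` colors such that no color class contains a Berge-`K₃`. -/
theorem exists_coloring_triples_no_berge_triangle (n : ℕ) (hn : 3 ≤ n) :
    ∃ c : Finset (Fin n) → Fin (2 * n + Nat.clog 2 n),
      ∀ i, ¬ BergeIn K3 {s : Finset (Fin n) | s.card = 3 ∧ c s = i} := by
  obtain ⟨c, hb, hcfg⟩ := key n
  have hNpos : 0 < 2 * n + Nat.clog 2 n := by omega
  have himg : ∀ s : Finset (Fin n), s.card = 3 →
      c (s.image Fin.val) < 2 * n + Nat.clog 2 n := by
    intro s hs
    refine hb _ ?_ ?_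
    · intro z hz
      obtain ⟨w, hw, rfl⟩ := Finset.mem_image.mp hz
      exact Finset.mem_range.mpr w.isLt
    · rw [Finset.card_image_of_injective _ Fin.val_injective, hs]
  refine ⟨fun s => if h : s.card = 3 then ⟨c (s.image Fin.val), himg s h⟩
    else ⟨0, hNpos⟩, ?_⟩
  intro i hB
  obtain ⟨e1, e2, e3, ⟨hc1, hi1⟩, ⟨hc2, hi2⟩, ⟨hc3, hi3⟩, hne12, hne13, hne23,
    x1, x2, x3, d12, d13, d23, m11, m21, m22, m32, m13', m33⟩ := berge_to_cfg hB
  simp only [dif_pos hc1] at hi1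
  simp only [dif_pos hc2] at hi2
  simp only [dif_pos hc3] at hi3
  have hv1 : c (e1.image Fin.val) = i.val := congrArg Fin.val hi1
  have hv2 : c (e2.image Fin.val) = i.val := congrArg Fin.val hi2
  have hv3 : c (e3.image Fin.val) = i.val := congrArg Fin.val hi3
  refine hcfg i.val ⟨e1.image Fin.val, e2.image Fin.val, e3.image Fin.val,
    ⟨?_, ?_, hv1⟩, ⟨?_, ?_, hv2⟩, ⟨?_, ?_, hv3⟩, ?_, ?_, ?_,
    x1.val, x2.val, x3.val,
    fun h => d12 (Fin.val_injective h), fun h => d13 (Fin.val_injective h),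
    fun h => d23 (Fin.val_injective h),
    Finset.mem_image_of_mem _ m11, Finset.mem_image_of_mem _ m21,
    Finset.mem_image_of_mem _ m22, Finset.mem_image_of_mem _ m32,
    Finset.mem_image_of_mem _ m13', Finset.mem_image_of_mem _ m33⟩
  · intro z hz
    obtain ⟨w, hw, rfl⟩ := Finset.mem_image.mp hz
    exact Finset.mem_range.mpr w.isLt
  · rw [Finset.card_image_of_injective _ Fin.val_injective, hc1]
  · intro z hz
    obtain ⟨w, hw, rfl⟩ := Finset.mem_image.mp hz
    exact Finset.mem_range.mpr w.isLt
  · rw [Finset.card_image_of_injective _ Fin.val_injective, hc2]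
  · intro z hz
    obtain ⟨w, hw, rfl⟩ := Finset.mem_image.mp hz
    exact Finset.mem_range.mpr w.isLt
  · rw [Finset.card_image_of_injective _ Fin.val_injective, hc3]
  · exact fun h => hne12 (Finset.image_injective Fin.val_injective h)
  · exact fun h => hne13 (Finset.image_injective Fin.val_injective h)
  · exact fun h => hne23 (Finset.image_injective Fin.val_injective h)
end

section
/- R_3(B(K_3), 2) = 5, R_3(B(K_3), 3) = 5, and R_3(B(K_3), 4) = 6. -/
open SimpleGraph

/-! ### Auxiliary machinery -/

set_option maxRecDepth 100000
set_option maxHeartbeats 4000000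

/-- Core data of a Berge triangle. -/
def CoreD {α : Type} (A : Set (Finset α)) : Prop :=
  ∃ e1, e1 ∈ A ∧ ∃ e2, e2 ∈ A ∧ e1 ≠ e2 ∧ ∃ e3, e3 ∈ A ∧ e1 ≠ e3 ∧ e2 ≠ e3 ∧
    ∃ x y z : α, x ≠ y ∧ x ≠ z ∧ y ≠ z ∧
      x ∈ e1 ∧ y ∈ e1 ∧ y ∈ e2 ∧ z ∈ e2 ∧ x ∈ e3 ∧ z ∈ e3

instance {α : Type} [DecidableEq α] [Fintype α] (p : Finset α → Prop) [DecidablePred p] :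
    Decidable (CoreD {s | p s}) :=
  inferInstanceAs (Decidable
    (∃ e1, p e1 ∧ ∃ e2, p e2 ∧ e1 ≠ e2 ∧ ∃ e3, p e3 ∧ e1 ≠ e3 ∧ e2 ≠ e3 ∧
      ∃ x y z : α, x ≠ y ∧ x ≠ z ∧ y ≠ z ∧
        x ∈ e1 ∧ y ∈ e1 ∧ y ∈ e2 ∧ z ∈ e2 ∧ x ∈ e3 ∧ z ∈ e3))

lemma coreD_mono {α : Type} {A B : Set (Finset α)} (h : A ⊆ B) : CoreD A → CoreD B := by
  rintro ⟨e1, h1, e2, h2, h12, e3, h3, h13, h23, rest⟩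
  exact ⟨e1, h h1, e2, h h2, h12, e3, h h3, h13, h23, rest⟩

lemma k3_edge_cases : ∀ e : K3.edgeSet, (e : Sym2 (Fin 3)) = s(0,1) ∨
    (e : Sym2 (Fin 3)) = s(1,2) ∨ (e : Sym2 (Fin 3)) = s(0,2) := by
  have key : ∀ a b : Fin 3, a ≠ b → (s(a,b) : Sym2 (Fin 3)) = s(0,1) ∨
      (s(a,b) : Sym2 (Fin 3)) = s(1,2) ∨ (s(a,b) : Sym2 (Fin 3)) = s(0,2) := by decide
  rintro ⟨e, he⟩
  induction e using Sym2.ind with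
  | _ a b =>
    rw [SimpleGraph.mem_edgeSet] at he
    have hab : a ≠ b := by simpa [K3] using he
    exact key a b hab

lemma mem01 : s(0,1) ∈ K3.edgeSet := by simp [K3, SimpleGraph.mem_edgeSet]
lemma mem12 : s(1,2) ∈ K3.edgeSet := by simp [K3, SimpleGraph.mem_edgeSet]
lemma mem02 : s(0,2) ∈ K3.edgeSet := by simp [K3, SimpleGraph.mem_edgeSet]

lemma bergeIn_iff_coreD {α : Type} (A : Set (Finset α)) : BergeIn K3 A ↔ CoreD A := by
  constructor
  · rintro ⟨φ, hφ, ψ, hψ, hA, hmem⟩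
    refine ⟨ψ ⟨s(0,1), mem01⟩, hA _, ψ ⟨s(1,2), mem12⟩, hA _, ?_, ψ ⟨s(0,2), mem02⟩, hA _,
      ?_, ?_, φ 0, φ 1, φ 2, ?_, ?_, ?_, ?_, ?_, ?_, ?_, ?_, ?_⟩
    · intro h; exact absurd (congrArg Subtype.val (hψ h)) (by decide)
    · intro h; exact absurd (congrArg Subtype.val (hψ h)) (by decide)
    · intro h; exact absurd (congrArg Subtype.val (hψ h)) (by decide)
    · intro h; exact absurd (hφ h) (by decide)
    · intro h; exact absurd (hφ h) (by decide)
    · intro h; exact absurd (hφ h) (by decide)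
    · exact hmem _ 0 (by simp)
    · exact hmem _ 1 (by simp)
    · exact hmem _ 1 (by simp)
    · exact hmem _ 2 (by simp)
    · exact hmem _ 0 (by simp)
    · exact hmem _ 2 (by simp)
  · rintro ⟨e1, h1A, e2, h2A, h12, e3, h3A, h13, h23, x, y, z, hxy, hxz, hyz,
      hx1, hy1, hy2, hz2, hx3, hz3⟩
    classical
    refine ⟨fun v => if v = 0 then x else if v = 1 then y else z, ?_,
      fun e => if (e : Sym2 (Fin 3)) = s(0,1) then e1
        else if (e : Sym2 (Fin 3)) = s(1,2) then e2 else e3, ?_, ?_, ?_⟩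
    · intro a b h
      fin_cases a <;> fin_cases b <;> simp_all
    · intro a b h
      have hne1 : (s(0,1) : Sym2 (Fin 3)) ≠ s(1,2) := by decide
      have hne2 : (s(0,1) : Sym2 (Fin 3)) ≠ s(0,2) := by decide
      have hne3 : (s(1,2) : Sym2 (Fin 3)) ≠ s(0,2) := by decide
      rcases k3_edge_cases a with ha | ha | ha <;> rcases k3_edge_cases b with hb | hb | hb <;>
        simp only [ha, hb, if_pos, if_neg, hne1, hne2, hne3, Ne, not_false_iff,
          if_true, reduceIte] at h ⊢ <;>
        first
          | exact Subtype.ext (ha.trans hb.symm)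
          | simp_all
    · intro e
      rcases k3_edge_cases e with h | h | h <;> simp only [h, reduceIte] <;> assumption
    · intro e v hv
      rcases k3_edge_cases e with h | h | h <;> rw [h] at hv <;>
        rcases Sym2.mem_iff.mp hv with rfl | rfl <;> simp [h] <;> assumption

/-! ### Mask world -/

def CoreL (F : List ℕ) : Prop :=
  ∃ e1 ∈ F, ∃ e2 ∈ F, e1 ≠ e2 ∧ ∃ e3 ∈ F, e1 ≠ e3 ∧ e2 ≠ e3 ∧
    ∃ x ∈ List.range 6, (e1 &&& e3).testBit x = true ∧
      ∃ y ∈ List.range 6, y ≠ x ∧ (e1 &&& e2).testBit y = true ∧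
        ∃ z ∈ List.range 6, z ≠ x ∧ z ≠ y ∧ (e2 &&& e3).testBit z = true

instance (F : List ℕ) : Decidable (CoreL F) :=
  inferInstanceAs (Decidable (∃ e1 ∈ F, ∃ e2 ∈ F, e1 ≠ e2 ∧ ∃ e3 ∈ F, e1 ≠ e3 ∧ e2 ≠ e3 ∧
    ∃ x ∈ List.range 6, (e1 &&& e3).testBit x = true ∧
      ∃ y ∈ List.range 6, y ≠ x ∧ (e1 &&& e2).testBit y = true ∧
        ∃ z ∈ List.range 6, z ≠ x ∧ z ≠ y ∧ (e2 &&& e3).testBit z = true))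

def TL (n : ℕ) : List ℕ :=
  (List.range (2^n)).filter fun m => ((List.range n).filter fun i => m.testBit i).length == 3

def mask {n : ℕ} (s : Finset (Fin n)) : ℕ := s.sum fun i => 2 ^ (i : ℕ)

lemma core_of_masks {n m : ℕ}
    (hB1 : ∀ s : Finset (Fin n), s.card = 3 → mask s ∈ TL n)
    (hInj : ∀ s t : Finset (Fin n), mask s = mask t → s = t)
    (hBit : ∀ s : Finset (Fin n), ∀ x ∈ List.range 6,
      (mask s).testBit x = true → ∃ v : Fin n, (v : ℕ) = x ∧ v ∈ s)
    (hSort : (TL n).Pairwise (· ≤ ·))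
    (hD : ∀ F ∈ (TL n).sublistsLen m, CoreL F)
    (G : Finset (Finset (Fin n))) (hG3 : ∀ s ∈ G, s.card = 3) (hGc : G.card = m) :
    CoreD {s : Finset (Fin n) | s ∈ G} := by
  classical
  set L := (G.image mask).sort (· ≤ ·) with hL
  have hmemL : ∀ a, a ∈ L ↔ ∃ s ∈ G, mask s = a := by
    intro a; rw [hL, Finset.mem_sort]; simp [Finset.mem_image]
  have hLsub : L ⊆ TL n := by
    intro a ha
    obtain ⟨s, hs, rfl⟩ := (hmemL a).1 ha
    exact hB1 s (hG3 s hs)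
  have hLlen : L.length = m := by
    rw [hL, Finset.length_sort, Finset.card_image_of_injOn fun s _ t _ h => hInj s t h, hGc]
  have hLsl : L ∈ (TL n).sublistsLen m := by
    rw [List.mem_sublistsLen]
    exact ⟨List.sublist_of_subperm_of_pairwise ((Finset.sort_nodup _ _).subperm hLsub)
      (Finset.pairwise_sort _ _) hSort, hLlen⟩
  obtain ⟨a1, ha1, a2, ha2, h12, a3, ha3, h13, h23, x, hx, hbx, y, hy, hyx, hby,
    z, hz, hzx, hzy, hbz⟩ := hD L hLsl
  obtain ⟨s1, hs1, rfl⟩ := (hmemL _).1 ha1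
  obtain ⟨s2, hs2, rfl⟩ := (hmemL _).1 ha2
  obtain ⟨s3, hs3, rfl⟩ := (hmemL _).1 ha3
  rw [Nat.testBit_land, Bool.and_eq_true] at hbx hby hbz
  obtain ⟨vx, hvx, hvx1⟩ := hBit s1 x hx hbx.1
  obtain ⟨vx', hvx', hvx3⟩ := hBit s3 x hx hbx.2
  obtain ⟨vy, hvy, hvy1⟩ := hBit s1 y hy hby.1
  obtain ⟨vy', hvy', hvy2⟩ := hBit s2 y hy hby.2
  obtain ⟨vz, hvz, hvz2⟩ := hBit s2 z hz hbz.1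
  obtain ⟨vz', hvz', hvz3⟩ := hBit s3 z hz hbz.2
  have ex : vx' = vx := Fin.ext (by rw [hvx', hvx])
  have ey : vy' = vy := Fin.ext (by rw [hvy', hvy])
  have ez : vz' = vz := Fin.ext (by rw [hvz', hvz])
  rw [ex] at hvx3; rw [ey] at hvy2; rw [ez] at hvz3
  refine ⟨s1, hs1, s2, hs2, fun h => h12 (congrArg mask h), s3, hs3,
    fun h => h13 (congrArg mask h), fun h => h23 (congrArg mask h),
    vx, vy, vz, ?_, ?_, ?_, hvx1, hvy1, hvy2, hvz2, hvx3, hvz3⟩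
  · exact fun h => hyx (by rw [← hvy, ← hvx, h])
  · exact fun h => hzx (by rw [← hvz, ← hvx, h])
  · exact fun h => hzy (by rw [← hvz, ← hvy, h])

/-! ### Decided facts -/

lemma hB1_5 : ∀ s : Finset (Fin 5), s.card = 3 → mask s ∈ TL 5 := by decide
lemma hB1_6 : ∀ s : Finset (Fin 6), s.card = 3 → mask s ∈ TL 6 := by decide
lemma hInj_5 : ∀ s t : Finset (Fin 5), mask s = mask t → s = t := by decide
lemma hInj_6 : ∀ s t : Finset (Fin 6), mask s = mask t → s = t := by decide
lemma hBit_5 : ∀ s : Finset (Fin 5), ∀ x ∈ List.range 6,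
    (mask s).testBit x = true → ∃ v : Fin 5, (v : ℕ) = x ∧ v ∈ s := by decide
lemma hBit_6 : ∀ s : Finset (Fin 6), ∀ x ∈ List.range 6,
    (mask s).testBit x = true → ∃ v : Fin 6, (v : ℕ) = x ∧ v ∈ s := by decide
lemma hSort_5 : (TL 5).Pairwise (· ≤ ·) := by decide
lemma hSort_6 : (TL 6).Pairwise (· ≤ ·) := by decide
lemma coreL_mono {F F' : List ℕ} (h : ∀ a ∈ F, a ∈ F') : CoreL F → CoreL F' := by
  rintro ⟨e1, h1, e2, h2, h12, e3, h3, rest⟩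
  exact ⟨e1, h _ h1, e2, h _ h2, h12, e3, h _ h3, rest⟩

def Search : List ℕ → ℕ → List ℕ → Prop
  | [], d, cur => d = 0 → CoreL cur
  | _ :: _, 0, cur => CoreL cur
  | t :: rs, d + 1, cur => (CoreL (t :: cur) ∨ Search rs d (t :: cur)) ∧ Search rs (d + 1) cur

instance instDecSearch : ∀ (l : List ℕ) (d : ℕ) (cur : List ℕ), Decidable (Search l d cur)
  | [], d, cur => inferInstanceAs (Decidable (d = 0 → CoreL cur))
  | _ :: _, 0, cur => inferInstanceAs (Decidable (CoreL cur))
  | t :: rs, d + 1, cur =>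
      have := instDecSearch rs d (t :: cur)
      have := instDecSearch rs (d + 1) cur
      inferInstanceAs (Decidable ((CoreL (t :: cur) ∨ Search rs d (t :: cur)) ∧
        Search rs (d + 1) cur))

lemma search_sound : ∀ (l : List ℕ) (d : ℕ) (cur : List ℕ), Search l d cur →
    ∀ S : List ℕ, S.Sublist l → S.length = d → CoreL (S ++ cur) := by
  intro l
  induction l with
  | nil =>
    intro d cur h S hS hlen
    rw [List.sublist_nil] at hS
    subst hS
    simpa using h (by simpa using hlen.symm)
  | cons t rs ih =>
    intro d cur h S hS hlen
    cases d with
    | zero =>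
      rw [List.length_eq_zero_iff] at hlen
      subst hlen
      simpa [Search] using h
    | succ d =>
      obtain ⟨h1, h2⟩ := h
      cases hS with
      | cons _ hS' => exact ih (d + 1) cur h2 S hS' hlen
      | cons_cons _ hS' =>
        rcases h1 with hc | hsrch
        · refine coreL_mono (fun a ha => ?_) hc
          simp only [List.mem_cons, List.mem_append] at ha ⊢
          tauto
        · have := ih d _ hsrch _ hS' (by simpa using hlen)
          refine coreL_mono (fun a ha => ?_) this
          simp only [List.mem_cons, List.mem_append] at ha ⊢
          tauto

lemma hD_6 : ∀ F ∈ (TL 6).sublistsLen 5, CoreL F := by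
  intro F hF
  rw [List.mem_sublistsLen] at hF
  simpa using search_sound (TL 6) 5 [] (by decide) F hF.1 hF.2

lemma hD_5 : ∀ F ∈ (TL 5).sublistsLen 4, CoreL F := by
  intro F hF
  rw [List.mem_sublistsLen] at hF
  simpa using search_sound (TL 5) 4 [] (by decide) F hF.1 hF.2

lemma key5 (G : Finset (Finset (Fin 5))) (hG3 : ∀ s ∈ G, s.card = 3) (hGc : G.card = 4) :
    CoreD {s : Finset (Fin 5) | s ∈ G} :=
  core_of_masks hB1_5 hInj_5 hBit_5 hSort_5 hD_5 G hG3 hGc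

lemma key6 (G : Finset (Finset (Fin 6))) (hG3 : ∀ s ∈ G, s.card = 3) (hGc : G.card = 5) :
    CoreD {s : Finset (Fin 6) | s ∈ G} :=
  core_of_masks hB1_6 hInj_6 hBit_6 hSort_6 hD_6 G hG3 hGc

/-! ### Upper bounds -/

lemma upper_generic {n k b : ℕ}
    (key : ∀ G : Finset (Finset (Fin n)), (∀ s ∈ G, s.card = 3) → G.card = b + 1 →
      CoreD {s : Finset (Fin n) | s ∈ G})
    (hcount : k * b <
      ((Finset.univ : Finset (Finset (Fin n))).filter fun s => s.card = 3).card) :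
    BergeRamseyProp K3 3 k n := by
  classical
  intro c
  set T := (Finset.univ : Finset (Finset (Fin n))).filter fun s => s.card = 3 with hT
  have maps : ∀ s ∈ T, c s ∈ (Finset.univ : Finset (Fin k)) := fun _ _ => Finset.mem_univ _
  have hlt : (Finset.univ : Finset (Fin k)).card * b < T.card := by
    simpa [Finset.card_univ] using hcount
  obtain ⟨i, -, hib⟩ := Finset.exists_lt_card_fiber_of_mul_lt_card_of_maps_to maps hlt
  obtain ⟨G, hGsub, hGcard⟩ := Finset.exists_subset_card_eq (n := b + 1) hib
  have hG3 : ∀ s ∈ G, s.card = 3 := fun s hs =>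
    (Finset.mem_filter.1 (Finset.filter_subset _ _ (hGsub hs))).2
  have hGi : ∀ s ∈ G, c s = i := fun s hs => (Finset.mem_filter.1 (hGsub hs)).2
  refine ⟨i, (bergeIn_iff_coreD _).2 (coreD_mono ?_ (key G hG3 hGcard))⟩
  exact fun s hs => ⟨hG3 s hs, hGi s hs⟩

lemma prop_5_2 : BergeRamseyProp K3 3 2 5 := upper_generic key5 (by decide)
lemma prop_5_3 : BergeRamseyProp K3 3 3 5 := upper_generic key5 (by decide)
lemma prop_6_4 : BergeRamseyProp K3 3 4 6 := upper_generic key6 (by decide)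

/-! ### Lower bounds -/

lemma not_prop_of_coloring {n k : ℕ} (c : Finset (Fin n) → Fin k)
    (h : ∀ i, ¬ CoreD {s : Finset (Fin n) | s.card = 3 ∧ c s = i}) :
    ¬ BergeRamseyProp K3 3 k n := by
  intro H
  obtain ⟨i, hB⟩ := H c
  exact h i ((bergeIn_iff_coreD _).1 hB)

def c42 : Finset (Fin 4) → Fin 2 := fun s =>
  if s = {0,1,2} ∨ s = {0,1,3} then 0 else 1

def c43 : Finset (Fin 4) → Fin 3 := fun s =>
  if s = {0,1,2} ∨ s = {0,1,3} then 0 else 1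

def c54 : Finset (Fin 5) → Fin 4 := fun s =>
  if s = {0,1,2} ∨ s = {0,1,3} ∨ s = {0,1,4} then 0
  else if s = {0,2,3} ∨ s = {1,2,3} ∨ s = {2,3,4} then 1
  else if s = {0,2,4} ∨ s = {1,2,4} then 2 else 3

lemma not_prop_4_2 : ¬ BergeRamseyProp K3 3 2 4 :=
  not_prop_of_coloring c42 (by decide)

lemma not_prop_4_3 : ¬ BergeRamseyProp K3 3 3 4 :=
  not_prop_of_coloring c43 (by decide)

lemma not_prop_5_4 : ¬ BergeRamseyProp K3 3 4 5 :=
  not_prop_of_coloring c54 (by decide)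

/-! ### Monotonicity and assembly -/

lemma prop_mono {k m n : ℕ} (h : m ≤ n) (hm : BergeRamseyProp K3 3 k m) :
    BergeRamseyProp K3 3 k n := by
  intro c
  obtain ⟨i, hB⟩ := hm fun s => c (s.map (Fin.castLEEmb h))
  rw [bergeIn_iff_coreD] at hB
  refine ⟨i, (bergeIn_iff_coreD _).2 ?_⟩
  obtain ⟨e1, ⟨hc1, hcc1⟩, e2, ⟨hc2, hcc2⟩, h12, e3, ⟨hc3, hcc3⟩, h13, h23,
    x, y, z, hxy, hxz, hyz, hx1, hy1, hy2, hz2, hx3, hz3⟩ := hB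
  refine ⟨e1.map _, ⟨by simpa using hc1, hcc1⟩, e2.map _, ⟨by simpa using hc2, hcc2⟩,
    fun hh => h12 (Finset.map_injective _ hh), e3.map _, ⟨by simpa using hc3, hcc3⟩,
    fun hh => h13 (Finset.map_injective _ hh), fun hh => h23 (Finset.map_injective _ hh),
    (Fin.castLEEmb h) x, (Fin.castLEEmb h) y, (Fin.castLEEmb h) z,
    fun hh => hxy ((Fin.castLEEmb h).injective hh),
    fun hh => hxz ((Fin.castLEEmb h).injective hh),
    fun hh => hyz ((Fin.castLEEmb h).injective hh),
    Finset.mem_map_of_mem _ hx1, Finset.mem_map_of_mem _ hy1, Finset.mem_map_of_mem _ hy2,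
    Finset.mem_map_of_mem _ hz2, Finset.mem_map_of_mem _ hx3, Finset.mem_map_of_mem _ hz3⟩

lemma ramsey_eq {k v : ℕ} (hv : BergeRamseyProp K3 3 k v)
    (hnot : ¬ BergeRamseyProp K3 3 k (v - 1)) : bergeRamsey K3 3 k = v := by
  refine le_antisymm (Nat.sInf_le hv) (le_csInf ⟨v, hv⟩ fun m hm => ?_)
  by_contra hlt
  push_neg at hlt
  exact hnot (prop_mono (by omega) hm)

/-- `R₃(𝓑(K₃), 2) = 5`, `R₃(𝓑(K₃), 3) = 5` and `R₃(𝓑(K₃), 4) = 6`. -/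
theorem bergeRamsey_K3_small :
    bergeRamsey K3 3 2 = 5 ∧ bergeRamsey K3 3 3 = 5 ∧ bergeRamsey K3 3 4 = 6 := by
  exact ⟨ramsey_eq prop_5_2 not_prop_4_2, ramsey_eq prop_5_3 not_prop_4_3,
    ramsey_eq prop_6_4 not_prop_5_4⟩
end

section
/- For every integer n ≥ 3, f(n, B(K_3)) ≤ 2^{n−2}; that is, there exists a coloring of all subsets of {1, …, n} with 2^{n−2} colors such that no three pairwise distinct subsets of the same color form a Berge-K_3. -/
open SimpleGraph

def redfn {α : Type} [Fintype α] [DecidableEq α] (a b : α) (S : Finset α) : Finset α :=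
  (if a ∈ S then Sᶜ else S).erase b

lemma mem_four {α : Type} [Fintype α] [DecidableEq α] (a b : α) (S : Finset α) :
    S = redfn a b S ∨ S = insert b (redfn a b S) ∨
    S = (redfn a b S)ᶜ ∨ S = (insert b (redfn a b S))ᶜ := by
  have hF : (if a ∈ S then Sᶜ else S) = redfn a b S ∨
      (if a ∈ S then Sᶜ else S) = insert b (redfn a b S) := by
    by_cases hb : b ∈ (if a ∈ S then Sᶜ else S)
    · right; exact (Finset.insert_erase hb).symm
    · left; exact (Finset.erase_eq_of_notMem hb).symm
  by_cases ha : a ∈ S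
  · rcases hF with h | h <;> simp only [ha, if_true] at h
    · right; right; left; rw [← h, compl_compl]
    · right; right; right; rw [← h, compl_compl]
  · rcases hF with h | h <;> simp only [ha, if_false] at h
    · left; exact h
    · right; left; exact h

set_option maxHeartbeats 2000000 in
lemma disj_of_redfn_eq {α : Type} [Fintype α] [DecidableEq α] (a b : α) {S T U : Finset α}
    (hST : S ≠ T) (hSU : S ≠ U) (hTU : T ≠ U)
    (h1 : redfn a b S = redfn a b T) (h2 : redfn a b S = redfn a b U) :
    S ∩ T = ∅ ∨ S ∩ U = ∅ ∨ T ∩ U = ∅ := by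
  obtain ⟨R, h4S, h4T, h4U⟩ :
      ∃ R : Finset α, (S = R ∨ S = insert b R ∨ S = Rᶜ ∨ S = (insert b R)ᶜ) ∧
        (T = R ∨ T = insert b R ∨ T = Rᶜ ∨ T = (insert b R)ᶜ) ∧
        (U = R ∨ U = insert b R ∨ U = Rᶜ ∨ U = (insert b R)ᶜ) := by
    refine ⟨redfn a b S, mem_four a b S, ?_, ?_⟩
    · rw [h1]; exact mem_four a b T
    · rw [h2]; exact mem_four a b U
  have k1 : ∀ X : Finset α, X ∩ Xᶜ = ∅ := fun X => disjoint_iff.mp disjoint_compl_right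
  have k2 : ∀ X : Finset α, Xᶜ ∩ X = ∅ := fun X => disjoint_iff.mp disjoint_compl_left
  rcases h4S with rfl | rfl | rfl | rfl <;> rcases h4T with rfl | rfl | rfl | rfl <;>
    rcases h4U with rfl | rfl | rfl | rfl <;>
    first
      | exact absurd rfl hST
      | exact absurd rfl hSU
      | exact absurd rfl hTU
      | exact Or.inl (k1 _)
      | exact Or.inl (k2 _)
      | exact Or.inr (Or.inl (k1 _))
      | exact Or.inr (Or.inl (k2 _))
      | exact Or.inr (Or.inr (k1 _))
      | exact Or.inr (Or.inr (k2 _))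

def gmap (n : ℕ) : Fin (n - 2) → Fin n := fun i => ⟨i.val + 2, by omega⟩

lemma gmap_inj (n : ℕ) : Function.Injective (gmap n) := by
  intro i j h
  simp only [gmap, Fin.mk.injEq] at h
  exact Fin.ext (by omega)

lemma preimage_gmap_inj (n : ℕ) {s t : Finset (Fin n)}
    (hs : ∀ x ∈ s, 2 ≤ x.val) (ht : ∀ x ∈ t, 2 ≤ x.val)
    (h : s.preimage (gmap n) ((gmap_inj n).injOn) = t.preimage (gmap n) ((gmap_inj n).injOn)) :
    s = t := by
  ext x
  by_cases hx : 2 ≤ x.val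
  · have hi : x.val - 2 < n - 2 := by omega
    have hg : gmap n ⟨x.val - 2, hi⟩ = x := Fin.ext (by simp [gmap]; omega)
    constructor
    · intro hxs
      have : (⟨x.val - 2, hi⟩ : Fin (n-2)) ∈ s.preimage (gmap n) ((gmap_inj n).injOn) := by
        rw [Finset.mem_preimage, hg]; exact hxs
      rw [h, Finset.mem_preimage, hg] at this; exact this
    · intro hxt
      have : (⟨x.val - 2, hi⟩ : Fin (n-2)) ∈ t.preimage (gmap n) ((gmap_inj n).injOn) := by
        rw [Finset.mem_preimage, hg]; exact hxt
      rw [← h, Finset.mem_preimage, hg] at this; exact this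
  · constructor
    · intro hxs; exact absurd (hs x hxs) hx
    · intro hxt; exact absurd (ht x hxt) hx

def E01 : K3.edgeSet := ⟨s(0, 1), by rw [SimpleGraph.mem_edgeSet]; simp [K3]⟩
def E02 : K3.edgeSet := ⟨s(0, 2), by rw [SimpleGraph.mem_edgeSet]; simp [K3]⟩
def E12 : K3.edgeSet := ⟨s(1, 2), by rw [SimpleGraph.mem_edgeSet]; simp [K3]⟩

/-- For every `n ≥ 3`, `f(n, 𝓑(K₃)) ≤ 2^(n-2)`: all subsets of an `n`-element set can be
colored with `2^(n-2)` colors so that no color class contains a Berge-`K₃`. -/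
theorem exists_coloring_subsets_no_berge_triangle (n : ℕ) (hn : 3 ≤ n) :
    ∃ c : Finset (Fin n) → Fin (2 ^ (n - 2)),
      ∀ i, ¬ BergeIn K3 {s : Finset (Fin n) | c s = i} := by
  have h0 : (0 : ℕ) < n := by omega
  have h1 : (1 : ℕ) < n := by omega
  set a : Fin n := ⟨0, h0⟩ with ha_def
  set b : Fin n := ⟨1, h1⟩ with hb_def
  have hred_big : ∀ S : Finset (Fin n), ∀ x ∈ redfn a b S, 2 ≤ x.val := by
    intro S x hx
    simp only [redfn, Finset.mem_erase] at hx
    obtain ⟨hxb, hxF⟩ := hx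
    have haF : a ∉ (if a ∈ S then Sᶜ else S) := by
      by_cases ha : a ∈ S <;> simp [ha]
    have hxa : x ≠ a := fun h => haF (h ▸ hxF)
    have hva : x.val ≠ 0 := fun h => hxa (Fin.ext h)
    have hvb : x.val ≠ 1 := fun h => hxb (Fin.ext h)
    omega
  obtain ⟨emap⟩ : Nonempty (Finset (Fin (n - 2)) ≃ Fin (2 ^ (n - 2))) := by
    refine ⟨Fintype.equivFinOfCardEq ?_⟩
    simp [Fintype.card_finset]
  refine ⟨fun S => emap ((redfn a b S).preimage (gmap n) ((gmap_inj n).injOn)), ?_⟩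
  rintro i ⟨φ, hφ, ψ, hψ, hmem, hcov⟩
  have hne : ∀ (e e' : K3.edgeSet), (e : Sym2 (Fin 3)) ≠ (e' : Sym2 (Fin 3)) → ψ e ≠ ψ e' := by
    intro e e' h hc
    exact h (congrArg Subtype.val (hψ hc))
  have hceq : ∀ (e e' : K3.edgeSet), redfn a b (ψ e) = redfn a b (ψ e') := by
    intro e e'
    have h := (hmem e).trans (hmem e').symm
    have h2 : emap ((redfn a b (ψ e)).preimage (gmap n) ((gmap_inj n).injOn)) =
        emap ((redfn a b (ψ e')).preimage (gmap n) ((gmap_inj n).injOn)) := by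
      simpa using (hmem e).trans (hmem e').symm
    exact preimage_gmap_inj n (hred_big _) (hred_big _) (emap.injective h2)
  have hdisj := disj_of_redfn_eq a b
    (hne E01 E02 (by decide)) (hne E01 E12 (by decide)) (hne E02 E12 (by decide))
    (hceq E01 E02) (hceq E01 E12)
  have m0 : φ 0 ∈ ψ E01 ∩ ψ E02 :=
    Finset.mem_inter.mpr ⟨hcov E01 0 (by decide), hcov E02 0 (by decide)⟩
  have m1 : φ 1 ∈ ψ E01 ∩ ψ E12 :=
    Finset.mem_inter.mpr ⟨hcov E01 1 (by decide), hcov E12 1 (by decide)⟩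
  have m2 : φ 2 ∈ ψ E02 ∩ ψ E12 :=
    Finset.mem_inter.mpr ⟨hcov E02 2 (by decide), hcov E12 2 (by decide)⟩
  rcases hdisj with h | h | h
  · rw [h] at m0; exact absurd m0 (Finset.notMem_empty _)
  · rw [h] at m1; exact absurd m1 (Finset.notMem_empty _)
  · rw [h] at m2; exact absurd m2 (Finset.notMem_empty _)
end

section
/- For every odd integer n ≥ 3 with n ≠ 5, f(n, B(K_3)) = 2^{n−2}: the subsets of an n-element set can be colored with 2^{n−2} colors without a monochromatic Berge-K_3, but every coloring with fewer than 2^{n−2} colors contains three pairwise distinct subsets of the same color forming a Berge-K_3. -/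
open SimpleGraph

namespace BergeAux

variable {α : Type} [DecidableEq α]

lemma sdr2 {Y Z : Finset α} (hY : Y.Nonempty) (hZ : Z.Nonempty)
    (hYZ : 2 ≤ (Y ∪ Z).card) : ∃ y ∈ Y, ∃ z ∈ Z, y ≠ z := by
  obtain ⟨z, hz⟩ := hZ
  by_cases h : (Y \ {z}).Nonempty
  · obtain ⟨y, hy⟩ := h
    rw [Finset.mem_sdiff, Finset.mem_singleton] at hy
    exact ⟨y, hy.1, z, hz, hy.2⟩
  · rw [Finset.not_nonempty_iff_eq_empty, Finset.sdiff_eq_empty_iff_subset] at h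
    obtain ⟨y, hy⟩ := hY
    have hyz : y = z := Finset.mem_singleton.mp (h hy)
    subst hyz
    have hex : ∃ z' ∈ Z, z' ≠ y := by
      by_contra hc
      push_neg at hc
      have hZy : Z ⊆ {y} := fun u hu => Finset.mem_singleton.mpr (hc u hu)
      have hsub : Y ∪ Z ⊆ {y} := Finset.union_subset h hZy
      have := Finset.card_le_card hsub
      simp at this; omega
    obtain ⟨z', hz', hz'y⟩ := hex
    exact ⟨y, hy, z', hz', Ne.symm hz'y⟩

lemma sdr3 {X Y Z : Finset α} (hX : X.Nonempty) (hY : Y.Nonempty) (hZ : Z.Nonempty)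
    (hXY : 2 ≤ (X ∪ Y).card) (hXZ : 2 ≤ (X ∪ Z).card) (hYZ : 2 ≤ (Y ∪ Z).card)
    (hXYZ : 3 ≤ (X ∪ Y ∪ Z).card) :
    ∃ x ∈ X, ∃ y ∈ Y, ∃ z ∈ Z, x ≠ y ∧ x ≠ z ∧ y ≠ z := by
  obtain ⟨y, hy, z, hz, hyz⟩ := sdr2 hY hZ hYZ
  by_cases h1 : (X \ {y, z}).Nonempty
  · obtain ⟨x, hx⟩ := h1
    rw [Finset.mem_sdiff, Finset.mem_insert, Finset.mem_singleton] at hx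
    push_neg at hx
    exact ⟨x, hx.1, y, hy, z, hz, hx.2.1, hx.2.2, hyz⟩
  · rw [Finset.not_nonempty_iff_eq_empty, Finset.sdiff_eq_empty_iff_subset] at h1
    have hwex : ((X ∪ Y ∪ Z) \ {y, z}).Nonempty := by
      rw [← Finset.card_pos]
      have h2 : ({y, z} : Finset α).card ≤ 2 := Finset.card_insert_le _ _ |>.trans (by simp)
      have := Finset.card_le_card_sdiff_add_card (s := X ∪ Y ∪ Z) (t := ({y, z} : Finset α))
      omega
    obtain ⟨w, hw⟩ := hwex
    rw [Finset.mem_sdiff, Finset.mem_insert, Finset.mem_singleton] at hw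
    push_neg at hw
    obtain ⟨hwU, hwy, hwz⟩ := hw
    have hwX : w ∉ X := fun h => by
      have := h1 h; rw [Finset.mem_insert, Finset.mem_singleton] at this; tauto
    have hwYZ : w ∈ Y ∪ Z := by
      rcases Finset.mem_union.mp hwU with h | h
      · rcases Finset.mem_union.mp h with h' | h'
        · exact absurd h' hwX
        · exact Finset.mem_union_left _ h'
      · exact Finset.mem_union_right _ h
    rcases Finset.mem_union.mp hwYZ with hwY | hwZ
    · -- w ∈ Y
      by_cases hyX : y ∈ X
      · exact ⟨y, hyX, w, hwY, z, hz, Ne.symm hwy, hyz, hwz⟩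
      · have hXz : X ⊆ {z} := by
          intro u hu
          have := h1 hu; rw [Finset.mem_insert, Finset.mem_singleton] at this
          rcases this with h | h
          · exact absurd (h ▸ hu) hyX
          · exact Finset.mem_singleton.mpr h
        obtain ⟨x, hxX⟩ := hX
        have hxz : x = z := Finset.mem_singleton.mp (hXz hxX)
        subst hxz
        by_cases h2 : (Z \ {x, w}).Nonempty
        · obtain ⟨z', hz'⟩ := h2
          rw [Finset.mem_sdiff, Finset.mem_insert, Finset.mem_singleton] at hz'
          push_neg at hz'
          exact ⟨x, hxX, w, hwY, z', hz'.1, Ne.symm hwz, Ne.symm hz'.2.1, Ne.symm hz'.2.2⟩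
        · rw [Finset.not_nonempty_iff_eq_empty, Finset.sdiff_eq_empty_iff_subset] at h2
          -- Z ⊆ {x, w}; need w ∈ Z
          have hwZ : w ∈ Z := by
            by_contra hwZ
            have hsub : X ∪ Z ⊆ {x} := by
              intro u hu
              rcases Finset.mem_union.mp hu with h | h
              · exact hXz h
              · have := h2 h; rw [Finset.mem_insert, Finset.mem_singleton] at this
                rcases this with h' | h'
                · exact Finset.mem_singleton.mpr h'
                · exact absurd (h' ▸ h) hwZ
            have := Finset.card_le_card hsub
            simp at this; omega
          by_cases h3 : (Y \ {x, w}).Nonempty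
          · obtain ⟨y'', hy''⟩ := h3
            rw [Finset.mem_sdiff, Finset.mem_insert, Finset.mem_singleton] at hy''
            push_neg at hy''
            exact ⟨x, hxX, y'', hy''.1, w, hwZ, Ne.symm hy''.2.1, Ne.symm hwz, hy''.2.2⟩
          · exfalso
            rw [Finset.not_nonempty_iff_eq_empty, Finset.sdiff_eq_empty_iff_subset] at h3
            have hsub : X ∪ Y ∪ Z ⊆ {x, w} := by
              intro u hu
              rcases Finset.mem_union.mp hu with h | h
              · rcases Finset.mem_union.mp h with h' | h'
                · exact Finset.mem_insert.mpr (Or.inl (Finset.mem_singleton.mp (hXz h')))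
                · exact h3 h'
              · exact h2 h
            have := Finset.card_le_card hsub
            have h4 : ({x, w} : Finset α).card ≤ 2 := Finset.card_insert_le _ _ |>.trans (by simp)
            omega
    · -- w ∈ Z (mirror)
      by_cases hzX : z ∈ X
      · exact ⟨z, hzX, y, hy, w, hwZ, Ne.symm hyz, Ne.symm hwz, Ne.symm hwy⟩
      · have hXy : X ⊆ {y} := by
          intro u hu
          have := h1 hu; rw [Finset.mem_insert, Finset.mem_singleton] at this
          rcases this with h | h
          · exact Finset.mem_singleton.mpr h
          · exact absurd (h ▸ hu) hzX
        obtain ⟨x, hxX⟩ := hX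
        have hxy : x = y := Finset.mem_singleton.mp (hXy hxX)
        subst hxy
        by_cases h2 : (Y \ {x, w}).Nonempty
        · obtain ⟨y', hy'⟩ := h2
          rw [Finset.mem_sdiff, Finset.mem_insert, Finset.mem_singleton] at hy'
          push_neg at hy'
          exact ⟨x, hxX, y', hy'.1, w, hwZ, Ne.symm hy'.2.1, Ne.symm hwy, hy'.2.2⟩
        · rw [Finset.not_nonempty_iff_eq_empty, Finset.sdiff_eq_empty_iff_subset] at h2
          have hwY : w ∈ Y := by
            by_contra hwY
            have hsub : X ∪ Y ⊆ {x} := by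
              intro u hu
              rcases Finset.mem_union.mp hu with h | h
              · exact hXy h
              · have := h2 h; rw [Finset.mem_insert, Finset.mem_singleton] at this
                rcases this with h' | h'
                · exact Finset.mem_singleton.mpr h'
                · exact absurd (h' ▸ h) hwY
            have := Finset.card_le_card hsub
            simp at this; omega
          by_cases h3 : (Z \ {x, w}).Nonempty
          · obtain ⟨z'', hz''⟩ := h3
            rw [Finset.mem_sdiff, Finset.mem_insert, Finset.mem_singleton] at hz''
            push_neg at hz''
            exact ⟨x, hxX, w, hwY, z'', hz''.1, Ne.symm hwy, Ne.symm hz''.2.1, Ne.symm hz''.2.2⟩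
          · exfalso
            rw [Finset.not_nonempty_iff_eq_empty, Finset.sdiff_eq_empty_iff_subset] at h3
            have hsub : X ∪ Y ∪ Z ⊆ {x, w} := by
              intro u hu
              rcases Finset.mem_union.mp hu with h | h
              · rcases Finset.mem_union.mp h with h' | h'
                · exact Finset.mem_insert.mpr (Or.inl (Finset.mem_singleton.mp (hXy h')))
                · exact h2 h'
              · exact h3 h
            have := Finset.card_le_card hsub
            have h4 : ({x, w} : Finset α).card ≤ 2 := Finset.card_insert_le _ _ |>.trans (by simp)
            omega


lemma union_big {n k : ℕ} (hn : n = 2 * k + 1) {S T : Finset (Fin n)} (hST : S ≠ T)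
    (hS : k + 1 ≤ S.card) (hT : k + 1 ≤ T.card) : k + 2 ≤ (S ∪ T).card := by
  by_cases h : S ⊆ T
  · have hss : S ⊂ T := HasSubset.Subset.ssubset_of_ne h hST
    have h1 := Finset.card_lt_card hss
    have h2 : (S ∪ T).card = T.card := by rw [Finset.union_eq_right.mpr h]
    omega
  · obtain ⟨x, hxS, hxT⟩ := Finset.not_subset.mp h
    have hss : T ⊂ S ∪ T :=
      (Finset.ssubset_iff_of_subset Finset.subset_union_right).mpr
        ⟨x, Finset.mem_union_left _ hxS, hxT⟩
    have := Finset.card_lt_card hss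
    omega

set_option synthInstance.maxHeartbeats 400000 in
set_option synthInstance.maxSize 1024 in
lemma core {n k : ℕ} (hn : n = 2 * k + 1) (hk1 : 1 ≤ k) (hk2 : k ≠ 2)
    {A B C : Finset (Fin n)} (hAB : A ≠ B) (hAC : A ≠ C) (hBC : B ≠ C)
    (hA : k + 1 ≤ A.card) (hB : k + 1 ≤ B.card) (hC : k + 1 ≤ C.card) :
    ∃ x ∈ A ∩ B, ∃ y ∈ A ∩ C, ∃ z ∈ B ∩ C, x ≠ y ∧ x ≠ z ∧ y ≠ z := by
  have hcard : ∀ S : Finset (Fin n), S.card ≤ n := fun S => by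
    simpa using Finset.card_le_univ S
  by_cases hk : k = 1
  · subst hk; subst hn
    revert hAB hAC hBC hA hB hC
    revert A B C
    decide
  · have hk3 : 3 ≤ k := by omega
    -- nonempty intersections
    have hne : ∀ S T : Finset (Fin n), k + 1 ≤ S.card → k + 1 ≤ T.card → (S ∩ T).Nonempty := by
      intro S T hS hT
      rw [← Finset.card_pos]
      have h1 := Finset.card_union_add_card_inter S T
      have h2 := hcard (S ∪ T)
      omega
    -- pairwise union cardinality bounds
    have hpair : ∀ S T U : Finset (Fin n), T ≠ U → k + 1 ≤ S.card → k + 1 ≤ T.card →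
        k + 1 ≤ U.card → 2 ≤ (S ∩ (T ∪ U)).card := by
      intro S T U hTU hS hT hU
      have h1 := union_big hn hTU hT hU
      have h2 := Finset.card_union_add_card_inter S (T ∪ U)
      have h3 := hcard (S ∪ (T ∪ U))
      omega
    have hXY : (A ∩ B) ∪ (A ∩ C) = A ∩ (B ∪ C) := (Finset.inter_union_distrib_left A B C).symm
    have hXZ : (A ∩ B) ∪ (B ∩ C) = B ∩ (A ∪ C) := by
      rw [Finset.inter_union_distrib_left, Finset.inter_comm A B]
    have hYZ : (A ∩ C) ∪ (B ∩ C) = (A ∪ B) ∩ C := (Finset.union_inter_distrib_right A B C).symm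
    have hYZ2 : 2 ≤ ((A ∩ C) ∪ (B ∩ C)).card := by
      rw [hYZ, Finset.inter_comm]
      exact hpair C A B hAB hC hA hB
    -- triple union
    have hW3 : 3 ≤ ((A ∩ B) ∪ (A ∩ C) ∪ (B ∩ C)).card := by
      by_contra hlt
      push_neg at hlt
      set W := (A ∩ B) ∪ (A ∩ C) ∪ (B ∩ C) with hWdef
      have hsAB : A ∩ B ⊆ W := fun u hu => Finset.mem_union_left _ (Finset.mem_union_left _ hu)
      have hsAC : A ∩ C ⊆ W := fun u hu => Finset.mem_union_left _ (Finset.mem_union_right _ hu)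
      have hsBC : B ∩ C ⊆ W := Finset.subset_union_right
      have dAB : Disjoint (A \ W) (B \ W) := by
        rw [Finset.disjoint_left]
        intro u h1 h2
        rw [Finset.mem_sdiff] at h1 h2
        exact h1.2 (hsAB (Finset.mem_inter.mpr ⟨h1.1, h2.1⟩))
      have dAC : Disjoint (A \ W) (C \ W) := by
        rw [Finset.disjoint_left]
        intro u h1 h2
        rw [Finset.mem_sdiff] at h1 h2
        exact h1.2 (hsAC (Finset.mem_inter.mpr ⟨h1.1, h2.1⟩))
      have dBC : Disjoint (B \ W) (C \ W) := by
        rw [Finset.disjoint_left]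
        intro u h1 h2
        rw [Finset.mem_sdiff] at h1 h2
        exact h1.2 (hsBC (Finset.mem_inter.mpr ⟨h1.1, h2.1⟩))
      have d1 : Disjoint ((A \ W) ∪ (B \ W)) (C \ W) := Finset.disjoint_union_left.mpr ⟨dAC, dBC⟩
      have d2 : Disjoint ((A \ W) ∪ (B \ W) ∪ (C \ W)) W := by
        rw [Finset.disjoint_union_left, Finset.disjoint_union_left]
        exact ⟨⟨Finset.sdiff_disjoint, Finset.sdiff_disjoint⟩, Finset.sdiff_disjoint⟩
      have hc1 : ((A \ W) ∪ (B \ W)).card = (A \ W).card + (B \ W).card :=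
        Finset.card_union_of_disjoint dAB
      have hc2 : ((A \ W) ∪ (B \ W) ∪ (C \ W)).card = (A \ W).card + (B \ W).card + (C \ W).card := by
        rw [Finset.card_union_of_disjoint d1, hc1]
      have hc3 : ((A \ W) ∪ (B \ W) ∪ (C \ W) ∪ W).card
          = (A \ W).card + (B \ W).card + (C \ W).card + W.card := by
        rw [Finset.card_union_of_disjoint d2, hc2]
      have htot := hcard ((A \ W) ∪ (B \ W) ∪ (C \ W) ∪ W)
      have hA' := Finset.card_le_card_sdiff_add_card (s := A) (t := W)
      have hB' := Finset.card_le_card_sdiff_add_card (s := B) (t := W)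
      have hC' := Finset.card_le_card_sdiff_add_card (s := C) (t := W)
      omega
    exact sdr3 (hne A B hA hB) (hne A C hA hC) (hne B C hB hC)
      (by rw [hXY]; exact hpair A B C hBC hA hB hC)
      (by rw [hXZ]; exact hpair B A C hAC hB hA hC)
      hYZ2 hW3

lemma eqOf {n : ℕ} (a : Fin n) (U V : Finset (Fin n)) (h : U.erase a = V.erase a)
    (ha : a ∈ U ↔ a ∈ V) : U = V := by
  ext u
  by_cases hu : u = a
  · subst hu; exact ha
  · have := Finset.ext_iff.mp h u
    simp only [Finset.mem_erase, hu, ne_eq, not_false_eq_true, true_and] at this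
    exact this

lemma threeSame {n : ℕ} (a : Fin n) (X Y Z : Finset (Fin n))
    (exy : X.erase a = Y.erase a) (exz : X.erase a = Z.erase a)
    (hXY : X ≠ Y) (hXZ : X ≠ Z) (hYZ : Y ≠ Z) : False := by
  have eyz : Y.erase a = Z.erase a := exy.symm.trans exz
  by_cases h1 : a ∈ X <;> by_cases h2 : a ∈ Y <;> by_cases h3 : a ∈ Z
  · exact hXY (eqOf a X Y exy (iff_of_true h1 h2))
  · exact hXY (eqOf a X Y exy (iff_of_true h1 h2))
  · exact hXZ (eqOf a X Z exz (iff_of_true h1 h3))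
  · exact hYZ (eqOf a Y Z eyz (iff_of_false h2 h3))
  · exact hYZ (eqOf a Y Z eyz (iff_of_true h2 h3))
  · exact hXZ (eqOf a X Z exz (iff_of_false h1 h3))
  · exact hXY (eqOf a X Y exy (iff_of_false h1 h2))
  · exact hXY (eqOf a X Y exy (iff_of_false h1 h2))

lemma pairKill {n : ℕ} (a : Fin n) (U V W : Finset (Fin n)) (hUV : U.erase a = V.erase a)
    (hUVne : U ≠ V) (hUW : U.erase a ∩ W.erase a = ∅) : U ∩ W = ∅ ∨ V ∩ W = ∅ := by
  have hiff : ¬ (a ∈ U ↔ a ∈ V) := fun h => hUVne (eqOf a U V hUV h)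
  have key : ∀ T : Finset (Fin n), a ∉ T → T.erase a = U.erase a → T ∩ W = ∅ := by
    intro T haT hT
    rw [Finset.eq_empty_iff_forall_notMem]
    intro u hu
    rw [Finset.mem_inter] at hu
    have hua : u ≠ a := fun h => haT (h ▸ hu.1)
    have h1 : u ∈ U.erase a := hT ▸ Finset.mem_erase.mpr ⟨hua, hu.1⟩
    have h2 : u ∈ W.erase a := Finset.mem_erase.mpr ⟨hua, hu.2⟩
    have : u ∈ U.erase a ∩ W.erase a := Finset.mem_inter.mpr ⟨h1, h2⟩
    rw [hUW] at this
    exact Finset.notMem_empty u this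
  by_cases haU : a ∈ U
  · have haV : a ∉ V := fun h => hiff ⟨fun _ => h, fun _ => haU⟩
    exact Or.inr (key V haV hUV.symm)
  · exact Or.inl (key U haU rfl)

lemma disj_pair {n : ℕ} {a b : Fin n} (hba : b ≠ a) {R X Y Z : Finset (Fin n)}
    (hXY : X ≠ Y) (hXZ : X ≠ Z) (hYZ : Y ≠ Z)
    (hbR : b ∈ R)
    (hX : X.erase a = R ∨ X.erase a = Finset.univ.erase a \ R)
    (hY : Y.erase a = R ∨ Y.erase a = Finset.univ.erase a \ R)
    (hZ : Z.erase a = R ∨ Z.erase a = Finset.univ.erase a \ R) :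
    X ∩ Y = ∅ ∨ X ∩ Z = ∅ ∨ Y ∩ Z = ∅ := by
  set D := Finset.univ.erase a with hD
  have hint : R ∩ (D \ R) = ∅ := Finset.inter_sdiff_self _ _
  have hint' : (D \ R) ∩ R = ∅ := Finset.sdiff_inter_self _ _
  have flip : ∀ P Q : Finset (Fin n), P ∩ Q = ∅ → Q ∩ P = ∅ := by
    intro P Q h; rw [Finset.inter_comm]; exact h
  rcases hX with hx | hx <;> rcases hY with hy | hy <;> rcases hZ with hz | hz
  · -- all R : impossible
    exact absurd (threeSame a X Y Z (hx.trans hy.symm) (hx.trans hz.symm) hXY hXZ hYZ) not_false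
  · -- R R D' : pair (X,Y), other Z
    have := pairKill a X Y Z (hx.trans hy.symm) hXY (by rw [hx, hz]; exact hint)
    tauto
  · -- R D' R : pair (X,Z), other Y
    rcases pairKill a X Z Y (hx.trans hz.symm) hXZ (by rw [hx, hy]; exact hint) with h | h
    · exact Or.inl h
    · exact Or.inr (Or.inr (flip _ _ h))
  · -- R D' D' : pair (Y,Z), other X
    rcases pairKill a Y Z X (hy.trans hz.symm) hYZ (by rw [hy, hx]; exact hint') with h | h
    · exact Or.inl (flip _ _ h)
    · exact Or.inr (Or.inl (flip _ _ h))
  · -- D' R R : pair (Y,Z), other X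
    rcases pairKill a Y Z X (hy.trans hz.symm) hYZ (by rw [hy, hx]; exact hint) with h | h
    · exact Or.inl (flip _ _ h)
    · exact Or.inr (Or.inl (flip _ _ h))
  · -- D' R D' : pair (X,Z), other Y
    rcases pairKill a X Z Y (hx.trans hz.symm) hXZ (by rw [hx, hy]; exact hint') with h | h
    · exact Or.inl h
    · exact Or.inr (Or.inr (flip _ _ h))
  · -- D' D' R : pair (X,Y), other Z
    have := pairKill a X Y Z (hx.trans hy.symm) hXY (by rw [hx, hz]; exact hint')
    tauto
  · -- all D' : impossible
    exact absurd (threeSame a X Y Z (hx.trans hy.symm) (hx.trans hz.symm) hXY hXZ hYZ) not_false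


lemma edges3 (p : Sym2 (Fin 3)) (hp : p ∈ K3.edgeSet) :
    p = s(0,1) ∨ p = s(0,2) ∨ p = s(1,2) := by
  rw [K3, SimpleGraph.edgeSet_top, Set.mem_compl_iff, Sym2.mem_diagSet] at hp
  revert hp; revert p; decide

def Fmap {n : ℕ} (a b : Fin n) (X : Finset (Fin n)) : Finset (Fin n) :=
  if b ∈ X then X.erase a else (Finset.univ.erase a) \ X.erase a

lemma Fmap_mem {n : ℕ} {a b : Fin n} (hba : b ≠ a) (X : Finset (Fin n)) :
    Fmap a b X ∈ Finset.univ.filter (fun T => b ∈ T ∧ a ∉ T) := by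
  rw [Finset.mem_filter]
  refine ⟨Finset.mem_univ _, ?_⟩
  rw [Fmap]
  by_cases hbX : b ∈ X
  · rw [if_pos hbX]
    exact ⟨Finset.mem_erase.mpr ⟨hba, hbX⟩, Finset.notMem_erase a X⟩
  · rw [if_neg hbX]
    constructor
    · rw [Finset.mem_sdiff]
      exact ⟨Finset.mem_erase.mpr ⟨hba, Finset.mem_univ b⟩,
        fun h => hbX (Finset.mem_of_mem_erase h)⟩
    · rw [Finset.mem_sdiff]
      rintro ⟨h1, -⟩
      exact Finset.notMem_erase a _ h1

lemma Fmap_cases {n : ℕ} {a b : Fin n} (U R : Finset (Fin n)) (h : Fmap a b U = R) :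
    U.erase a = R ∨ U.erase a = Finset.univ.erase a \ R := by
  rw [Fmap] at h
  by_cases hbU : b ∈ U
  · rw [if_pos hbU] at h
    exact Or.inl h
  · rw [if_neg hbU] at h
    right
    have hsub : U.erase a ⊆ Finset.univ.erase a :=
      Finset.erase_subset_erase a (Finset.subset_univ U)
    rw [← h, Finset.sdiff_sdiff_self_left]
    exact (Finset.inter_eq_right.mpr hsub).symm

lemma upper (n : ℕ) (hn : 3 ≤ n) :
    ∃ c : Finset (Fin n) → Fin (2 ^ (n - 2)),
      ∀ i, ¬ BergeIn K3 {s : Finset (Fin n) | c s = i} := by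
  classical
  set a : Fin n := ⟨n - 1, by omega⟩ with ha
  set b : Fin n := ⟨0, by omega⟩ with hb
  have hba : b ≠ a := by
    simp only [ha, hb, ne_eq, Fin.mk.injEq]
    omega
  set sf : Finset (Finset (Fin n)) := Finset.univ.filter (fun T => b ∈ T ∧ a ∉ T) with hsf
  have hFmem : ∀ X, Fmap a b X ∈ sf := fun X => Fmap_mem hba X
  have hDcard : ((Finset.univ.erase a).erase b).card = n - 2 := by
    rw [Finset.card_erase_of_mem (Finset.mem_erase.mpr ⟨hba, Finset.mem_univ b⟩),
      Finset.card_erase_of_mem (Finset.mem_univ a), Finset.card_univ, Fintype.card_fin]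
    omega
  have hscard : sf.card = 2 ^ (n - 2) := by
    have hpow : (((Finset.univ.erase a).erase b).powerset).card = 2 ^ (n - 2) := by
      rw [Finset.card_powerset, hDcard]
    rw [← hpow]
    apply Finset.card_bij' (fun T _ => T.erase b) (fun U _ => insert b U)
    case hi =>
      intro T hT
      rw [hsf, Finset.mem_filter] at hT
      rw [Finset.mem_powerset]
      intro u hu
      rw [Finset.mem_erase] at hu
      exact Finset.mem_erase.mpr ⟨hu.1, Finset.mem_erase.mpr
        ⟨fun h => hT.2.2 (h ▸ hu.2), Finset.mem_univ u⟩⟩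
    case hj =>
      intro U hU
      rw [Finset.mem_powerset] at hU
      rw [hsf, Finset.mem_filter]
      refine ⟨Finset.mem_univ _, Finset.mem_insert_self _ _, ?_⟩
      intro h
      rcases Finset.mem_insert.mp h with h | h
      · exact hba h.symm
      · exact Finset.notMem_erase a _ (Finset.mem_of_mem_erase (hU h))
    case left_inv =>
      intro T hT
      rw [hsf, Finset.mem_filter] at hT
      exact Finset.insert_erase hT.2.1
    case right_inv =>
      intro U hU
      rw [Finset.mem_powerset] at hU
      apply Finset.erase_insert
      intro h
      exact (Finset.mem_erase.mp (hU h)).1 rfl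
  refine ⟨fun X => Fin.cast hscard (sf.equivFin ⟨Fmap a b X, hFmem X⟩), ?_⟩
  intro i hB
  obtain ⟨φ, hφ, ψ, hψ, hmemb, hcov⟩ := hB
  have he01 : (s((0:Fin 3),1)) ∈ K3.edgeSet := by
    rw [K3, SimpleGraph.edgeSet_top]; exact (by decide : ¬ (s((0:Fin 3),1)).IsDiag)
  have he02 : (s((0:Fin 3),2)) ∈ K3.edgeSet := by
    rw [K3, SimpleGraph.edgeSet_top]; exact (by decide : ¬ (s((0:Fin 3),2)).IsDiag)
  have he12 : (s((1:Fin 3),2)) ∈ K3.edgeSet := by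
    rw [K3, SimpleGraph.edgeSet_top]; exact (by decide : ¬ (s((1:Fin 3),2)).IsDiag)
  let e01 : K3.edgeSet := ⟨s(0,1), he01⟩
  let e02 : K3.edgeSet := ⟨s(0,2), he02⟩
  let e12 : K3.edgeSet := ⟨s(1,2), he12⟩
  have hne1 : ψ e01 ≠ ψ e02 := fun h => by
    have := congrArg Subtype.val (hψ h)
    exact (by decide : (s((0:Fin 3),1)) ≠ s(0,2)) this
  have hne2 : ψ e01 ≠ ψ e12 := fun h => by
    have := congrArg Subtype.val (hψ h)
    exact (by decide : (s((0:Fin 3),1)) ≠ s(1,2)) this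
  have hne3 : ψ e02 ≠ ψ e12 := fun h => by
    have := congrArg Subtype.val (hψ h)
    exact (by decide : (s((0:Fin 3),2)) ≠ s(1,2)) this
  -- memberships of vertices
  have hm0A : φ 0 ∈ ψ e01 := hcov e01 0 (show (0:Fin 3) ∈ s((0:Fin 3),1) by decide)
  have hm1A : φ 1 ∈ ψ e01 := hcov e01 1 (show (1:Fin 3) ∈ s((0:Fin 3),1) by decide)
  have hm0B : φ 0 ∈ ψ e02 := hcov e02 0 (show (0:Fin 3) ∈ s((0:Fin 3),2) by decide)
  have hm2B : φ 2 ∈ ψ e02 := hcov e02 2 (show (2:Fin 3) ∈ s((0:Fin 3),2) by decide)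
  have hm1C : φ 1 ∈ ψ e12 := hcov e12 1 (show (1:Fin 3) ∈ s((1:Fin 3),2) by decide)
  have hm2C : φ 2 ∈ ψ e12 := hcov e12 2 (show (2:Fin 3) ∈ s((1:Fin 3),2) by decide)
  -- equal colors give equal Fmap values
  have hFeq : ∀ U V : K3.edgeSet, Fmap a b (ψ U) = Fmap a b (ψ V) := by
    intro U V
    have hU : Fin.cast hscard (sf.equivFin ⟨Fmap a b (ψ U), hFmem (ψ U)⟩) = i := hmemb U
    have hV : Fin.cast hscard (sf.equivFin ⟨Fmap a b (ψ V), hFmem (ψ V)⟩) = i := hmemb V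
    have h := hU.trans hV.symm
    have h1 : (sf.equivFin ⟨Fmap a b (ψ U), hFmem (ψ U)⟩ : Fin sf.card)
        = sf.equivFin ⟨Fmap a b (ψ V), hFmem (ψ V)⟩ := by
      apply Fin.ext
      have := congrArg Fin.val h
      simpa [Fin.coe_cast] using this
    have h2 := sf.equivFin.injective h1
    exact congrArg Subtype.val h2
  have hbR : b ∈ Fmap a b (ψ e01) := by
    have := hFmem (ψ e01)
    rw [hsf, Finset.mem_filter] at this
    exact this.2.1
  have hdisj := disj_pair hba hne1 hne2 hne3 hbR
    (Fmap_cases _ _ rfl)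
    (Fmap_cases _ _ (hFeq e02 e01))
    (Fmap_cases _ _ (hFeq e12 e01))
  rcases hdisj with h | h | h
  · have : φ 0 ∈ ψ e01 ∩ ψ e02 := Finset.mem_inter.mpr ⟨hm0A, hm0B⟩
    rw [h] at this
    exact Finset.notMem_empty _ this
  · have : φ 1 ∈ ψ e01 ∩ ψ e12 := Finset.mem_inter.mpr ⟨hm1A, hm1C⟩
    rw [h] at this
    exact Finset.notMem_empty _ this
  · have : φ 2 ∈ ψ e02 ∩ ψ e12 := Finset.mem_inter.mpr ⟨hm2B, hm2C⟩
    rw [h] at this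
    exact Finset.notMem_empty _ this


lemma lower {n k : ℕ} (hn : n = 2 * k + 1) (hk1 : 1 ≤ k) (hk2 : k ≠ 2)
    {m : ℕ} (hm : m < 2 ^ (n - 2)) (c : Finset (Fin n) → Fin m) :
    ∃ i, BergeIn K3 {s : Finset (Fin n) | c s = i} := by
  classical
  set Up := Finset.univ.filter (fun S : Finset (Fin n) => k + 1 ≤ S.card) with hUpdef
  have hUpcard : Up.card = 2 ^ (n - 1) := by
    have h1 := Finset.card_filter_add_card_filter_not
      (s := (Finset.univ : Finset (Finset (Fin n))))
      (fun S : Finset (Fin n) => k + 1 ≤ S.card)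
    rw [← hUpdef] at h1
    have huniv : (Finset.univ : Finset (Finset (Fin n))).card = 2 ^ n := by
      rw [Finset.card_univ, Fintype.card_finset, Fintype.card_fin]
    have h2 : (Finset.univ.filter (fun S : Finset (Fin n) => ¬ (k + 1 ≤ S.card))).card
        = Up.card := by
      apply Finset.card_bij' (fun S _ => Sᶜ) (fun S _ => Sᶜ)
      case hi =>
        intro S hS
        rw [Finset.mem_filter] at hS
        rw [hUpdef, Finset.mem_filter]
        refine ⟨Finset.mem_univ _, ?_⟩
        rw [Finset.card_compl, Fintype.card_fin]
        have hle : S.card ≤ n := by simpa using Finset.card_le_univ S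
        omega
      case hj =>
        intro S hS
        rw [hUpdef, Finset.mem_filter] at hS
        rw [Finset.mem_filter]
        refine ⟨Finset.mem_univ _, ?_⟩
        rw [Finset.card_compl, Fintype.card_fin]
        have hle : S.card ≤ n := by simpa using Finset.card_le_univ S
        omega
      case left_inv => intro S _; exact compl_compl S
      case right_inv => intro S _; exact compl_compl S
    have hpow : (2:ℕ) ^ n = 2 ^ (n - 1) * 2 := by
      rw [← pow_succ]
      congr 1
      omega
    omega
  have hpig : (Finset.univ : Finset (Fin m)).card * 2 < Up.card := by
    rw [Finset.card_univ, Fintype.card_fin, hUpcard]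
    have hpow : (2:ℕ) ^ (n - 1) = 2 ^ (n - 2) * 2 := by
      rw [← pow_succ]
      congr 1
      omega
    omega
  obtain ⟨i, -, hi⟩ := Finset.exists_lt_card_fiber_of_mul_lt_card_of_maps_to
    (fun S _ => Finset.mem_univ (c S)) hpig
  obtain ⟨t, hts, ht3⟩ := Finset.exists_subset_card_eq (s := Up.filter (fun S => c S = i))
    (n := 3) (by omega)
  obtain ⟨A, B, C, hAB, hAC, hBC, rfl⟩ := Finset.card_eq_three.mp ht3
  have hAm := hts (Finset.mem_insert_self A {B, C})
  have hBm := hts (Finset.mem_insert_of_mem (Finset.mem_insert_self B {C}))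
  have hCm := hts (Finset.mem_insert_of_mem (Finset.mem_insert_of_mem (Finset.mem_singleton_self C)))
  rw [Finset.mem_filter, hUpdef, Finset.mem_filter] at hAm hBm hCm
  obtain ⟨x, hx, y, hy, z, hz, hxy, hxz, hyz⟩ :=
    core hn hk1 hk2 hAB hAC hBC hAm.1.2 hBm.1.2 hCm.1.2
  rw [Finset.mem_inter] at hx hy hz
  refine ⟨i, fun v => if v = 0 then x else if v = 1 then y else z, ?_,
    fun e => if (e : Sym2 (Fin 3)) = s(0,1) then A else if (e : Sym2 (Fin 3)) = s(0,2) then B else C,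
    ?_, ?_, ?_⟩
  · -- φ injective
    intro u v huv
    fin_cases u <;> fin_cases v <;> simp_all <;> omega
  · -- ψ injective
    intro e f hef
    rcases edges3 e.1 e.2 with he | he | he <;> rcases edges3 f.1 f.2 with hf | hf | hf <;>
      simp only [he, hf, if_pos rfl] at hef ⊢ <;>
      first
        | exact Subtype.ext (he.trans hf.symm)
        | rw [if_neg (by decide), if_pos rfl] at hef
        | rw [if_neg (by decide), if_neg (by decide)] at hef
        | skip
    all_goals first
      | exact Subtype.ext (he.trans hf.symm)
      | exact absurd hef hAB
      | exact absurd hef.symm hAB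
      | exact absurd hef hAC
      | exact absurd hef.symm hAC
      | exact absurd hef hBC
      | exact absurd hef.symm hBC
  · -- colors
    intro e
    show c (if (e : Sym2 (Fin 3)) = s(0,1) then A
      else if (e : Sym2 (Fin 3)) = s(0,2) then B else C) = i
    rcases edges3 e.1 e.2 with he | he | he
    · rw [he, if_pos rfl]; exact hAm.2
    · rw [he, if_neg (by decide), if_pos rfl]; exact hBm.2
    · rw [he, if_neg (by decide), if_neg (by decide)]; exact hCm.2
  · -- covering
    intro e v hv
    show (if v = 0 then x else if v = 1 then y else z) ∈
      (if (e : Sym2 (Fin 3)) = s(0,1) then A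
        else if (e : Sym2 (Fin 3)) = s(0,2) then B else C)
    rcases edges3 e.1 e.2 with he | he | he
    · rw [he] at hv
      rw [Sym2.mem_iff] at hv
      rw [he, if_pos rfl]
      rcases hv with rfl | rfl
      · rw [if_pos rfl]; exact hx.1
      · rw [if_neg (by decide), if_pos rfl]; exact hy.1
    · rw [he] at hv
      rw [Sym2.mem_iff] at hv
      rw [he, if_neg (by decide), if_pos rfl]
      rcases hv with rfl | rfl
      · rw [if_pos rfl]; exact hx.2
      · rw [if_neg (by decide), if_neg (by decide)]; exact hz.1
    · rw [he] at hv
      rw [Sym2.mem_iff] at hv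
      rw [he, if_neg (by decide), if_neg (by decide)]
      rcases hv with rfl | rfl
      · rw [if_neg (by decide), if_pos rfl]; exact hy.2
      · rw [if_neg (by decide), if_neg (by decide)]; exact hz.2


end BergeAux

/-- For every odd `n ≥ 3` with `n ≠ 5`, `f(n, 𝓑(K₃)) = 2^(n-2)`: the subsets of an `n`-set can
be colored with `2^(n-2)` colors without a monochromatic Berge-`K₃`, but every coloring with
fewer colors has a monochromatic Berge-`K₃`. -/
theorem coloring_number_berge_triangle (n : ℕ) (hn : 3 ≤ n) (hodd : Odd n) (hn5 : n ≠ 5) :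
    (∃ c : Finset (Fin n) → Fin (2 ^ (n - 2)),
      ∀ i, ¬ BergeIn K3 {s : Finset (Fin n) | c s = i}) ∧
    (∀ m : ℕ, m < 2 ^ (n - 2) → ∀ c : Finset (Fin n) → Fin m,
      ∃ i, BergeIn K3 {s : Finset (Fin n) | c s = i}) := by
  obtain ⟨k, hk⟩ := hodd
  have hk' : n = 2 * k + 1 := by omega
  exact ⟨BergeAux.upper n hn,
    fun m hm c => BergeAux.lower hk' (by omega) (by omega) hm c⟩
end

section
/- Let n ≥ 3 be an odd integer with n ≠ 5, and let A_1, A_2, A_3 be three pairwise distinct subsets of {1, …, n}, each of size at least (n+1)/2. Then {A_1, A_2, A_3} forms a Berge-K_3; equivalently, there exist three pairwise distinct elements x_1 ∈ A_1 ∩ A_2, x_2 ∈ A_2 ∩ A_3, and x_3 ∈ A_3 ∩ A_1. -/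
open Finset

/-- Hall-type lemma: three finsets with all Hall conditions satisfied admit a system of
distinct representatives. -/
lemma three_reps {α : Type*} [DecidableEq α] (B₁ B₂ B₃ : Finset α)
    (h1 : 1 ≤ B₁.card) (h2 : 1 ≤ B₂.card) (h3 : 1 ≤ B₃.card)
    (h12 : 2 ≤ (B₁ ∪ B₂).card) (h13 : 2 ≤ (B₁ ∪ B₃).card) (h23 : 2 ≤ (B₂ ∪ B₃).card)
    (h123 : 3 ≤ (B₁ ∪ B₂ ∪ B₃).card) :
    ∃ x₁ x₂ x₃ : α, x₁ ≠ x₂ ∧ x₁ ≠ x₃ ∧ x₂ ≠ x₃ ∧ x₁ ∈ B₁ ∧ x₂ ∈ B₂ ∧ x₃ ∈ B₃ := by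
  have hall : ∀ s : Finset (Fin 3), s.card ≤ (s.biUnion ![B₁, B₂, B₃]).card := by
    intro s
    by_cases m0 : (0 : Fin 3) ∈ s <;> by_cases m1 : (1 : Fin 3) ∈ s <;>
      by_cases m2 : (2 : Fin 3) ∈ s
    · have hs : s = {0, 1, 2} := by ext i; fin_cases i <;> simp [m0, m1, m2]
      subst hs; simpa [Finset.biUnion_insert, Finset.union_assoc] using h123
    · have hs : s = {0, 1} := by ext i; fin_cases i <;> simp [m0, m1, m2]
      subst hs; simpa [Finset.biUnion_insert] using h12
    · have hs : s = {0, 2} := by ext i; fin_cases i <;> simp [m0, m1, m2]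
      subst hs; simpa [Finset.biUnion_insert] using h13
    · have hs : s = {0} := by ext i; fin_cases i <;> simp [m0, m1, m2]
      subst hs; simpa using h1
    · have hs : s = {1, 2} := by ext i; fin_cases i <;> simp [m0, m1, m2]
      subst hs; simpa [Finset.biUnion_insert] using h23
    · have hs : s = {1} := by ext i; fin_cases i <;> simp [m0, m1, m2]
      subst hs; simpa using h2
    · have hs : s = {2} := by ext i; fin_cases i <;> simp [m0, m1, m2]
      subst hs; simpa using h3
    · have hs : s = ∅ := by ext i; fin_cases i <;> simp [m0, m1, m2]
      subst hs; simp
  obtain ⟨f, hinj, hf⟩ := (Finset.all_card_le_biUnion_card_iff_exists_injective _).mp hall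
  have g0 := hf 0; have g1 := hf 1; have g2 := hf 2
  simp [Matrix.cons_val_zero, Matrix.cons_val_one] at g0 g1 g2
  exact ⟨f 0, f 1, f 2, fun h => absurd (hinj h) (by decide),
    fun h => absurd (hinj h) (by decide), fun h => absurd (hinj h) (by decide),
    g0, g1, g2⟩

/-- Two distinct sets of size at least `m+1` in `Fin (2m+1)` have union of size at least
`m+2`. -/
lemma union_lb {m : ℕ} (X Y : Finset (Fin (2 * m + 1))) (hXY : X ≠ Y)
    (hX : m + 1 ≤ X.card) (hY : m + 1 ≤ Y.card) : m + 2 ≤ (X ∪ Y).card := by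
  by_contra h
  push_neg at h
  have h1 : X ∪ Y = X :=
    (Finset.eq_of_subset_of_card_le (Finset.subset_union_left : X ⊆ X ∪ Y) (by omega)).symm
  have h2 : X ∪ Y = Y :=
    (Finset.eq_of_subset_of_card_le (Finset.subset_union_right : Y ⊆ X ∪ Y) (by omega)).symm
  exact hXY (h1 ▸ h2)

/-- The key "middle set" bound: `2 ≤ |M ∩ (X ∪ Y)|`. -/
lemma mid_lb {m : ℕ} (M X Y : Finset (Fin (2 * m + 1))) (hXY : X ≠ Y)
    (hM : m + 1 ≤ M.card) (hX : m + 1 ≤ X.card) (hY : m + 1 ≤ Y.card) :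
    2 ≤ (M ∩ (X ∪ Y)).card := by
  have h1 := Finset.card_inter_add_card_union M (X ∪ Y)
  have h2 : (M ∪ (X ∪ Y)).card ≤ 2 * m + 1 := by
    simpa using Finset.card_le_univ (M ∪ (X ∪ Y))
  have h3 := union_lb X Y hXY hX hY
  omega

/-- For odd `n ≥ 3`, `n ≠ 5`, any three pairwise distinct subsets of an `n`-set, each of size at
least `(n+1)/2`, form a Berge-`K₃`: there are three pairwise distinct elements
`x₁ ∈ A₁ ∩ A₂`, `x₂ ∈ A₂ ∩ A₃` and `x₃ ∈ A₃ ∩ A₁`. -/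
theorem large_sets_form_berge_triangle (n : ℕ) (hn : 3 ≤ n) (hodd : Odd n) (hn5 : n ≠ 5)
    (A₁ A₂ A₃ : Finset (Fin n))
    (h₁₂ : A₁ ≠ A₂) (h₁₃ : A₁ ≠ A₃) (h₂₃ : A₂ ≠ A₃)
    (hc₁ : (n + 1) / 2 ≤ A₁.card) (hc₂ : (n + 1) / 2 ≤ A₂.card)
    (hc₃ : (n + 1) / 2 ≤ A₃.card) :
    ∃ x₁ x₂ x₃ : Fin n, x₁ ≠ x₂ ∧ x₁ ≠ x₃ ∧ x₂ ≠ x₃ ∧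
      x₁ ∈ A₁ ∩ A₂ ∧ x₂ ∈ A₂ ∩ A₃ ∧ x₃ ∈ A₃ ∩ A₁ := by
  obtain ⟨m, hm⟩ := hodd
  subst hm
  have hk : (2 * m + 1 + 1) / 2 = m + 1 := by omega
  rw [hk] at hc₁ hc₂ hc₃
  by_cases hm1 : m = 1
  · subst hm1
    revert h₁₂ h₁₃ h₂₃ hc₁ hc₂ hc₃
    revert A₁ A₂ A₃
    decide
  · have hm3 : 3 ≤ m := by omega
    -- cardinality of the ambient type
    have huniv : ∀ s : Finset (Fin (2 * m + 1)), s.card ≤ 2 * m + 1 := fun s => by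
      simpa using Finset.card_le_univ s
    -- each pairwise intersection is nonempty
    have hne : ∀ X Y : Finset (Fin (2 * m + 1)), m + 1 ≤ X.card → m + 1 ≤ Y.card →
        1 ≤ (X ∩ Y).card := by
      intro X Y hX hY
      have h1 := Finset.card_inter_add_card_union X Y
      have h2 := huniv (X ∪ Y)
      omega
    -- pairwise unions of the B's
    have e12 : (A₁ ∩ A₂) ∪ (A₂ ∩ A₃) = A₂ ∩ (A₁ ∪ A₃) := by
      ext x; simp [Finset.mem_inter, Finset.mem_union]; tauto
    have e13 : (A₁ ∩ A₂) ∪ (A₃ ∩ A₁) = A₁ ∩ (A₂ ∪ A₃) := by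
      ext x; simp [Finset.mem_inter, Finset.mem_union]; tauto
    have e23 : (A₂ ∩ A₃) ∪ (A₃ ∩ A₁) = A₃ ∩ (A₂ ∪ A₁) := by
      ext x; simp [Finset.mem_inter, Finset.mem_union]; tauto
    have h12 : 2 ≤ ((A₁ ∩ A₂) ∪ (A₂ ∩ A₃)).card := by
      rw [e12]; exact mid_lb A₂ A₁ A₃ h₁₃ hc₂ hc₁ hc₃
    have h13 : 2 ≤ ((A₁ ∩ A₂) ∪ (A₃ ∩ A₁)).card := by
      rw [e13]; exact mid_lb A₁ A₂ A₃ h₂₃ hc₁ hc₂ hc₃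
    have h23 : 2 ≤ ((A₂ ∩ A₃) ∪ (A₃ ∩ A₁)).card := by
      rw [e23]; exact mid_lb A₃ A₂ A₁ (Ne.symm h₁₂) hc₃ hc₂ hc₁
    -- the triple union has at least 3 elements (counting argument, uses m ≥ 3)
    have h123 : 3 ≤ ((A₁ ∩ A₂) ∪ (A₂ ∩ A₃) ∪ (A₃ ∩ A₁)).card := by
      by_contra h
      push_neg at h
      set U := (A₁ ∩ A₂) ∪ (A₂ ∩ A₃) ∪ (A₃ ∩ A₁) with hU
      have e1 : (A₁ ∩ A₂).card ≤ 2 := by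
        have : A₁ ∩ A₂ ⊆ U := by
          intro x hx; simp only [hU, Finset.mem_union]; tauto
        have := Finset.card_le_card this; omega
      have e2 : (A₃ ∩ (A₁ ∪ A₂)).card ≤ 2 := by
        have : A₃ ∩ (A₁ ∪ A₂) ⊆ U := by
          intro x hx
          simp only [Finset.mem_inter, Finset.mem_union] at hx
          simp only [hU, Finset.mem_union, Finset.mem_inter]
          tauto
        have := Finset.card_le_card this; omega
      have e3 := Finset.card_inter_add_card_union A₁ A₂
      have e4 := Finset.card_inter_add_card_sdiff A₃ (A₁ ∪ A₂)
      have e5 : (A₃ \ (A₁ ∪ A₂)).card ≤ 2 * m + 1 - (A₁ ∪ A₂).card := by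
        have hsub : A₃ \ (A₁ ∪ A₂) ⊆ Finset.univ \ (A₁ ∪ A₂) :=
          Finset.sdiff_subset_sdiff (Finset.subset_univ _) le_rfl
        have := Finset.card_le_card hsub
        rw [Finset.card_sdiff_of_subset (Finset.subset_univ _)] at this
        simpa using this
      have e6 := huniv (A₁ ∪ A₂)
      omega
    obtain ⟨x₁, x₂, x₃, hx⟩ := three_reps (A₁ ∩ A₂) (A₂ ∩ A₃) (A₃ ∩ A₁)
      (hne A₁ A₂ hc₁ hc₂) (hne A₂ A₃ hc₂ hc₃) (hne A₃ A₁ hc₃ hc₁) h12 h13 h23 h123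
    exact ⟨x₁, x₂, x₃, hx⟩
end

section
/- Let G be a finite simple graph with maximum degree at most 2 and at least one edge, let n ≥ |V(G)|, and let X_1, …, X_m with m = |E(G)| be pairwise distinct subsets of {1, …, n}, each satisfying 2|X_i| ≥ n + |V(G)|. Then the hypergraph with hyperedges X_1, …, X_m contains a Berge-G. -/
open SimpleGraph

/-- If `G` has maximum degree at most `2` and at least one edge, `n ≥ |V(G)|`, and
`X₁, …, X_m` (`m = |E(G)|`) are pairwise distinct subsets of an `n`-set each of size at least
`(n + |V(G)|)/2`, then they form a Berge-`G`. -/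
theorem large_sets_contain_berge {V : Type} [Fintype V] [DecidableEq V]
    (G : SimpleGraph V) [DecidableRel G.Adj]
    (hdeg : ∀ u : V, G.degree u ≤ 2) (hE : G.edgeSet.Nonempty)
    (n : ℕ) (hn : Fintype.card V ≤ n)
    (X : Fin G.edgeFinset.card → Finset (Fin n)) (hX : Function.Injective X)
    (hsize : ∀ i, n + Fintype.card V ≤ 2 * (X i).card) :
    BergeIn G (Set.range X) := by
  classical
  have hcard : Fintype.card G.edgeSet = G.edgeFinset.card := (Set.toFinset_card _).symm
  let eqv : G.edgeSet ≃ Fin G.edgeFinset.card := Fintype.equivFinOfCardEq hcard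
  set ψ : G.edgeSet → Finset (Fin n) := fun e => X (eqv e) with hψ
  have hψinj : Function.Injective ψ := hX.comp eqv.injective
  set ψ' : Sym2 V → Finset (Fin n) :=
    fun e => if h : e ∈ G.edgeSet then ψ ⟨e, h⟩ else Finset.univ with hψ'
  set S : V → Finset (Fin n) :=
    fun x => Finset.univ.filter (fun a => ∀ e ∈ G.incidenceFinset x, a ∈ ψ' e) with hS
  -- each `ψ' e` has small complement
  have hcompl : ∀ x : V, ∀ e ∈ G.incidenceFinset x,
      2 * (Finset.univ \ ψ' e).card ≤ n - Fintype.card V := by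
    intro x e he
    have heE : e ∈ G.edgeSet := ((G.mem_incidenceFinset x e).1 he).1
    have : ψ' e = X (eqv ⟨e, heE⟩) := by simp [hψ', heE, hψ]
    rw [this]
    have h1 := hsize (eqv ⟨e, heE⟩)
    have h2 : (X (eqv ⟨e, heE⟩)).card ≤ n := by
      simpa using Finset.card_le_card (Finset.subset_univ (X (eqv ⟨e, heE⟩)))
    have h3 : (Finset.univ \ X (eqv ⟨e, heE⟩)).card
        = n - (X (eqv ⟨e, heE⟩)).card := by
      rw [Finset.card_sdiff_of_subset (Finset.subset_univ _)]
      simp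
    omega
  -- each `S x` is large
  have hSbig : ∀ x : V, Fintype.card V ≤ (S x).card := by
    intro x
    have hsub : Finset.univ \ S x ⊆
        (G.incidenceFinset x).biUnion (fun e => Finset.univ \ ψ' e) := by
      intro a ha
      rw [Finset.mem_sdiff, hS, Finset.mem_filter] at ha
      have ha2 : ¬ ∀ e ∈ G.incidenceFinset x, a ∈ ψ' e := fun h => ha.2 ⟨Finset.mem_univ a, h⟩
      push_neg at ha2
      obtain ⟨e, he, hae⟩ := ha2
      exact Finset.mem_biUnion.2 ⟨e, he, by simp [hae]⟩
    have hsum : (Finset.univ \ S x).card ≤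
        ∑ e ∈ G.incidenceFinset x, (Finset.univ \ ψ' e).card :=
      le_trans (Finset.card_le_card hsub) (Finset.card_biUnion_le)
    have hdbl : 2 * ∑ e ∈ G.incidenceFinset x, (Finset.univ \ ψ' e).card ≤
        (G.incidenceFinset x).card * (n - Fintype.card V) := by
      rw [Finset.mul_sum]
      exact Finset.sum_le_card_nsmul _ _ _ (fun e he => hcompl x e he)
    have hdeg2 : (G.incidenceFinset x).card ≤ 2 := by
      rw [G.card_incidenceFinset_eq_degree]; exact hdeg x
    have hSn : (S x).card ≤ n := by
      simpa using Finset.card_le_card (Finset.subset_univ (S x))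
    have hSd : (Finset.univ \ S x).card = n - (S x).card := by
      rw [Finset.card_sdiff_of_subset (Finset.subset_univ _)]; simp
    have hmul : (G.incidenceFinset x).card * (n - Fintype.card V) ≤
        2 * (n - Fintype.card V) := Nat.mul_le_mul_right _ hdeg2
    omega
  -- Hall's theorem
  have hall : ∀ s : Finset V, s.card ≤ (s.biUnion S).card := by
    intro s
    rcases Finset.eq_empty_or_nonempty s with rfl | ⟨x, hx⟩
    · simp
    · calc s.card ≤ Fintype.card V := Finset.card_le_univ s
        _ ≤ (S x).card := hSbig x
        _ ≤ (s.biUnion S).card :=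
          Finset.card_le_card (fun a ha => Finset.mem_biUnion.2 ⟨x, hx, ha⟩)
  obtain ⟨φ, hφinj, hφ⟩ := (Finset.all_card_le_biUnion_card_iff_exists_injective S).1 hall
  refine ⟨φ, hφinj, ψ, hψinj, fun e => ⟨eqv e, rfl⟩, ?_⟩
  intro e x hx
  have hinc : (e : Sym2 V) ∈ G.incidenceFinset x :=
    (G.mem_incidenceFinset x _).2 ⟨e.2, hx⟩
  have := hφ x
  simp only [hS, Finset.mem_filter, Finset.mem_univ, true_and] at this
  have hmem := this _ hinc
  have h2 : ψ' (e : Sym2 V) = ψ e := by simp [hψ', e.2]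
  rwa [h2] at hmem
end

section
/- Let G be a finite simple graph with maximum degree at most 2 and at least two edges, and let n ≥ |V(G)|. Then f(n, B(G)) ≥ N/(|E(G)|−1), where N is the number of subsets A of {1, …, n} with 2|A| ≥ n + |V(G)|. -/
open SimpleGraph

/-- `f(n, 𝓑(G))`: the smallest number of colors in a coloring of all subsets of an `n`-element
set with no monochromatic Berge-`G`. -/
noncomputable def bergeColorNumber {V : Type} (G : SimpleGraph V) (n : ℕ) : ℕ :=
  sInf {m | ∃ c : Finset (Fin n) → Fin m,
    ∀ i, ¬ BergeIn G {s : Finset (Fin n) | c s = i}}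

lemma berge_of_large {V : Type} [Fintype V] [DecidableEq V]
    (G : SimpleGraph V) [DecidableRel G.Adj]
    (hdeg : ∀ u : V, G.degree u ≤ 2) (n : ℕ) (hn : Fintype.card V ≤ n)
    (A : Set (Finset (Fin n))) (T : Finset (Finset (Fin n)))
    (hTA : ∀ s ∈ T, s ∈ A)
    (hTbig : ∀ s ∈ T, n + Fintype.card V ≤ 2 * s.card)
    (hcard : G.edgeFinset.card ≤ T.card) : BergeIn G A := by
  classical
  -- get an injection from edges into T
  have hc : Fintype.card G.edgeSet ≤ Fintype.card {x // x ∈ T} := by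
    rwa [Fintype.card_coe, ← Set.toFinset_card]
  obtain ⟨emb⟩ := Function.Embedding.nonempty_of_card_le hc
  set ψ : G.edgeSet → Finset (Fin n) := fun e => (emb e : Finset (Fin n)) with hψ
  have hψinj : Function.Injective ψ := fun a b h => emb.injective (Subtype.ext h)
  have hψT : ∀ e, ψ e ∈ T := fun e => (emb e).2
  have hψbig : ∀ e, n + Fintype.card V ≤ 2 * (ψ e).card := fun e => hTbig _ (hψT e)
  -- candidate sets for each vertex
  set t : V → Finset (Fin n) := fun v =>
    Finset.univ.filter (fun x : Fin n => ∀ e : G.edgeSet, v ∈ (e : Sym2 V) → x ∈ ψ e) with ht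
  have htcard : ∀ v, Fintype.card V ≤ (t v).card := by
    intro v
    -- incident edges
    set I : Finset G.edgeSet := Finset.univ.filter (fun e : G.edgeSet => v ∈ (e : Sym2 V)) with hI
    have hdeg2 : (G.incidenceFinset v).card ≤ 2 := by
      rw [card_incidenceFinset_eq_degree]; exact hdeg v
    have hIcard : I.card ≤ 2 := by
      refine le_trans (Finset.card_le_card_of_injOn (fun e => (e : Sym2 V)) ?_ ?_) hdeg2
      · intro e he
        simp only [Finset.mem_coe] at he ⊢; rw [mem_incidenceFinset]
        exact ⟨e.2, (Finset.mem_filter.mp he).2⟩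
      · intro a _ b _ h
        exact Subtype.ext h
    have hcompl : (t v)ᶜ ⊆ I.biUnion (fun e => (ψ e)ᶜ) := by
      intro x hx
      rw [Finset.mem_compl, ht] at hx
      simp only [Finset.mem_filter, Finset.mem_univ, true_and, not_forall] at hx
      obtain ⟨e, he, hxe⟩ := hx
      refine Finset.mem_biUnion.mpr ⟨e, ?_, Finset.mem_compl.mpr hxe⟩
      simp [hI, he]
    have h1 : ((t v)ᶜ).card ≤ n - Fintype.card V := by
      calc ((t v)ᶜ).card ≤ (I.biUnion (fun e => (ψ e)ᶜ)).card := Finset.card_le_card hcompl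
        _ ≤ ∑ e ∈ I, ((ψ e)ᶜ).card := Finset.card_biUnion_le
        _ ≤ ∑ _e ∈ I, (n - Fintype.card V) / 2 := by
            refine Finset.sum_le_sum ?_
            intro e _
            have := hψbig e
            have hle : (ψ e).card ≤ n := by
              simpa using Finset.card_le_card (Finset.subset_univ (ψ e))
            simp only [Finset.card_compl, Fintype.card_fin]
            omega
        _ = I.card * ((n - Fintype.card V) / 2) := by rw [Finset.sum_const, smul_eq_mul]
        _ ≤ 2 * ((n - Fintype.card V) / 2) := Nat.mul_le_mul_right _ hIcard
        _ ≤ n - Fintype.card V := by omega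
    have h2 := Finset.card_compl (t v)
    simp only [Fintype.card_fin] at h2
    have h3 : (t v).card ≤ n := by
      simpa using Finset.card_le_card (Finset.subset_univ (t v))
    omega
  -- Hall's condition
  have hall : ∀ s : Finset V, s.card ≤ (s.biUnion t).card := by
    intro s
    rcases s.eq_empty_or_nonempty with rfl | ⟨v, hv⟩
    · simp
    · calc s.card ≤ Fintype.card V := Finset.card_le_univ s
        _ ≤ (t v).card := htcard v
        _ ≤ (s.biUnion t).card :=
            Finset.card_le_card (fun x hx => Finset.mem_biUnion.mpr ⟨v, hv, hx⟩)
  obtain ⟨φ, hφinj, hφmem⟩ := (Finset.all_card_le_biUnion_card_iff_exists_injective t).mp hall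
  refine ⟨φ, hφinj, ψ, hψinj, fun e => hTA _ (hψT e), ?_⟩
  intro e x hx
  have h4 := hφmem x
  rw [ht] at h4
  simp only [Finset.mem_filter] at h4
  exact h4.2 e hx

/-- If `G` has maximum degree at most `2` and at least two edges, and `n ≥ |V(G)|`, then
`f(n, 𝓑(G)) ≥ N / (|E(G)| - 1)` where `N` is the number of subsets `A` of an `n`-set with
`2|A| ≥ n + |V(G)|`. -/
theorem bergeColorNumber_lower_bound {V : Type} [Fintype V] [DecidableEq V]
    (G : SimpleGraph V) [DecidableRel G.Adj]
    (hdeg : ∀ u : V, G.degree u ≤ 2) (hE : 2 ≤ G.edgeFinset.card)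
    (n : ℕ) (hn : Fintype.card V ≤ n) :
    ((Finset.univ.filter
        fun A : Finset (Fin n) => n + Fintype.card V ≤ 2 * A.card).card : ℝ)
        / ((G.edgeFinset.card : ℝ) - 1)
      ≤ (bergeColorNumber G n : ℝ) := by
  classical
  set N := (Finset.univ.filter
      fun A : Finset (Fin n) => n + Fintype.card V ≤ 2 * A.card).card with hN
  -- the defining set is nonempty: use an injective coloring
  have hSne : {m | ∃ c : Finset (Fin n) → Fin m,
      ∀ i, ¬ BergeIn G {s : Finset (Fin n) | c s = i}}.Nonempty := by
    have hcard : Fintype.card (Finset (Fin n)) = 2 ^ n := by simp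
    refine ⟨2 ^ n, (Fintype.equivFinOfCardEq hcard : Finset (Fin n) ≃ Fin (2 ^ n)), ?_⟩
    rintro i ⟨φ, -, ψ, hψinj, hψmem, -⟩
    obtain ⟨a, ha, b, hb, hab⟩ := Finset.one_lt_card.mp (by omega : 1 < G.edgeFinset.card)
    rw [mem_edgeFinset] at ha hb
    have h1 : ψ ⟨a, ha⟩ = ψ ⟨b, hb⟩ := by
      have ha' := hψmem ⟨a, ha⟩
      have hb' := hψmem ⟨b, hb⟩
      simp only [Set.mem_setOf_eq] at ha' hb'
      exact (Fintype.equivFinOfCardEq hcard).injective (ha'.trans hb'.symm)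
    exact hab (Subtype.ext_iff.mp (hψinj h1))
  have hmem := Nat.sInf_mem hSne
  set m := bergeColorNumber G n with hm
  obtain ⟨c, hc⟩ : ∃ c : Finset (Fin n) → Fin m,
      ∀ i, ¬ BergeIn G {s : Finset (Fin n) | c s = i} := hmem
  -- counting
  have hcount : N ≤ m * (G.edgeFinset.card - 1) := by
    have hfiber : ∀ i : Fin m,
        ((Finset.univ.filter
          fun A : Finset (Fin n) => n + Fintype.card V ≤ 2 * A.card).filter
            (fun s => c s = i)).card ≤ G.edgeFinset.card - 1 := by
      intro i
      by_contra hlt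
      push_neg at hlt
      apply hc i
      refine berge_of_large G hdeg n hn _ ((Finset.univ.filter
          fun A : Finset (Fin n) => n + Fintype.card V ≤ 2 * A.card).filter
            (fun s => c s = i)) ?_ ?_ ?_
      · intro s hs
        exact (Finset.mem_filter.mp hs).2
      · intro s hs
        exact (Finset.mem_filter.mp (Finset.mem_filter.mp hs).1).2
      · omega
    calc N = ∑ i : Fin m, ((Finset.univ.filter
          fun A : Finset (Fin n) => n + Fintype.card V ≤ 2 * A.card).filter
            (fun s => c s = i)).card := by
          rw [hN]
          exact Finset.card_eq_sum_card_fiberwise (fun x _ => Finset.mem_univ (c x))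
      _ ≤ ∑ _i : Fin m, (G.edgeFinset.card - 1) := Finset.sum_le_sum (fun i _ => hfiber i)
      _ = m * (G.edgeFinset.card - 1) := by simp [mul_comm]
  -- transfer to ℝ
  have hpos : (0 : ℝ) < (G.edgeFinset.card : ℝ) - 1 := by
    have h2 : (2 : ℝ) ≤ (G.edgeFinset.card : ℝ) := by exact_mod_cast hE
    linarith
  rw [div_le_iff₀ hpos]
  calc (N : ℝ) ≤ ((m * (G.edgeFinset.card - 1) : ℕ) : ℝ) := by exact_mod_cast hcount
    _ = (m : ℝ) * ((G.edgeFinset.card : ℝ) - 1) := by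
        push_cast [Nat.cast_sub (by omega : 1 ≤ G.edgeFinset.card)]
        ring
end
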